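/- arXiv:2306.09999 — 8 statements merged into one kernel-verified Lean document; each statement's English description precedes it below -/
import Mathlib

section
/- Let (Z,d,ν) be an Ahlfors D-regular metric measure space with constant c ≥ 1 (Z may be bounded or unbounded), let s ∈ (0,∞) and p ∈ [1,∞) satisfy s·p < D, and set p* = p·D/(D − s·p). Then there is a constant C > 0, depending only on c, D, s and p, such that for every compactly supported measurable function f : Z → ℂ one has p* · ∫₀^∞ t^{p−1} · ν({ξ ∈ Z : |f(ξ)| > t})^{p/p*} dt ≤ C · ( ν(Z)^{−s·p/D} · ∫_Z |f|^p dν + ∬_{Z×Z} |f(ξ)−f(η)|^p / d(ξ,η)^{D+s·p} dν(ξ)dν(η) ), where all quantities are interpreted in the extended nonnegative reals (the left-hand side is the p-th power of the Lorentz L(p*,p)-norm of f, and ν(Z)^{−s·p/D} = 0 when ν(Z) = ∞). -/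
open MeasureTheory Metric Filter
open scoped ENNReal NNReal Topology

private lemma rpow_anti_of_nonpos {x y : ℝ≥0∞} {z : ℝ} (hz : z ≤ 0) (h : x ≤ y) :
    y ^ z ≤ x ^ z := by
  rw [← neg_neg z, ENNReal.rpow_neg y, ENNReal.rpow_neg x]
  exact ENNReal.inv_le_inv.2 (ENNReal.rpow_le_rpow h (by linarith))

private lemma holder_ident {θ : ℝ} (h0 : 0 < θ) (h1 : θ < 1) {w x y : ℝ≥0∞}
    (hw0 : w ≠ 0) (hwt : w ≠ ∞) (hxt : x ≠ ∞) (hyx : y ≤ x) :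
    w * y ^ θ = (w * (y * x ^ (θ - 1))) ^ θ * (w * x ^ θ) ^ (1 - θ) := by
  rcases eq_or_ne y 0 with hy | hy
  · simp [hy, ENNReal.zero_rpow_of_pos h0]
  have hx0 : x ≠ 0 := fun h => hy (le_antisymm (h ▸ hyx) (zero_le))
  rw [ENNReal.mul_rpow_of_nonneg _ _ h0.le, ENNReal.mul_rpow_of_nonneg _ _ h0.le,
    ENNReal.mul_rpow_of_nonneg _ _ (by linarith : (0:ℝ) ≤ 1 - θ),
    ← ENNReal.rpow_mul x, ← ENNReal.rpow_mul x]
  calc w * y ^ θ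
      = (w ^ (θ + (1-θ))) * (y ^ θ * x ^ ((θ-1)*θ + θ*(1-θ))) := by
        rw [show θ + (1-θ) = 1 by ring, show (θ-1)*θ + θ*(1-θ) = 0 by ring,
          ENNReal.rpow_one, ENNReal.rpow_zero, mul_one]
    _ = (w ^ θ * w ^ (1-θ)) * (y ^ θ * (x ^ ((θ-1)*θ) * x ^ (θ*(1-θ)))) := by
        rw [ENNReal.rpow_add _ _ hw0 hwt, ENNReal.rpow_add _ _ hx0 hxt]
    _ = w ^ θ * (y ^ θ * x ^ ((θ-1)*θ)) * (w ^ (1-θ) * x ^ (θ*(1-θ))) := by ring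

private lemma compact_meas_lt_top {Z : Type*} [MetricSpace Z] [MeasurableSpace Z]
    (hperf : ∀ z : Z, (nhdsWithin z {z}ᶜ).NeBot)
    (ν : Measure Z) (D c : ℝ)
    (hA : ∀ (z : Z) (r : ℝ), 0 < r → ENNReal.ofReal r < EMetric.diam (Set.univ : Set Z) →
        ν (Metric.ball z r) ≤ ENNReal.ofReal (c * r ^ D))
    {K : Set Z} (hK : IsCompact K) : ν K < ∞ := by
  rcases K.eq_empty_or_nonempty with rfl | ⟨z0, _⟩
  · simp
  have hdiam : 0 < EMetric.diam (Set.univ : Set Z) := by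
    haveI := hperf z0
    obtain ⟨y, hy⟩ : Set.Nonempty {z0}ᶜ :=
      Filter.nonempty_of_mem (f := nhdsWithin z0 {z0}ᶜ) self_mem_nhdsWithin
    calc (0:ℝ≥0∞) < edist y z0 := by simpa [edist_pos] using hy
      _ ≤ EMetric.diam (Set.univ : Set Z) :=
          EMetric.edist_le_diam_of_mem (Set.mem_univ _) (Set.mem_univ _)
  obtain ⟨ε, hε, hεd⟩ : ∃ ε : ℝ, 0 < ε ∧ ENNReal.ofReal ε < EMetric.diam (Set.univ : Set Z) := by
    rcases eq_or_ne (EMetric.diam (Set.univ : Set Z)) ⊤ with h | h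
    · exact ⟨1, one_pos, by simp [h]⟩
    · have h2 : 0 < (EMetric.diam (Set.univ : Set Z)).toReal :=
        ENNReal.toReal_pos hdiam.ne' h
      refine ⟨_, half_pos h2, ?_⟩
      calc ENNReal.ofReal ((EMetric.diam (Set.univ : Set Z)).toReal / 2)
          < ENNReal.ofReal ((EMetric.diam (Set.univ : Set Z)).toReal) :=
            (ENNReal.ofReal_lt_ofReal_iff h2).2 (half_lt_self h2)
        _ = EMetric.diam (Set.univ : Set Z) := ENNReal.ofReal_toReal h
  obtain ⟨t, -, ht⟩ := hK.elim_nhds_subcover (fun x => Metric.ball x ε)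
    (fun x _ => Metric.ball_mem_nhds x hε)
  calc ν K ≤ ν (⋃ x ∈ t, Metric.ball x ε) := measure_mono ht
    _ ≤ ∑ x ∈ t, ν (Metric.ball x ε) := measure_biUnion_finset_le t _
    _ ≤ ∑ _x ∈ t, ENNReal.ofReal (c * ε ^ D) :=
        Finset.sum_le_sum fun x _ => hA x ε hε hεd
    _ < ∞ := ENNReal.sum_lt_top.2 fun x _ => ENNReal.ofReal_lt_top

/-- **Fractional Sobolev inequality (Lorentz form).**
Let `(Z,d,ν)` be an Ahlfors `D`-regular metric measure space with constant `c ≥ 1`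
(`Z` bounded or unbounded), let `s ∈ (0,∞)` and `p ∈ [1,∞)` with `s·p < D`, and set
`p* = p·D/(D − s·p)`. Then there is `C > 0`, depending only on `c, D, s, p`, such that
for every compactly supported measurable `f : Z → ℂ`,
`p* · ∫₀^∞ t^{p−1} ν({|f| > t})^{p/p*} dt ≤ C·(ν(Z)^{−sp/D}·∫|f|^p + ∬ |f(ξ)−f(η)|^p/d(ξ,η)^{D+sp})`,
all in `ℝ≥0∞` (note `∞ ^ (negative) = 0` in `ℝ≥0∞`, so `ν(Z)^{−sp/D} = 0` when `ν Z = ∞`). -/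
theorem fractional_sobolev_inequality_lorentz
    {Z : Type*} [MetricSpace Z] [CompleteSpace Z] [MeasurableSpace Z] [BorelSpace Z]
    (hperf : ∀ z : Z, (nhdsWithin z {z}ᶜ).NeBot)
    (ν : Measure Z) (D c : ℝ) (hD : 0 < D) (hc : 1 ≤ c)
    (hA : ∀ (z : Z) (r : ℝ), 0 < r → ENNReal.ofReal r < EMetric.diam (Set.univ : Set Z) →
      ENNReal.ofReal (c⁻¹ * r ^ D) ≤ ν (Metric.ball z r) ∧
        ν (Metric.ball z r) ≤ ENNReal.ofReal (c * r ^ D))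
    (s p : ℝ) (hs : 0 < s) (hp : 1 ≤ p) (hsp : s * p < D) :
    ∃ C : ℝ, 0 < C ∧
      ∀ f : Z → ℂ, Measurable f → HasCompactSupport f →
        ENNReal.ofReal (p * D / (D - s * p)) *
            ∫⁻ t in Set.Ioi (0 : ℝ),
              ENNReal.ofReal (t ^ (p - 1)) *
                (ν {ξ | t < ‖f ξ‖}) ^ (p / (p * D / (D - s * p))) ≤
          ENNReal.ofReal C *
            ((ν Set.univ) ^ (-(s * p) / D) * (∫⁻ ξ, (‖f ξ‖₊ : ℝ≥0∞) ^ p ∂ν) +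
              ∫⁻ ξ, ∫⁻ η, (‖f ξ - f η‖₊ : ℝ≥0∞) ^ p / (edist ξ η) ^ (D + s * p) ∂ν ∂ν) := by
  have hp0 : 0 < p := lt_of_lt_of_le one_pos hp
  have hc0 : 0 < c := lt_of_lt_of_le one_pos hc
  have hsp0 : 0 < s * p := mul_pos hs hp0
  have hDsp : 0 < D - s * p := by linarith
  set θ : ℝ := (D - s * p) / D with hθdef
  have hθ0 : 0 < θ := div_pos hDsp hD
  have hθ1 : θ < 1 := by rw [hθdef, div_lt_one hD]; linarith
  have hθ1' : (0:ℝ) < 1 - θ := by linarith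
  -- the exponent identities
  have hexp : p / (p * D / (D - s * p)) = θ := by
    rw [hθdef]; field_simp; try ring
  have hexp2 : -(s * p) / D = θ - 1 := by
    rw [hθdef]; field_simp; try ring
  -- constants
  set q : ℝ≥0∞ := ENNReal.ofReal ((2:ℝ) ^ (-p)) with hqdef
  have hq1 : q < 1 := ENNReal.ofReal_lt_one.2
    (Real.rpow_lt_one_of_one_lt_of_neg one_lt_two (by linarith))
  set E₁ : ℝ≥0∞ := (1 - q)⁻¹ with hE₁def
  have hE₁ : E₁ ≠ ∞ := ENNReal.inv_ne_top.2 (tsub_pos_iff_lt.2 hq1).ne'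
  set κ : ℝ := (((2:ℝ) * c) ^ (2 - θ))⁻¹ with hκdef
  have hκ0 : 0 < κ := by
    rw [hκdef]
    exact inv_pos.2 (Real.rpow_pos_of_pos (by linarith) _)
  set C₁ : ℝ≥0∞ := (ENNReal.ofReal ((2:ℝ) ^ (p+1))) ^ (1/θ) with hC₁def
  have hC₁ : C₁ ≠ ∞ := ENNReal.rpow_ne_top_of_nonneg (by positivity) ENNReal.ofReal_ne_top
  set Ktot : ℝ≥0∞ := ENNReal.ofReal (p * D / (D - s * p)) * ENNReal.ofReal ((2:ℝ) ^ (p-1)) *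
      C₁ * (4 * E₁ + E₁ * ENNReal.ofReal κ⁻¹) with hKtotdef
  have hKtot : Ktot ≠ ∞ := by
    rw [hKtotdef]
    refine ENNReal.mul_ne_top (ENNReal.mul_ne_top (ENNReal.mul_ne_top ?_ ?_) hC₁) ?_
    · exact ENNReal.ofReal_ne_top
    · exact ENNReal.ofReal_ne_top
    · exact ENNReal.add_ne_top.2 ⟨ENNReal.mul_ne_top (by simp) hE₁,
        ENNReal.mul_ne_top hE₁ ENNReal.ofReal_ne_top⟩
  refine ⟨Ktot.toReal + 1, by positivity, ?_⟩
  intro f hf hfc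
  rw [hexp, hexp2]
  set β : ℝ := D + s * p with hβdef
  have hβ0 : 0 < β := by rw [hβdef]; linarith
  -- dyadic weights
  set P : ℤ → ℝ := fun k => (2:ℝ) ^ ((k:ℝ) * p) with hPdef
  have hP0 : ∀ k, 0 < P k := fun k => Real.rpow_pos_of_pos two_pos _
  have hPz : ∀ k : ℤ, P k = ((2:ℝ) ^ k) ^ p := by
    intro k
    simp only [hPdef]
    rw [Real.rpow_mul (by norm_num : (0:ℝ) ≤ 2), Real.rpow_intCast]
  have hP1 : ∀ k : ℤ, P (k + 1) = (2:ℝ) ^ p * P k := by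
    intro k
    simp only [hPdef]
    rw [show (((k+1:ℤ)):ℝ) * p = p + (k:ℝ) * p by push_cast; ring, Real.rpow_add two_pos]
  have hPshift : ∀ (k : ℤ) (n : ℕ), P k = ((2:ℝ) ^ (-p)) ^ n * P (k + n) := by
    intro k n
    simp only [hPdef]
    rw [← Real.rpow_natCast ((2:ℝ) ^ (-p)) n, ← Real.rpow_mul (by norm_num : (0:ℝ) ≤ 2),
      ← Real.rpow_add two_pos]
    push_cast
    ring_nf
  have hPneg : ∀ (k₁ : ℤ) (n : ℕ), P (k₁ - n) = P k₁ * ((2:ℝ) ^ (-p)) ^ n := by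
    intro k₁ n
    simp only [hPdef]
    rw [← Real.rpow_natCast ((2:ℝ) ^ (-p)) n, ← Real.rpow_mul (by norm_num : (0:ℝ) ≤ 2),
      ← Real.rpow_add two_pos]
    push_cast
    ring_nf
  have hPmono : ∀ {j k : ℤ}, j ≤ k → P j ≤ P k := by
    intro j k hjk
    simp only [hPdef]
    exact Real.rpow_le_rpow_of_exponent_le one_le_two
      (mul_le_mul_of_nonneg_right (by exact_mod_cast hjk) hp0.le)
  have hPQ : ∀ n : ℕ, ENNReal.ofReal (((2:ℝ) ^ (-p)) ^ n) = q ^ n := fun n =>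
    ENNReal.ofReal_pow (Real.rpow_nonneg (by norm_num) _) n
  have hPne : ∀ k, ENNReal.ofReal (P k) ≠ 0 := fun k => (ENNReal.ofReal_pos.2 (hP0 k)).ne'
  -- distribution function at dyadic levels
  set a : ℤ → ℝ≥0∞ := fun k => ν {ξ | (2:ℝ) ^ k < ‖f ξ‖} with hadef
  have hSmeas : ∀ t : ℝ, MeasurableSet {ξ | t < ‖f ξ‖} := fun t =>
    measurableSet_lt measurable_const hf.norm
  have ha_anti : ∀ {j k : ℤ}, j ≤ k → a k ≤ a j := by
    intro j k hjk
    refine measure_mono fun ξ hx => ?_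
    simp only [Set.mem_setOf_eq] at hx ⊢
    exact lt_of_le_of_lt (zpow_le_zpow_right₀ one_le_two hjk) hx
  have hM : ν (tsupport f) < ∞ :=
    compact_meas_lt_top hperf ν D c (fun z r hr hrd => (hA z r hr hrd).2) hfc
  have haM : ∀ k, a k ≤ ν (tsupport f) := by
    intro k
    refine measure_mono fun ξ hx => subset_tsupport f ?_
    intro h0
    rw [Set.mem_setOf_eq, h0] at hx
    simp only [norm_zero] at hx
    exact absurd hx (not_lt.2 (zpow_pos two_pos k).le)
  have haT : ∀ k, a k ≠ ∞ := fun k => ((haM k).trans_lt hM).ne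
  have haU : ∀ k, a k ≤ ν Set.univ := fun k => measure_mono (Set.subset_univ _)
  -- annuli
  set Aset : ℤ → Set Z :=
    fun j => {ξ | (2:ℝ) ^ (j+1) < ‖f ξ‖ ∧ ‖f ξ‖ ≤ (2:ℝ) ^ (j+2)} with hAsetdef
  have hAmeas : ∀ j, MeasurableSet (Aset j) := fun j =>
    (hSmeas _).inter (measurableSet_le hf.norm measurable_const)
  have hAdisj : Pairwise (Function.onFun Disjoint Aset) := by
    have key : ∀ i j : ℤ, i < j → Disjoint (Aset i) (Aset j) := by
      intro i j hij
      refine Set.disjoint_left.2 fun ξ hxi hxj => ?_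
      have h1 : (2:ℝ) ^ (i+2) ≤ 2 ^ (j+1) := zpow_le_zpow_right₀ one_le_two (by omega)
      have := hxi.2
      have := hxj.1
      linarith
    intro i j hij
    rcases hij.lt_or_gt with h | h
    · exact key _ _ h
    · exact (key _ _ h).symm
  have hνA : ∀ j, ν (Aset j) ≤ a (j+1) := fun j => measure_mono fun ξ hx => hx.1
  have ha_dec : ∀ k : ℤ, a (k+1) = ∑' n : ℕ, ν (Aset (k + n)) := by
    intro k
    have hUnion : (⋃ n : ℕ, Aset (k + n)) = {ξ | (2:ℝ) ^ (k+1) < ‖f ξ‖} := by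
      ext ξ
      simp only [Set.mem_iUnion, Set.mem_setOf_eq]
      constructor
      · rintro ⟨n, hn1, -⟩
        exact lt_of_le_of_lt (zpow_le_zpow_right₀ one_le_two (by omega)) hn1
      · intro hξ
        have hpos : (0:ℝ) < ‖f ξ‖ := lt_trans (zpow_pos two_pos _) hξ
        obtain ⟨m, hm1, hm2⟩ := exists_mem_Ioc_zpow hpos one_lt_two
        have hkm : k + 1 ≤ m := by
          by_contra hcon
          push_neg at hcon
          have : (2:ℝ) ^ (m+1) ≤ 2 ^ (k+1) := zpow_le_zpow_right₀ one_le_two (by omega)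
          linarith
        refine ⟨(m - (k+1)).toNat, ?_, ?_⟩
        · rw [show k + ((m - (k+1)).toNat : ℤ) + 1 = m by omega]
          exact hm1
        · rw [show k + ((m - (k+1)).toNat : ℤ) + 2 = m + 1 by omega]
          exact hm2
    have hd : Pairwise (Function.onFun Disjoint fun n : ℕ => Aset (k + n)) := by
      intro m n hmn
      exact hAdisj (show k + (m:ℤ) ≠ k + (n:ℤ) by omega)
    calc a (k+1) = ν (⋃ n : ℕ, Aset (k + n)) := by rw [hUnion]
      _ = ∑' n : ℕ, ν (Aset (k + n)) := measure_iUnion hd fun n => hAmeas _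
  -- smallness of a at +∞
  have htend : Tendsto (fun n : ℕ => a n) atTop (𝓝 0) := by
    have hIcap : (⋂ n : ℕ, {ξ | (2:ℝ) ^ (n:ℤ) < ‖f ξ‖}) = ∅ := by
      ext ξ
      simp only [Set.mem_iInter, Set.mem_setOf_eq, Set.mem_empty_iff_false, iff_false, not_forall,
        not_lt]
      obtain ⟨n, hn⟩ := exists_nat_gt ‖f ξ‖
      refine ⟨n, le_trans hn.le ?_⟩
      have h1 : (n:ℝ) ≤ (2:ℝ) ^ n := by
        exact_mod_cast (Nat.lt_two_pow_self (n := n)).le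
      calc (n:ℝ) ≤ (2:ℝ) ^ n := h1
        _ = (2:ℝ) ^ (n:ℤ) := by rw [zpow_natCast]
    have hanti : Antitone fun n : ℕ => {ξ | (2:ℝ) ^ (n:ℤ) < ‖f ξ‖} := by
      intro m n hmn ξ hx
      simp only [Set.mem_setOf_eq] at hx ⊢
      exact lt_of_le_of_lt (zpow_le_zpow_right₀ one_le_two (by exact_mod_cast hmn)) hx
    have := tendsto_measure_iInter_atTop (μ := ν)
      (s := fun n : ℕ => {ξ | (2:ℝ) ^ (n:ℤ) < ‖f ξ‖})
      (fun n => (hSmeas _).nullMeasurableSet) hanti ⟨0, haT 0⟩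
    rw [hIcap, measure_empty] at this
    exact this
  -- Chebyshev
  have cheb : ∀ k : ℤ, ENNReal.ofReal (P k) * a k ≤ ∫⁻ ξ, (‖f ξ‖₊ : ℝ≥0∞) ^ p ∂ν := by
    intro k
    calc ENNReal.ofReal (P k) * a k
        = ∫⁻ _ in {ξ | (2:ℝ) ^ k < ‖f ξ‖}, ENNReal.ofReal (P k) ∂ν := (setLIntegral_const _ _).symm
      _ ≤ ∫⁻ ξ in {ξ | (2:ℝ) ^ k < ‖f ξ‖}, (‖f ξ‖₊ : ℝ≥0∞) ^ p ∂ν := by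
          refine lintegral_mono_ae ?_
          filter_upwards [ae_restrict_mem (hSmeas _)] with ξ hξ
          rw [hPz k, ← ENNReal.ofReal_rpow_of_pos (zpow_pos two_pos k),
            ← ENNReal.ofReal_coe_nnreal, coe_nnnorm]
          exact ENNReal.rpow_le_rpow (ENNReal.ofReal_le_ofReal (le_of_lt hξ)) hp0.le
      _ ≤ ∫⁻ ξ, (‖f ξ‖₊ : ℝ≥0∞) ^ p ∂ν := setLIntegral_le_lintegral _ _
  -- the key geometric estimate
  have key : ∀ j : ℤ, 2 * a j ≤ ν Set.univ → a j ≠ 0 → ∀ ξ ∈ Aset j,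
      ENNReal.ofReal κ * (ENNReal.ofReal (P j) * a j ^ (θ - 1)) ≤
        ∫⁻ η, (‖f ξ - f η‖₊ : ℝ≥0∞) ^ p / (edist ξ η) ^ β ∂ν := by
    intro j hj2 hj0 ξ hξ
    set A : ℝ := (a j).toReal with hAdef
    have hA0 : 0 < A := ENNReal.toReal_pos hj0 (haT j)
    have haA : a j = ENNReal.ofReal A := (ENNReal.ofReal_toReal (haT j)).symm
    set r : ℝ := (2 * c * A) ^ (1/D) with hrdef
    have h2cA : (0:ℝ) < 2 * c * A := by positivity
    have hr0 : 0 < r := Real.rpow_pos_of_pos h2cA _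
    have hrD : r ^ D = 2 * c * A := by
      rw [hrdef, ← Real.rpow_mul h2cA.le, one_div, inv_mul_cancel₀ hD.ne', Real.rpow_one]
    -- a good set W of η's
    obtain ⟨W, hWmeas, hWa, hWprop⟩ : ∃ W : Set Z, MeasurableSet W ∧ a j ≤ ν W ∧
        ∀ η ∈ W, ‖f η‖ ≤ (2:ℝ) ^ j ∧ edist ξ η ≤ ENNReal.ofReal r := by
      by_cases hcase : ENNReal.ofReal r < EMetric.diam (Set.univ : Set Z)
      · refine ⟨Metric.ball ξ r ∩ {η | ‖f η‖ ≤ (2:ℝ) ^ j},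
          measurableSet_ball.inter (measurableSet_le hf.norm measurable_const), ?_, ?_⟩
        · have hball : 2 * a j ≤ ν (Metric.ball ξ r) := by
            calc 2 * a j = ENNReal.ofReal (c⁻¹ * r ^ D) := by
                  rw [hrD, show c⁻¹ * (2 * c * A) = 2 * A by field_simp,
                    ENNReal.ofReal_mul (by norm_num : (0:ℝ) ≤ 2), haA]
                  norm_num
              _ ≤ ν (Metric.ball ξ r) := (hA ξ r hr0 hcase).1
          have hsplit : ν (Metric.ball ξ r) ≤
              ν (Metric.ball ξ r ∩ {η | ‖f η‖ ≤ (2:ℝ) ^ j}) + a j := by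
            calc ν (Metric.ball ξ r)
                ≤ ν ((Metric.ball ξ r ∩ {η | ‖f η‖ ≤ (2:ℝ) ^ j}) ∪ {η | (2:ℝ) ^ j < ‖f η‖}) := by
                  refine measure_mono fun η hη => ?_
                  rcases le_or_gt ‖f η‖ ((2:ℝ) ^ j) with h | h
                  · exact Or.inl ⟨hη, h⟩
                  · exact Or.inr h
              _ ≤ ν (Metric.ball ξ r ∩ {η | ‖f η‖ ≤ (2:ℝ) ^ j}) + a j := measure_union_le _ _
          have := hball.trans hsplit
          rw [two_mul] at this
          exact (ENNReal.add_le_add_iff_right (haT j)).1 this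
        · intro η hη
          refine ⟨hη.2, ?_⟩
          rw [edist_dist, dist_comm]
          exact ENNReal.ofReal_le_ofReal (le_of_lt hη.1)
      · push_neg at hcase
        refine ⟨{η | ‖f η‖ ≤ (2:ℝ) ^ j}, measurableSet_le hf.norm measurable_const, ?_, ?_⟩
        · have hsplit : ν Set.univ ≤ ν {η | ‖f η‖ ≤ (2:ℝ) ^ j} + a j := by
            calc ν Set.univ ≤ ν ({η | ‖f η‖ ≤ (2:ℝ) ^ j} ∪ {η | (2:ℝ) ^ j < ‖f η‖}) := by
                  refine measure_mono fun η _ => ?_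
                  rcases le_or_gt ‖f η‖ ((2:ℝ) ^ j) with h | h
                  · exact Or.inl h
                  · exact Or.inr h
              _ ≤ ν {η | ‖f η‖ ≤ (2:ℝ) ^ j} + a j := measure_union_le _ _
          have := hj2.trans hsplit
          rw [two_mul] at this
          exact (ENNReal.add_le_add_iff_right (haT j)).1 this
        · intro η hη
          refine ⟨hη, le_trans ?_ hcase⟩
          exact EMetric.edist_le_diam_of_mem (Set.mem_univ _) (Set.mem_univ _)
    -- pointwise lower bound on W
    have hpoint : ∀ η ∈ W, ENNReal.ofReal (P j) / ENNReal.ofReal (r ^ β) ≤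
        (‖f ξ - f η‖₊ : ℝ≥0∞) ^ p / (edist ξ η) ^ β := by
      intro η hη
      have hnum : ENNReal.ofReal (P j) ≤ (‖f ξ - f η‖₊ : ℝ≥0∞) ^ p := by
        have hgap : (2:ℝ) ^ j ≤ ‖f ξ - f η‖ := by
          have h1 : (2:ℝ) ^ (j+1) < ‖f ξ‖ := hξ.1
          have h2 : ‖f η‖ ≤ (2:ℝ) ^ j := (hWprop η hη).1
          have h3 : ‖f ξ‖ - ‖f η‖ ≤ ‖f ξ - f η‖ := norm_sub_norm_le _ _
          have h4 : (2:ℝ) ^ (j+1) = 2 * 2 ^ j := by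
            rw [zpow_add_one₀ (two_ne_zero), mul_comm]
          linarith
        rw [hPz j, ← ENNReal.ofReal_rpow_of_pos (zpow_pos two_pos j), ← ENNReal.ofReal_coe_nnreal, coe_nnnorm]
        exact ENNReal.rpow_le_rpow (ENNReal.ofReal_le_ofReal hgap) hp0.le
      have hden : (edist ξ η) ^ β ≤ ENNReal.ofReal (r ^ β) := by
        rw [← ENNReal.ofReal_rpow_of_pos hr0]
        exact ENNReal.rpow_le_rpow (hWprop η hη).2 hβ0.le
      exact ENNReal.div_le_div hnum hden
    -- the constant
    have hconst : ENNReal.ofReal (P j) / ENNReal.ofReal (r ^ β) * a j =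
        ENNReal.ofReal κ * (ENNReal.ofReal (P j) * a j ^ (θ - 1)) := by
      have hrβ : r ^ β = ((2:ℝ) * c) ^ (2 - θ) * A ^ (2 - θ) := by
        rw [hrdef, ← Real.rpow_mul h2cA.le, one_div,
          show D⁻¹ * β = 2 - θ by rw [hβdef, hθdef]; field_simp; ring,
          Real.mul_rpow (by linarith) hA0.le]
      have hreal : P j / r ^ β * A = κ * (P j * A ^ (θ - 1)) := by
        rw [hrβ, hκdef]
        rw [show P j / (((2:ℝ)*c)^(2-θ) * A^(2-θ)) * A
            = (((2:ℝ)*c)^(2-θ))⁻¹ * (P j * (A * (A^(2-θ))⁻¹)) by ring]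
        congr 2
        have e1 : A * (A ^ (2-θ))⁻¹ = A ^ (1:ℝ) * A ^ (-(2-θ)) := by
          rw [Real.rpow_one, Real.rpow_neg hA0.le]
        rw [e1, ← Real.rpow_add hA0]
        congr 1
        ring
      rw [haA, ENNReal.ofReal_rpow_of_pos hA0,
        ← ENNReal.ofReal_div_of_pos (Real.rpow_pos_of_pos hr0 β),
        ← ENNReal.ofReal_mul (by positivity : (0:ℝ) ≤ P j / r ^ β),
        ← ENNReal.ofReal_mul (hP0 j).le,
        ← ENNReal.ofReal_mul hκ0.le]
      exact congrArg ENNReal.ofReal hreal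
    calc ENNReal.ofReal κ * (ENNReal.ofReal (P j) * a j ^ (θ - 1))
        = ENNReal.ofReal (P j) / ENNReal.ofReal (r ^ β) * a j := hconst.symm
      _ ≤ ENNReal.ofReal (P j) / ENNReal.ofReal (r ^ β) * ν W := mul_le_mul_right hWa _
      _ = ∫⁻ _ in W, ENNReal.ofReal (P j) / ENNReal.ofReal (r ^ β) ∂ν :=
          (setLIntegral_const _ _).symm
      _ ≤ ∫⁻ η in W, (‖f ξ - f η‖₊ : ℝ≥0∞) ^ p / (edist ξ η) ^ β ∂ν := by
          refine lintegral_mono_ae ?_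
          filter_upwards [ae_restrict_mem hWmeas] with η hη
          exact hpoint η hη
      _ ≤ ∫⁻ η, (‖f ξ - f η‖₊ : ℝ≥0∞) ^ p / (edist ξ η) ^ β ∂ν :=
          setLIntegral_le_lintegral _ _
  -- the series
  set S : ℝ≥0∞ := ∑' k : ℤ, ENNReal.ofReal (P k) * a k ^ θ with hSdef
  set T : ℝ≥0∞ := ∑' k : ℤ, ENNReal.ofReal (P k) * (a (k+1) * a k ^ (θ-1)) with hTdef
  -- Step A : the Lorentz integral is controlled by S
  have stepA : (∫⁻ t in Set.Ioi (0:ℝ), ENNReal.ofReal (t ^ (p - 1)) * (ν {ξ | t < ‖f ξ‖}) ^ θ) ≤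
      ENNReal.ofReal ((2:ℝ) ^ (p-1)) * S := by
    have hcover : Set.Ioi (0:ℝ) = ⋃ k : ℤ, Set.Ico ((2:ℝ) ^ k) ((2:ℝ) ^ (k+1)) := by
      ext t
      simp only [Set.mem_Ioi, Set.mem_iUnion, Set.mem_Ico]
      constructor
      · intro ht
        obtain ⟨n, hn1, hn2⟩ := exists_mem_Ico_zpow ht one_lt_two
        exact ⟨n, hn1, hn2⟩
      · rintro ⟨k, h1, -⟩
        exact lt_of_lt_of_le (zpow_pos two_pos k) h1
    have hdisj : Pairwise (Function.onFun Disjoint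
        fun k : ℤ => Set.Ico ((2:ℝ) ^ k) ((2:ℝ) ^ (k+1))) := by
      have key2 : ∀ i j : ℤ, i < j →
          Disjoint (Set.Ico ((2:ℝ) ^ i) ((2:ℝ) ^ (i+1))) (Set.Ico ((2:ℝ) ^ j) ((2:ℝ) ^ (j+1))) := by
        intro i j hij
        refine Set.disjoint_left.2 fun t hti htj => ?_
        have h1 : (2:ℝ) ^ (i+1) ≤ 2 ^ j := zpow_le_zpow_right₀ one_le_two (by omega)
        have := hti.2
        have := htj.1
        linarith
      intro i j hij
      rcases hij.lt_or_gt with h | h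
      · exact key2 _ _ h
      · exact (key2 _ _ h).symm
    rw [hcover, lintegral_iUnion (fun k => measurableSet_Ico) hdisj]
    have hperk : ∀ k : ℤ,
        (∫⁻ t in Set.Ico ((2:ℝ) ^ k) ((2:ℝ) ^ (k+1)),
          ENNReal.ofReal (t ^ (p - 1)) * (ν {ξ | t < ‖f ξ‖}) ^ θ) ≤
        ENNReal.ofReal ((2:ℝ) ^ (p-1)) * (ENNReal.ofReal (P k) * a k ^ θ) := by
      intro k
      have hbound : (∫⁻ t in Set.Ico ((2:ℝ) ^ k) ((2:ℝ) ^ (k+1)),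
          ENNReal.ofReal (t ^ (p - 1)) * (ν {ξ | t < ‖f ξ‖}) ^ θ) ≤
          ∫⁻ _ in Set.Ico ((2:ℝ) ^ k) ((2:ℝ) ^ (k+1)),
            ENNReal.ofReal (((2:ℝ) ^ (k+1)) ^ (p-1)) * a k ^ θ ∂volume := by
        refine lintegral_mono_ae ?_
        filter_upwards [ae_restrict_mem measurableSet_Ico] with t ht
        refine mul_le_mul' (ENNReal.ofReal_le_ofReal ?_) (ENNReal.rpow_le_rpow ?_ hθ0.le)
        · have ht0 : (0:ℝ) ≤ t := le_trans (zpow_pos two_pos k).le ht.1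
          exact Real.rpow_le_rpow ht0 ht.2.le (by linarith)
        · refine measure_mono fun ξ hx => ?_
          simp only [Set.mem_setOf_eq] at hx ⊢
          exact lt_of_le_of_lt ht.1 hx
      rw [setLIntegral_const, Real.volume_Ico] at hbound
      refine hbound.trans (le_of_eq ?_)
      have harea : (2:ℝ) ^ (k+1) - 2 ^ k = 2 ^ k := by
        rw [zpow_add_one₀ (two_ne_zero)]
        ring
      rw [harea]
      rw [mul_assoc, mul_comm (a k ^ θ) (ENNReal.ofReal ((2:ℝ) ^ k)), ← mul_assoc,
        ← ENNReal.ofReal_mul (by positivity : (0:ℝ) ≤ ((2:ℝ) ^ (k+1)) ^ (p-1))]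
      rw [show ((2:ℝ) ^ (k+1)) ^ (p-1) * (2:ℝ) ^ k = (2:ℝ) ^ (p-1) * P k from ?_,
        ENNReal.ofReal_mul (by positivity : (0:ℝ) ≤ (2:ℝ) ^ (p-1)), mul_assoc]
      · rw [hPz k]
        have e1 : ((2:ℝ) ^ (k+1)) = (2:ℝ) ^ (((k+1:ℤ)):ℝ) := by rw [Real.rpow_intCast]
        have e2 : ((2:ℝ) ^ k) = (2:ℝ) ^ ((k:ℤ):ℝ) := by rw [Real.rpow_intCast]
        rw [e1, e2, ← Real.rpow_mul (by norm_num : (0:ℝ) ≤ 2),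
          ← Real.rpow_mul (by norm_num : (0:ℝ) ≤ 2), ← Real.rpow_add two_pos,
          ← Real.rpow_add two_pos]
        congr 1
        push_cast
        ring
    calc (∑' k : ℤ, ∫⁻ t in Set.Ico ((2:ℝ) ^ k) ((2:ℝ) ^ (k+1)),
          ENNReal.ofReal (t ^ (p - 1)) * (ν {ξ | t < ‖f ξ‖}) ^ θ)
        ≤ ∑' k : ℤ, ENNReal.ofReal ((2:ℝ) ^ (p-1)) * (ENNReal.ofReal (P k) * a k ^ θ) :=
          ENNReal.tsum_le_tsum hperk
      _ = ENNReal.ofReal ((2:ℝ) ^ (p-1)) * S := ENNReal.tsum_mul_left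
  -- Step B : S ≤ C₁ * T  (Hölder + truncation)
  have hHold : ∀ F G : ℤ → ℝ≥0∞,
      (∑' k, F k ^ θ * G k ^ (1-θ)) ≤ (∑' k, F k) ^ θ * (∑' k, G k) ^ (1-θ) := by
    intro F G
    rw [← MeasureTheory.lintegral_count, ← MeasureTheory.lintegral_count,
      ← MeasureTheory.lintegral_count]
    exact ENNReal.lintegral_mul_norm_pow_le measurable_from_top.aemeasurable
      measurable_from_top.aemeasurable hθ0.le (by linarith) (by ring)
  set SN : ℕ → ℝ≥0∞ :=
    fun N => ∑ k ∈ Finset.Icc (-(N:ℤ)) (N:ℤ), ENNReal.ofReal (P k) * a k ^ θ with hSNdef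
  have hterm_fin : ∀ k : ℤ, ENNReal.ofReal (P k) * a k ^ θ ≠ ∞ := fun k =>
    ENNReal.mul_ne_top ENNReal.ofReal_ne_top (ENNReal.rpow_ne_top_of_nonneg hθ0.le (haT k))
  have hSNfin : ∀ N, SN N ≠ ∞ := by
    intro N
    simp only [hSNdef]
    exact (ENNReal.sum_lt_top.2 fun k _ => (hterm_fin k).lt_top).ne
  have hSNmono : Monotone SN := by
    intro N N' hNN'
    simp only [hSNdef]
    refine Finset.sum_le_sum_of_subset (Finset.Icc_subset_Icc ?_ ?_) <;> omega
  set Mθ : ℝ≥0∞ := (ν (tsupport f)) ^ θ with hMθdef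
  have hMθ : Mθ ≠ ∞ := ENNReal.rpow_ne_top_of_nonneg hθ0.le hM.ne
  have hkey2 : ∀ N : ℕ, SN N ≤ C₁ * T + 2 * (ENNReal.ofReal (P (-(N:ℤ))) * Mθ) := by
    intro N
    set χ : ℤ → ℝ≥0∞ := fun k => if k ∈ Finset.Icc (-(N:ℤ)) (N:ℤ) then 1 else 0 with hχdef
    have hχ01 : ∀ k, χ k ≤ 1 := by
      intro k
      simp only [hχdef]
      split <;> simp
    have hFG : ∀ k, (ENNReal.ofReal (P k) * (a (k+1) * a k ^ (θ-1)) * χ k) ^ θ *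
        (ENNReal.ofReal (P k) * a k ^ θ * χ k) ^ (1-θ) =
        ENNReal.ofReal (P k) * a (k+1) ^ θ * χ k := by
      intro k
      by_cases hk : k ∈ Finset.Icc (-(N:ℤ)) (N:ℤ)
      · simp only [hχdef, if_pos hk, mul_one]
        exact (holder_ident hθ0 hθ1 (hPne k) ENNReal.ofReal_ne_top (haT k)
          (ha_anti (by omega))).symm
      · simp only [hχdef, if_neg hk, mul_zero]
        rw [ENNReal.zero_rpow_of_pos hθ0, ENNReal.zero_rpow_of_pos (by linarith : (0:ℝ) < 1-θ),
          mul_zero]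
    have hH := hHold (fun k => ENNReal.ofReal (P k) * (a (k+1) * a k ^ (θ-1)) * χ k)
      (fun k => ENNReal.ofReal (P k) * a k ^ θ * χ k)
    rw [tsum_congr hFG] at hH
    have hF_le : (∑' k, ENNReal.ofReal (P k) * (a (k+1) * a k ^ (θ-1)) * χ k) ≤ T := by
      refine ENNReal.tsum_le_tsum fun k => ?_
      exact (mul_le_mul_right (hχ01 k) _).trans_eq (mul_one _)
    have hG_eq : (∑' k, ENNReal.ofReal (P k) * a k ^ θ * χ k) = SN N := by
      rw [tsum_eq_sum (s := Finset.Icc (-(N:ℤ)) (N:ℤ))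
        (fun k hk => by simp only [hχdef, if_neg hk, mul_zero])]
      simp only [hSNdef]
      exact Finset.sum_congr rfl fun k hk => by simp only [hχdef, if_pos hk, mul_one]
    replace hH := hH.trans (mul_le_mul' (ENNReal.rpow_le_rpow hF_le hθ0.le)
      (le_of_eq (by rw [hG_eq])))
    -- reindexing of the partial sums
    have hreindex : SN N ≤ ENNReal.ofReal (P (-(N:ℤ))) * a (-(N:ℤ)) ^ θ +
        ENNReal.ofReal ((2:ℝ) ^ p) * ∑' k, ENNReal.ofReal (P k) * a (k+1) ^ θ * χ k := by
      have hsubset : Finset.Icc (-(N:ℤ)) (N:ℤ) ⊆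
          insert (-(N:ℤ)) (Finset.Icc (-(N:ℤ)+1) ((N:ℤ)+1)) := by
        intro k hk
        simp only [Finset.mem_Icc, Finset.mem_insert] at *
        omega
      have h1 : SN N ≤ ENNReal.ofReal (P (-(N:ℤ))) * a (-(N:ℤ)) ^ θ +
          ∑ k ∈ Finset.Icc (-(N:ℤ)+1) ((N:ℤ)+1), ENNReal.ofReal (P k) * a k ^ θ := by
        simp only [hSNdef]
        refine (Finset.sum_le_sum_of_subset hsubset).trans (le_of_eq ?_)
        rw [Finset.sum_insert (by simp only [Finset.mem_Icc]; omega)]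
      have h2 : ∑ k ∈ Finset.Icc (-(N:ℤ)+1) ((N:ℤ)+1), ENNReal.ofReal (P k) * a k ^ θ
          = ∑ k ∈ Finset.Icc (-(N:ℤ)) (N:ℤ), ENNReal.ofReal (P (k+1)) * a (k+1) ^ θ := by
        rw [show (-(N:ℤ)+1) = -(N:ℤ)+1 from rfl, ← Finset.map_add_right_Icc (-(N:ℤ)) (N:ℤ) 1,
          Finset.sum_map]
        rfl
      have h3 : ∑ k ∈ Finset.Icc (-(N:ℤ)) (N:ℤ), ENNReal.ofReal (P (k+1)) * a (k+1) ^ θ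
          = ENNReal.ofReal ((2:ℝ) ^ p) *
            ∑' k, ENNReal.ofReal (P k) * a (k+1) ^ θ * χ k := by
        rw [tsum_eq_sum (s := Finset.Icc (-(N:ℤ)) (N:ℤ))
          (fun k hk => by simp only [hχdef, if_neg hk, mul_zero]), Finset.mul_sum]
        refine Finset.sum_congr rfl fun k hk => ?_
        simp only [hχdef, if_pos hk, mul_one]
        rw [hP1 k, ENNReal.ofReal_mul (by positivity : (0:ℝ) ≤ (2:ℝ) ^ p), mul_assoc]
      rw [h2, h3] at h1
      exact h1
    refine le_trans ?_ (le_refl (C₁ * T + 2 * (ENNReal.ofReal (P (-(N:ℤ))) * Mθ)))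
    have hup : SN N ≤ ENNReal.ofReal (P (-(N:ℤ))) * Mθ +
        ENNReal.ofReal ((2:ℝ) ^ p) * (T ^ θ * SN N ^ (1-θ)) := by
      refine hreindex.trans (add_le_add ?_ (mul_le_mul_right hH _))
      exact mul_le_mul_right (ENNReal.rpow_le_rpow (haM _) hθ0.le) _
    -- extract the bound
    set e : ℝ≥0∞ := ENNReal.ofReal (P (-(N:ℤ))) * Mθ with hedef
    have he_fin : e ≠ ∞ := ENNReal.mul_ne_top ENNReal.ofReal_ne_top hMθ
    by_cases hcase : SN N ≤ 2 * e
    · exact hcase.trans le_add_self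
    push_neg at hcase
    have he2 : e ≤ SN N / 2 := by
      rw [ENNReal.le_div_iff_mul_le (Or.inl two_ne_zero) (Or.inl ENNReal.ofNat_ne_top)]
      rw [mul_comm]
      exact hcase.le
    have hhalf : SN N / 2 ≤ ENNReal.ofReal ((2:ℝ) ^ p) * (T ^ θ * SN N ^ (1-θ)) := by
      have h5 : SN N / 2 + SN N / 2 ≤ SN N / 2 +
          ENNReal.ofReal ((2:ℝ) ^ p) * (T ^ θ * SN N ^ (1-θ)) := by
        rw [ENNReal.add_halves]
        exact hup.trans (add_le_add_left he2 _)
      exact (ENNReal.add_le_add_iff_left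
        (ne_top_of_le_ne_top (hSNfin N) ENNReal.half_le_self)).1 h5
    have hSN2 : SN N ≤ ENNReal.ofReal ((2:ℝ) ^ (p+1)) * T ^ θ * SN N ^ (1-θ) := by
      have h6 : SN N = 2 * (SN N / 2) := (ENNReal.mul_div_cancel two_ne_zero ENNReal.ofNat_ne_top).symm
      calc SN N = 2 * (SN N / 2) := h6
        _ ≤ 2 * (ENNReal.ofReal ((2:ℝ) ^ p) * (T ^ θ * SN N ^ (1-θ))) := mul_le_mul_right hhalf 2
        _ = ENNReal.ofReal ((2:ℝ) ^ (p+1)) * T ^ θ * SN N ^ (1-θ) := by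
            rw [show (2:ℝ≥0∞) = ENNReal.ofReal 2 by simp, ← mul_assoc,
              ← ENNReal.ofReal_mul (by norm_num : (0:ℝ) ≤ 2),
              show (2:ℝ) * 2 ^ p = 2 ^ (p+1) by rw [Real.rpow_add_one two_ne_zero]; ring,
              mul_assoc]
    rcases eq_or_ne (SN N) 0 with h0 | h0
    · rw [h0]; exact zero_le
    have hstep : SN N ^ θ ≤ ENNReal.ofReal ((2:ℝ) ^ (p+1)) * T ^ θ := by
      calc SN N ^ θ = SN N * SN N ^ (θ-1) := by
            have e : SN N ^ θ = SN N ^ (1 + (θ-1)) := by norm_num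
            rw [e, ENNReal.rpow_add _ _ h0 (hSNfin N), ENNReal.rpow_one]
        _ ≤ (ENNReal.ofReal ((2:ℝ) ^ (p+1)) * T ^ θ * SN N ^ (1-θ)) * SN N ^ (θ-1) :=
            mul_le_mul_left hSN2 _
        _ = ENNReal.ofReal ((2:ℝ) ^ (p+1)) * T ^ θ * SN N ^ ((1-θ)+(θ-1)) := by
            rw [mul_assoc, ← ENNReal.rpow_add _ _ h0 (hSNfin N)]
        _ = ENNReal.ofReal ((2:ℝ) ^ (p+1)) * T ^ θ := by
            rw [show (1-θ)+(θ-1) = 0 by ring, ENNReal.rpow_zero, mul_one]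
    have hfinal : SN N ≤ C₁ * T := by
      calc SN N = (SN N ^ θ) ^ (1/θ) := by
            rw [← ENNReal.rpow_mul, mul_one_div, div_self hθ0.ne', ENNReal.rpow_one]
        _ ≤ (ENNReal.ofReal ((2:ℝ) ^ (p+1)) * T ^ θ) ^ (1/θ) :=
            ENNReal.rpow_le_rpow hstep (by positivity)
        _ = C₁ * T := by
            rw [ENNReal.mul_rpow_of_nonneg _ _ (by positivity : (0:ℝ) ≤ 1/θ),
              ← ENNReal.rpow_mul T, mul_one_div, div_self hθ0.ne', ENNReal.rpow_one, hC₁def]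
    exact hfinal.trans le_self_add
  have stepB : S ≤ C₁ * T := by
    have hS_le : ∀ N : ℕ, S ≤ C₁ * T + 2 * (ENNReal.ofReal (P (-(N:ℤ))) * Mθ) := by
      intro N
      rw [hSdef, ENNReal.tsum_eq_iSup_sum]
      refine iSup_le fun u => ?_
      set N' : ℕ := max N (u.sup fun x => x.natAbs) with hN'def
      have hsub : u ⊆ Finset.Icc (-(N':ℤ)) (N':ℤ) := by
        intro x hx
        have h1 : x.natAbs ≤ N' := le_trans (Finset.le_sup (f := fun x : ℤ => x.natAbs) hx)
          (le_max_right _ _)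
        simp only [Finset.mem_Icc]
        omega
      calc ∑ k ∈ u, ENNReal.ofReal (P k) * a k ^ θ ≤ SN N' :=
            Finset.sum_le_sum_of_subset hsub
        _ ≤ C₁ * T + 2 * (ENNReal.ofReal (P (-(N':ℤ))) * Mθ) := hkey2 N'
        _ ≤ C₁ * T + 2 * (ENNReal.ofReal (P (-(N:ℤ))) * Mθ) := by
            refine add_le_add_right (mul_le_mul_right (mul_le_mul_left
              (ENNReal.ofReal_le_ofReal (hPmono ?_)) _) _) _
            omega
    have hlim : Tendsto (fun N : ℕ => C₁ * T + 2 * (ENNReal.ofReal (P (-(N:ℤ))) * Mθ)) atTop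
        (𝓝 (C₁ * T + 0)) := by
      refine Tendsto.const_add _ ?_
      have h1 : (fun N : ℕ => 2 * (ENNReal.ofReal (P (-(N:ℤ))) * Mθ))
          = fun N : ℕ => q ^ N * (2 * Mθ) := by
        funext N
        rw [show -(N:ℤ) = 0 - (N:ℤ) by ring, hPneg 0 N,
          show P 0 = 1 by simp [hPdef], one_mul, hPQ N]
        ring
      rw [h1]
      simpa using ENNReal.Tendsto.mul_const
        (ENNReal.tendsto_pow_atTop_nhds_zero_of_lt_one hq1)
        (Or.inr (ENNReal.mul_ne_top ENNReal.ofNat_ne_top hMθ))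
    have := ge_of_tendsto' hlim hS_le
    rwa [add_zero] at this
  -- abbreviations for the right-hand side
  set IntF : ℝ≥0∞ := ∫⁻ ξ, (‖f ξ‖₊ : ℝ≥0∞) ^ p ∂ν with hIntFdef
  set Y : ℝ≥0∞ := ∫⁻ ξ, ∫⁻ η, (‖f ξ - f η‖₊ : ℝ≥0∞) ^ p / (edist ξ η) ^ β ∂ν ∂ν with hYdef
  -- splitting of T
  set TH : ℝ≥0∞ := ∑' k : ℤ, if ν Set.univ < 2 * a k then
      ENNReal.ofReal (P k) * (a (k+1) * a k ^ (θ-1)) else 0 with hTHdef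
  set TG : ℝ≥0∞ := ∑' k : ℤ, if 2 * a k ≤ ν Set.univ then
      ENNReal.ofReal (P k) * (a (k+1) * a k ^ (θ-1)) else 0 with hTGdef
  have hTsplit : T ≤ TH + TG := by
    rw [hTdef, hTHdef, hTGdef, ← ENNReal.tsum_add]
    refine ENNReal.tsum_le_tsum fun k => ?_
    rcases lt_or_ge (ν Set.univ) (2 * a k) with h | h
    · rw [if_pos h, if_neg (not_le.2 h), add_zero]
    · rw [if_neg (not_lt.2 h), if_pos h, zero_add]
  -- Step H : the sum over "huge" levels
  have stepH : TH ≤ 4 * E₁ * ((ν Set.univ) ^ (θ-1) * IntF) := by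
    by_cases hH : ∀ k : ℤ, ¬ (ν Set.univ < 2 * a k)
    · have hz : TH = 0 := by
        rw [hTHdef]
        convert tsum_zero with k
        rw [if_neg (hH k)]
      rw [hz]
      exact zero_le
    push_neg at hH
    obtain ⟨k₀, hk₀⟩ := hH
    have hνfin : ν Set.univ < ∞ := by
      refine lt_of_lt_of_le hk₀ ((mul_le_mul_right (haM k₀) 2).trans ?_)
      exact le_of_lt (ENNReal.mul_lt_top ENNReal.ofNat_lt_top hM)
    have hν0 : ν Set.univ ≠ 0 := by
      intro h0
      have h1 : a k₀ = 0 := le_antisymm (h0 ▸ haU k₀) (zero_le)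
      rw [h0, h1, mul_zero] at hk₀
      exact lt_irrefl _ hk₀
    have hbdd : ∃ b : ℤ, ∀ z : ℤ, ν Set.univ < 2 * a z → z ≤ b := by
      have hhalf : (0:ℝ≥0∞) < ν Set.univ / 2 := ENNReal.div_pos hν0 ENNReal.ofNat_ne_top
      obtain ⟨N, hN⟩ := eventually_atTop.1 (htend.eventually_lt_const hhalf)
      refine ⟨N, fun z hz => ?_⟩
      by_contra hcon
      push_neg at hcon
      have h1 : a z ≤ a (N:ℤ) := ha_anti (by omega)
      have h2 : a z * 2 ≤ ν Set.univ :=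
        (ENNReal.le_div_iff_mul_le (Or.inl two_ne_zero) (Or.inl ENNReal.ofNat_ne_top)).1
          ((h1.trans_lt (hN N le_rfl)).le)
      rw [mul_comm] at h2
      exact absurd hz (not_lt.2 h2)
    obtain ⟨k₁, hk₁P, hk₁max⟩ := Int.exists_greatest_of_bdd hbdd ⟨k₀, hk₀⟩
    have hV2 : ν Set.univ / 2 < a k₁ := by
      rw [ENNReal.div_lt_iff (Or.inl two_ne_zero) (Or.inl ENNReal.ofNat_ne_top), mul_comm]
      exact hk₁P
    have hTH1 : TH ≤ (∑' k : ℤ, if k ≤ k₁ then ENNReal.ofReal (P k) else 0) *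
        (ν Set.univ * (ν Set.univ / 2) ^ (θ-1)) := by
      rw [hTHdef, ← ENNReal.tsum_mul_right]
      refine ENNReal.tsum_le_tsum fun k => ?_
      by_cases hk : ν Set.univ < 2 * a k
      · rw [if_pos hk, if_pos (hk₁max k hk)]
        have hVak : ν Set.univ / 2 ≤ a k := by
          rw [ENNReal.div_le_iff_le_mul (Or.inl two_ne_zero) (Or.inl ENNReal.ofNat_ne_top)]
          rw [mul_comm]
          exact hk.le
        exact mul_le_mul_right (mul_le_mul' (haU _) (rpow_anti_of_nonpos (by linarith) hVak)) _
      · rw [if_neg hk]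
        exact zero_le
    have hgeo : (∑' k : ℤ, if k ≤ k₁ then ENNReal.ofReal (P k) else 0)
        = ENNReal.ofReal (P k₁) * E₁ := by
      have hinj : Function.Injective (fun n : ℕ => k₁ - (n:ℤ)) := by
        intro m n h
        simp only [] at h
        omega
      have hsupp : Function.support (fun k : ℤ => if k ≤ k₁ then ENNReal.ofReal (P k) else 0)
          ⊆ Set.range (fun n : ℕ => k₁ - (n:ℤ)) := by
        intro k hk
        have hkle : k ≤ k₁ := by
          by_contra hcon
          rw [Function.mem_support, if_neg hcon] at hk
          exact hk rfl
        exact ⟨(k₁ - k).toNat, by show k₁ - ((k₁ - k).toNat : ℤ) = k; omega⟩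
      rw [← hinj.tsum_eq hsupp]
      have hre : ∀ n : ℕ, (if k₁ - (n:ℤ) ≤ k₁ then ENNReal.ofReal (P (k₁ - n)) else 0)
          = ENNReal.ofReal (P k₁) * q ^ n := by
        intro n
        rw [if_pos (by omega), hPneg k₁ n, ENNReal.ofReal_mul (hP0 k₁).le, hPQ n]
      rw [tsum_congr hre, ENNReal.tsum_mul_left, ENNReal.tsum_geometric]
    have hVt : ν Set.univ ≠ ∞ := hνfin.ne
    have halg : ν Set.univ * (ν Set.univ / 2) ^ (θ-1) ≤
        4 * ((ν Set.univ) ^ (θ-1) * (ν Set.univ / 2)) := by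
      have h1 : (ν Set.univ / 2) ^ (θ-1) = (ν Set.univ) ^ (θ-1) * (2⁻¹ : ℝ≥0∞) ^ (θ-1) := by
        rw [div_eq_mul_inv, ENNReal.mul_rpow_of_ne_top hVt (by simp)]
      have h2 : ((2:ℝ≥0∞)⁻¹) ^ (θ-1) ≤ 2 := by
        rw [ENNReal.inv_rpow, ← ENNReal.rpow_neg, show -(θ-1) = 1-θ by ring]
        calc (2:ℝ≥0∞) ^ (1-θ) ≤ 2 ^ (1:ℝ) :=
              ENNReal.rpow_le_rpow_of_exponent_le (by norm_num) (by linarith)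
          _ = 2 := ENNReal.rpow_one 2
      have h3 : (2:ℝ≥0∞) * 2⁻¹ = 1 := ENNReal.mul_inv_cancel two_ne_zero ENNReal.ofNat_ne_top
      have h4 : ν Set.univ * ((ν Set.univ) ^ (θ-1) * 2) =
          4 * ((ν Set.univ) ^ (θ-1) * (ν Set.univ / 2)) := by
        rw [div_eq_mul_inv, show (4:ℝ≥0∞) = 2*2 by norm_num]
        calc ν Set.univ * ((ν Set.univ) ^ (θ-1) * 2)
            = (2*2⁻¹) * (ν Set.univ * ((ν Set.univ) ^ (θ-1) * 2)) := by rw [h3, one_mul]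
          _ = 2*2 * ((ν Set.univ) ^ (θ-1) * (ν Set.univ * 2⁻¹)) := by ring
      calc ν Set.univ * (ν Set.univ / 2) ^ (θ-1)
          = ν Set.univ * ((ν Set.univ) ^ (θ-1) * (2⁻¹:ℝ≥0∞) ^ (θ-1)) := by rw [h1]
        _ ≤ ν Set.univ * ((ν Set.univ) ^ (θ-1) * 2) :=
            mul_le_mul_right (mul_le_mul_right h2 _) _
        _ = 4 * ((ν Set.univ) ^ (θ-1) * (ν Set.univ / 2)) := h4
    calc TH ≤ (ENNReal.ofReal (P k₁) * E₁) * (ν Set.univ * (ν Set.univ / 2) ^ (θ-1)) := by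
          rw [← hgeo]
          exact hTH1
      _ ≤ (ENNReal.ofReal (P k₁) * E₁) * (4 * ((ν Set.univ) ^ (θ-1) * (ν Set.univ / 2))) :=
          mul_le_mul_right halg _
      _ = 4 * E₁ * ((ν Set.univ) ^ (θ-1) * (ENNReal.ofReal (P k₁) * (ν Set.univ / 2))) := by
          ring
      _ ≤ 4 * E₁ * ((ν Set.univ) ^ (θ-1) * (ENNReal.ofReal (P k₁) * a k₁)) :=
          mul_le_mul_right (mul_le_mul_right (mul_le_mul_right hV2.le _) _) _
      _ ≤ 4 * E₁ * ((ν Set.univ) ^ (θ-1) * IntF) :=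
          mul_le_mul_right (mul_le_mul_right (cheb k₁) _) _
  -- Step G : the sum over good levels
  set U : ℝ≥0∞ := ∑' j : ℤ, if 2 * a j ≤ ν Set.univ then
      ENNReal.ofReal (P j) * (a j ^ (θ-1) * ν (Aset j)) else 0 with hUdef
  have stepG : TG ≤ E₁ * U := by
    rw [hTGdef]
    have hper : ∀ k : ℤ, (if 2 * a k ≤ ν Set.univ then
        ENNReal.ofReal (P k) * (a (k+1) * a k ^ (θ-1)) else 0)
        = ∑' n : ℕ, (if 2 * a k ≤ ν Set.univ then
            ENNReal.ofReal (P k) * (ν (Aset (k+n)) * a k ^ (θ-1)) else 0) := by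
      intro k
      by_cases hk : 2 * a k ≤ ν Set.univ
      · simp only [if_pos hk]
        rw [ha_dec k, ← ENNReal.tsum_mul_right, ← ENNReal.tsum_mul_left]
      · simp only [if_neg hk, tsum_zero]
    rw [tsum_congr hper, ENNReal.tsum_comm]
    have hbnd : ∀ n : ℕ, (∑' k : ℤ, if 2 * a k ≤ ν Set.univ then
        ENNReal.ofReal (P k) * (ν (Aset (k+n)) * a k ^ (θ-1)) else 0) ≤ q ^ n * U := by
      intro n
      have hterm : ∀ k : ℤ, (if 2 * a k ≤ ν Set.univ then
          ENNReal.ofReal (P k) * (ν (Aset (k+n)) * a k ^ (θ-1)) else 0)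
          ≤ q ^ n * (if 2 * a (k+n) ≤ ν Set.univ then
              ENNReal.ofReal (P (k+n)) * (a (k+n) ^ (θ-1) * ν (Aset (k+n))) else 0) := by
        intro k
        by_cases hk : 2 * a k ≤ ν Set.univ
        · have hkn : 2 * a (k+(n:ℤ)) ≤ ν Set.univ :=
            le_trans (mul_le_mul_right (ha_anti (by omega)) 2) hk
          rw [if_pos hk, if_pos hkn]
          have h1 : ENNReal.ofReal (P k) = q ^ n * ENNReal.ofReal (P (k+n)) := by
            rw [hPshift k n, ENNReal.ofReal_mul (by positivity), hPQ n]
          have h2 : a k ^ (θ-1) ≤ a (k+(n:ℤ)) ^ (θ-1) :=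
            rpow_anti_of_nonpos (by linarith) (ha_anti (by omega))
          calc ENNReal.ofReal (P k) * (ν (Aset (k+n)) * a k ^ (θ-1))
              = q ^ n * ENNReal.ofReal (P (k+n)) * (ν (Aset (k+n)) * a k ^ (θ-1)) := by rw [h1]
            _ ≤ q ^ n * ENNReal.ofReal (P (k+n)) * (ν (Aset (k+n)) * a (k+(n:ℤ)) ^ (θ-1)) :=
                mul_le_mul_right (mul_le_mul_right h2 _) _
            _ = q ^ n * (ENNReal.ofReal (P (k+n)) * (a (k+(n:ℤ)) ^ (θ-1) * ν (Aset (k+n)))) := by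
                ring
        · rw [if_neg hk]
          exact zero_le
      refine (ENNReal.tsum_le_tsum hterm).trans (le_of_eq ?_)
      rw [ENNReal.tsum_mul_left]
      congr 1
      rw [hUdef]
      exact (Equiv.addRight (n:ℤ)).tsum_eq fun j => if 2 * a j ≤ ν Set.univ then
        ENNReal.ofReal (P j) * (a j ^ (θ-1) * ν (Aset j)) else 0
    calc (∑' n : ℕ, ∑' k : ℤ, if 2 * a k ≤ ν Set.univ then
          ENNReal.ofReal (P k) * (ν (Aset (k+n)) * a k ^ (θ-1)) else 0)
        ≤ ∑' n : ℕ, q ^ n * U := ENNReal.tsum_le_tsum hbnd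
      _ = (∑' n : ℕ, q ^ n) * U := ENNReal.tsum_mul_right
      _ = E₁ * U := by rw [ENNReal.tsum_geometric]
  -- Step U : the good sum is controlled by the double integral
  have stepU : U ≤ ENNReal.ofReal κ⁻¹ * Y := by
    rw [hUdef]
    have hterm : ∀ j : ℤ, (if 2 * a j ≤ ν Set.univ then
        ENNReal.ofReal (P j) * (a j ^ (θ-1) * ν (Aset j)) else 0)
        ≤ ENNReal.ofReal κ⁻¹ *
          ∫⁻ ξ in Aset j, (∫⁻ η, (‖f ξ - f η‖₊ : ℝ≥0∞) ^ p / (edist ξ η) ^ β ∂ν) ∂ν := by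
      intro j
      by_cases hj : 2 * a j ≤ ν Set.univ
      swap
      · rw [if_neg hj]
        exact zero_le
      rw [if_pos hj]
      rcases eq_or_ne (a j) 0 with h0 | h0
      · have hA0 : ν (Aset j) = 0 :=
          le_antisymm ((hνA j).trans ((ha_anti (by omega)).trans_eq h0)) (zero_le)
        rw [hA0, mul_zero, mul_zero]
        exact zero_le
      · have hptw := key j hj h0
        calc ENNReal.ofReal (P j) * (a j ^ (θ-1) * ν (Aset j))
            = ENNReal.ofReal κ⁻¹ * ((ENNReal.ofReal κ *
                (ENNReal.ofReal (P j) * a j ^ (θ-1))) * ν (Aset j)) := by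
              rw [show ENNReal.ofReal κ⁻¹ * ((ENNReal.ofReal κ *
                  (ENNReal.ofReal (P j) * a j ^ (θ-1))) * ν (Aset j))
                = (ENNReal.ofReal κ⁻¹ * ENNReal.ofReal κ) *
                  (ENNReal.ofReal (P j) * (a j ^ (θ-1) * ν (Aset j))) by ring]
              rw [← ENNReal.ofReal_mul (by positivity : (0:ℝ) ≤ κ⁻¹),
                inv_mul_cancel₀ hκ0.ne', ENNReal.ofReal_one, one_mul]
          _ ≤ ENNReal.ofReal κ⁻¹ *
              ∫⁻ ξ in Aset j, (∫⁻ η, (‖f ξ - f η‖₊ : ℝ≥0∞) ^ p / (edist ξ η) ^ β ∂ν) ∂ν := by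
              refine mul_le_mul_right ?_ _
              calc (ENNReal.ofReal κ * (ENNReal.ofReal (P j) * a j ^ (θ-1))) * ν (Aset j)
                  = ∫⁻ _ in Aset j, ENNReal.ofReal κ *
                      (ENNReal.ofReal (P j) * a j ^ (θ-1)) ∂ν := by
                    rw [setLIntegral_const]
                _ ≤ ∫⁻ ξ in Aset j,
                      (∫⁻ η, (‖f ξ - f η‖₊ : ℝ≥0∞) ^ p / (edist ξ η) ^ β ∂ν) ∂ν := by
                    refine lintegral_mono_ae ?_
                    filter_upwards [ae_restrict_mem (hAmeas j)] with ξ hξ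
                    exact hptw ξ hξ
    refine (ENNReal.tsum_le_tsum hterm).trans ?_
    rw [ENNReal.tsum_mul_left]
    refine mul_le_mul_right ?_ _
    calc (∑' j : ℤ, ∫⁻ ξ in Aset j,
          (∫⁻ η, (‖f ξ - f η‖₊ : ℝ≥0∞) ^ p / (edist ξ η) ^ β ∂ν) ∂ν)
        = ∫⁻ ξ in ⋃ j : ℤ, Aset j,
            (∫⁻ η, (‖f ξ - f η‖₊ : ℝ≥0∞) ^ p / (edist ξ η) ^ β ∂ν) ∂ν :=
          (lintegral_iUnion hAmeas hAdisj _).symm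
      _ ≤ Y := by
          rw [hYdef]
          exact setLIntegral_le_lintegral _ _
  -- final assembly
  have hcomb : TH + TG ≤ (4 * E₁ + E₁ * ENNReal.ofReal κ⁻¹) *
      ((ν Set.univ) ^ (θ-1) * IntF + Y) := by
    calc TH + TG ≤ 4 * E₁ * ((ν Set.univ) ^ (θ-1) * IntF) +
          E₁ * (ENNReal.ofReal κ⁻¹ * Y) :=
        add_le_add stepH (stepG.trans (mul_le_mul_right stepU _))
      _ ≤ (4 * E₁) * ((ν Set.univ) ^ (θ-1) * IntF + Y) +
          (E₁ * ENNReal.ofReal κ⁻¹) * ((ν Set.univ) ^ (θ-1) * IntF + Y) := by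
        refine add_le_add (mul_le_mul_right le_self_add _) ?_
        rw [← mul_assoc]
        exact mul_le_mul_right le_add_self _
      _ = (4 * E₁ + E₁ * ENNReal.ofReal κ⁻¹) * ((ν Set.univ) ^ (θ-1) * IntF + Y) :=
        (add_mul _ _ _).symm
  have hKle : Ktot ≤ ENNReal.ofReal (Ktot.toReal + 1) := by
    calc Ktot = ENNReal.ofReal Ktot.toReal := (ENNReal.ofReal_toReal hKtot).symm
      _ ≤ ENNReal.ofReal (Ktot.toReal + 1) := ENNReal.ofReal_le_ofReal (by linarith)
  calc ENNReal.ofReal (p * D / (D - s * p)) *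
        ∫⁻ t in Set.Ioi (0:ℝ), ENNReal.ofReal (t ^ (p - 1)) * (ν {ξ | t < ‖f ξ‖}) ^ θ
      ≤ ENNReal.ofReal (p * D / (D - s * p)) * (ENNReal.ofReal ((2:ℝ) ^ (p-1)) * S) :=
        mul_le_mul_right stepA _
    _ ≤ ENNReal.ofReal (p * D / (D - s * p)) * (ENNReal.ofReal ((2:ℝ) ^ (p-1)) * (C₁ * T)) :=
        mul_le_mul_right (mul_le_mul_right stepB _) _
    _ ≤ ENNReal.ofReal (p * D / (D - s * p)) *
          (ENNReal.ofReal ((2:ℝ) ^ (p-1)) * (C₁ * (TH + TG))) :=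
        mul_le_mul_right (mul_le_mul_right (mul_le_mul_right hTsplit _) _) _
    _ ≤ ENNReal.ofReal (p * D / (D - s * p)) * (ENNReal.ofReal ((2:ℝ) ^ (p-1)) *
          (C₁ * ((4 * E₁ + E₁ * ENNReal.ofReal κ⁻¹) * ((ν Set.univ) ^ (θ-1) * IntF + Y)))) :=
        mul_le_mul_right (mul_le_mul_right (mul_le_mul_right hcomb _) _) _
    _ = Ktot * ((ν Set.univ) ^ (θ-1) * IntF + Y) := by
        rw [hKtotdef]
        ring
    _ ≤ ENNReal.ofReal (Ktot.toReal + 1) * ((ν Set.univ) ^ (θ-1) * IntF + Y) :=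
        mul_le_mul_left hKle _
end

section
/- Let (Z,d,ν) be an Ahlfors D-regular metric measure space with constant c ≥ 1, let s ∈ (0,1) and p ∈ [1,∞) satisfy s·p < D, and let f : Z → ℂ be a bounded measurable function with compact support. For k ∈ ℤ set A_k = {ξ ∈ Z : |f(ξ)| > 2^k} and a_k = ν(A_k). Then there is a constant C > 0, depending only on c, D, s and p, such that Σ_{k ∈ ℤ, a_k ≠ 0} 2^{k·p} · a_{k+1} · a_k^{−s·p/D} ≤ C · ( ∬_{Z×Z} |f(ξ)−f(η)|^p / d(ξ,η)^{D+s·p} dν(ξ)dν(η) + ν(Z)^{−s·p/D} · ∫_Z |f|^p dν ). -/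
open MeasureTheory Metric Filter
open scoped ENNReal NNReal Topology Classical

lemma aux_tsum_lintegral_le {α : Type*} [MeasurableSpace α] (μ : Measure α)
    {ι : Type*} (g : ι → α → ℝ≥0∞) :
    ∑' i, ∫⁻ x, g i x ∂μ ≤ ∫⁻ x, ∑' i, g i x ∂μ := by
  rw [ENNReal.tsum_eq_iSup_sum]
  refine iSup_le fun F => ?_
  calc ∑ i ∈ F, ∫⁻ x, g i x ∂μ ≤ ∫⁻ x, ∑ i ∈ F, g i x ∂μ := by
        classical
        induction F using Finset.induction with
        | empty => simp
        | insert a F' hx ih =>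
          rw [Finset.sum_insert hx]
          refine le_trans (add_le_add_right ih _) ?_
          refine le_trans (le_lintegral_add _ _) (lintegral_mono fun x => ?_)
          rw [Finset.sum_insert hx]
    _ ≤ ∫⁻ x, ∑' i, g i x ∂μ := lintegral_mono fun x => ENNReal.sum_le_tsum F

lemma aux_geom_tail (p : ℝ) (hp : 1 ≤ p) {N : ℝ} (hN : 0 < N) :
    (∑' k : ℤ, (if (2:ℝ)^k < N then ENNReal.ofReal ((2:ℝ)^((k:ℝ)*p)) else 0)) ≤
      ENNReal.ofReal (2 * N^p) := by
  set g : ℤ → ℝ≥0∞ := fun k => (if (2:ℝ)^k < N then ENNReal.ofReal ((2:ℝ)^((k:ℝ)*p)) else 0)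
    with hg
  set K₀ : ℤ := ⌊Real.logb 2 N⌋ with hK₀
  have hmem : ∀ k : ℤ, g k ≠ 0 → k ≤ K₀ := by
    intro k hk
    by_cases hcond : (2:ℝ)^k < N
    · have h2 : (2:ℝ)^(k:ℝ) < N := by rwa [Real.rpow_intCast]
      exact Int.le_floor.2 ((Real.lt_logb_iff_rpow_lt (by norm_num) hN).2 h2).le
    · exact absurd (by simp [hg, hcond]) hk
  have hinj : Function.Injective (fun j : ℕ => K₀ - (j:ℤ)) := by
    intro a b h; simpa using h
  have hsupp : Function.support g ⊆ Set.range (fun j : ℕ => K₀ - (j:ℤ)) := by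
    intro k hk
    refine ⟨(K₀ - k).toNat, ?_⟩
    have := hmem k hk
    simp only []
    omega
  rw [← hinj.tsum_eq hsupp]
  have hbd : ∀ j : ℕ, g (K₀ - (j:ℤ)) ≤
      ENNReal.ofReal ((2:ℝ)^((K₀:ℝ)*p)) * (ENNReal.ofReal ((2:ℝ)^(-p)))^j := by
    intro j
    have h1 : ((K₀ - (j:ℤ) : ℤ):ℝ) * p = (K₀:ℝ)*p + (-p)*(j:ℕ) := by push_cast; ring
    have h2 : (2:ℝ)^(((K₀ - (j:ℤ) : ℤ):ℝ) * p) = (2:ℝ)^((K₀:ℝ)*p) * ((2:ℝ)^(-p))^(j:ℕ) := by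
      rw [h1, Real.rpow_add (by norm_num)]
      congr 1
      rw [← Real.rpow_natCast ((2:ℝ)^(-p)) j, ← Real.rpow_mul (by norm_num)]
    calc g (K₀ - (j:ℤ)) ≤ ENNReal.ofReal ((2:ℝ)^(((K₀ - (j:ℤ) : ℤ):ℝ) * p)) := by
          by_cases h : (2:ℝ)^(K₀ - (j:ℤ)) < N <;> simp [hg, h]
      _ = _ := by
          rw [h2, ENNReal.ofReal_mul (by positivity), ENNReal.ofReal_pow (by positivity)]
  calc (∑' j : ℕ, g (K₀ - (j:ℤ)))
      ≤ ∑' j : ℕ, ENNReal.ofReal ((2:ℝ)^((K₀:ℝ)*p)) * (ENNReal.ofReal ((2:ℝ)^(-p)))^j :=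
        ENNReal.tsum_le_tsum hbd
    _ = ENNReal.ofReal ((2:ℝ)^((K₀:ℝ)*p)) * (1 - ENNReal.ofReal ((2:ℝ)^(-p)))⁻¹ := by
        rw [ENNReal.tsum_mul_left, ENNReal.tsum_geometric]
    _ ≤ ENNReal.ofReal (N^p) * 2 := by
        gcongr
        · -- 2^(K₀ p) ≤ N^p
          have h1 : (2:ℝ)^(K₀:ℝ) ≤ N := by
            rw [← Real.rpow_logb (by norm_num : (0:ℝ) < 2) (by norm_num) hN]
            exact Real.rpow_le_rpow_left_iff (by norm_num) |>.2 (Int.floor_le _)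
          calc (2:ℝ)^((K₀:ℝ)*p) = ((2:ℝ)^(K₀:ℝ))^p := by
                rw [← Real.rpow_mul (by norm_num)]
            _ ≤ N^p := Real.rpow_le_rpow (by positivity) h1 (by linarith)
        · -- (1 - q)⁻¹ ≤ 2
          have hq : ENNReal.ofReal ((2:ℝ)^(-p)) ≤ 1/2 := by
            rw [show (1/2 : ℝ≥0∞) = ENNReal.ofReal (1/2) by
              rw [ENNReal.ofReal_div_of_pos] <;> norm_num]
            apply ENNReal.ofReal_le_ofReal
            calc (2:ℝ)^(-p) ≤ (2:ℝ)^(-1:ℝ) :=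
                  Real.rpow_le_rpow_of_exponent_le (by norm_num) (by linarith)
              _ = 1/2 := by
                  rw [Real.rpow_neg_one]; norm_num
          have : (1/2 : ℝ≥0∞) ≤ 1 - ENNReal.ofReal ((2:ℝ)^(-p)) := by
            have := tsub_le_tsub_left hq (1:ℝ≥0∞)
            calc (1/2 : ℝ≥0∞) = 1 - 1/2 := by
                  rw [one_div, ENNReal.one_sub_inv_two]
              _ ≤ _ := this
          calc (1 - ENNReal.ofReal ((2:ℝ)^(-p)))⁻¹ ≤ (1/2 : ℝ≥0∞)⁻¹ :=
                ENNReal.inv_le_inv' this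
            _ = 2 := by simp
    _ = ENNReal.ofReal (2 * N^p) := by
        rw [ENNReal.ofReal_mul zero_le_two, ENNReal.ofReal_ofNat, mul_comm]

/-- **Discretized Sobolev bound (analogue of Lemma 6.3 of the Hitchhiker's guide).**
Let `(Z,d,ν)` be an Ahlfors `D`-regular metric measure space with constant `c ≥ 1`,
`s ∈ (0,1)`, `p ∈ [1,∞)` with `s·p < D`, and `f : Z → ℂ` bounded measurable with compact
support.  With `A_k = {|f| > 2^k}` and `a_k = ν(A_k)` for `k ∈ ℤ`, there is a constant
`C > 0` depending only on `c, D, s, p` such that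
`Σ_{k ∈ ℤ, a_k ≠ 0} 2^{kp}·a_{k+1}·a_k^{−sp/D} ≤ C·(∬ |f(ξ)−f(η)|^p/d^{D+sp} + ν(Z)^{−sp/D}·∫|f|^p)`. -/
theorem discretized_sobolev_bound
    {Z : Type*} [MetricSpace Z] [CompleteSpace Z] [MeasurableSpace Z] [BorelSpace Z]
    (hperf : ∀ z : Z, (nhdsWithin z {z}ᶜ).NeBot)
    (ν : Measure Z) (D c : ℝ) (hD : 0 < D) (hc : 1 ≤ c)
    (hA : ∀ (z : Z) (r : ℝ), 0 < r → ENNReal.ofReal r < EMetric.diam (Set.univ : Set Z) →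
      ENNReal.ofReal (c⁻¹ * r ^ D) ≤ ν (Metric.ball z r) ∧
        ν (Metric.ball z r) ≤ ENNReal.ofReal (c * r ^ D))
    (s p : ℝ) (hs : 0 < s) (hs1 : s < 1) (hp : 1 ≤ p) (hsp : s * p < D) :
    ∃ C : ℝ, 0 < C ∧
      ∀ f : Z → ℂ, Measurable f → HasCompactSupport f → (∃ M : ℝ, ∀ ξ, ‖f ξ‖ ≤ M) →
        (∑' k : ℤ,
          if ν {ξ | (2 : ℝ) ^ k < ‖f ξ‖} = 0 then 0 else
            ENNReal.ofReal ((2 : ℝ) ^ ((k : ℝ) * p)) *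
              ν {ξ | (2 : ℝ) ^ (k + 1) < ‖f ξ‖} *
              (ν {ξ | (2 : ℝ) ^ k < ‖f ξ‖}) ^ (-(s * p) / D)) ≤
        ENNReal.ofReal C *
          ((∫⁻ ξ, ∫⁻ η, (‖f ξ - f η‖₊ : ℝ≥0∞) ^ p / (edist ξ η) ^ (D + s * p) ∂ν ∂ν) +
            (ν Set.univ) ^ (-(s * p) / D) * ∫⁻ ξ, (‖f ξ‖₊ : ℝ≥0∞) ^ p ∂ν) := by
  classical
  have hc0 : (0:ℝ) < c := lt_of_lt_of_le one_pos hc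
  have hp0 : (0:ℝ) < p := lt_of_lt_of_le one_pos hp
  have hsp0 : 0 < s * p := mul_pos hs hp0
  have hDsp : 0 < D + s * p := by linarith
  set κ : ℝ := (2*c)^((D+s*p)/D) with hκdef
  have hκpos : 0 < κ := Real.rpow_pos_of_pos (by linarith) _
  refine ⟨2*κ + 2^((s*p)/D), by positivity, ?_⟩
  intro f hfm hfc hfM
  -- local finiteness of ν
  have hloc : IsLocallyFiniteMeasure ν := by
    constructor
    intro z
    rcases eq_top_or_lt_top (EMetric.diam (Set.univ : Set Z)) with hd | hd
    · refine ⟨ball z 1, ball_mem_nhds _ one_pos, ?_⟩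
      exact lt_of_le_of_lt (hA z 1 one_pos (by rw [hd]; exact ENNReal.ofReal_lt_top)).2
        ENNReal.ofReal_lt_top
    · have hdpos : 0 < EMetric.diam (Set.univ : Set Z) := by
        rcases Filter.nonempty_of_mem (self_mem_nhdsWithin (a := z) (s := {z}ᶜ)) with ⟨w, hw⟩
        have hne : w ≠ z := hw
        have : 0 < edist w z := by simpa [edist_pos] using hne
        exact lt_of_lt_of_le this (EMetric.edist_le_diam_of_mem (Set.mem_univ w) (Set.mem_univ z))
      set r : ℝ := (EMetric.diam (Set.univ : Set Z)).toReal / 2 with hrdef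
      have hr0 : 0 < r := by
        have := ENNReal.toReal_pos hdpos.ne' hd.ne
        positivity
      have hrlt : ENNReal.ofReal r < EMetric.diam (Set.univ : Set Z) := by
        rw [hrdef, ENNReal.ofReal_div_of_pos two_pos, ENNReal.ofReal_toReal hd.ne]
        simpa using ENNReal.half_lt_self hdpos.ne' hd.ne
      exact ⟨ball z r, ball_mem_nhds _ hr0,
        lt_of_le_of_lt (hA z r hr0 hrlt).2 ENNReal.ofReal_lt_top⟩
  haveI := hloc
  set A : ℤ → Set Z := fun k => {ξ : Z | (2:ℝ)^k < ‖f ξ‖} with hA_def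
  set a : ℤ → ℝ≥0∞ := fun k => ν (A k) with ha_def
  have hAmeas : ∀ k, MeasurableSet (A k) := fun k => measurableSet_lt measurable_const hfm.norm
  have hafin : ∀ k, a k ≠ ∞ := by
    intro k
    have hsub : A k ⊆ tsupport f := by
      intro ξ hξ
      by_contra hcon
      have h0 : f ξ = 0 := image_eq_zero_of_notMem_tsupport hcon
      have : (2:ℝ)^k < 0 := by simpa [hA_def, h0] using hξ
      exact absurd this (not_lt.2 (le_of_lt (zpow_pos two_pos k)))
    exact ((measure_mono hsub).trans_lt hfc.measure_lt_top).ne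
  set ρ : ℤ → ℝ := fun k => (2*c*(a k).toReal)^(1/D) with hρdef
  set W : ℤ → ℝ≥0∞ := fun k =>
    ENNReal.ofReal ((2:ℝ)^((k:ℝ)*p)) * (ENNReal.ofReal (ρ k))^(-(D+s*p)) with hWdef
  set H : ℤ → Z → Z → ℝ≥0∞ := fun k ξ η =>
    if (a k ≠ 0 ∧ 2 * a k ≤ ν Set.univ ∧ (2:ℝ)^(k+1) < ‖f ξ‖ ∧ ‖f η‖ ≤ (2:ℝ)^k ∧
        dist ξ η ≤ ρ k) then W k else 0 with hHdef
  have hρpos : ∀ k, a k ≠ 0 → 0 < ρ k := by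
    intro k hk
    have : 0 < (a k).toReal := ENNReal.toReal_pos hk (hafin k)
    exact Real.rpow_pos_of_pos (by positivity) _
  -- Claim A : pointwise summation bound
  have claimA : ∀ ξ η : Z, (∑' k : ℤ, H k ξ η) ≤
      2 * ((‖f ξ - f η‖₊ : ℝ≥0∞) ^ p / (edist ξ η) ^ (D + s * p)) := by
    intro ξ η
    set N : ℝ := ‖f ξ - f η‖ with hNdef
    have hstep : ∀ k : ℤ, H k ξ η ≤
        (if (2:ℝ)^k < N then ENNReal.ofReal ((2:ℝ)^((k:ℝ)*p)) else 0) *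
          ((edist ξ η) ^ (D+s*p))⁻¹ := by
      intro k
      simp only [hHdef]
      by_cases hcond : (a k ≠ 0 ∧ 2 * a k ≤ ν Set.univ ∧ (2:ℝ)^(k+1) < ‖f ξ‖ ∧
          ‖f η‖ ≤ (2:ℝ)^k ∧ dist ξ η ≤ ρ k)
      · rw [if_pos hcond]
        obtain ⟨hk0, hνk, hξ, hη, hd⟩ := hcond
        have h2k : (2:ℝ)^k < N := by
          have h1 : ‖f ξ‖ ≤ N + ‖f η‖ := by
            calc ‖f ξ‖ = ‖(f ξ - f η) + f η‖ := by congr 1; ring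
              _ ≤ ‖f ξ - f η‖ + ‖f η‖ := norm_add_le _ _
          have h2 : (2:ℝ)^(k+1) = 2 * (2:ℝ)^k := by
            rw [zpow_add_one₀ (by norm_num : (2:ℝ) ≠ 0)]; ring
          linarith
        rw [if_pos h2k, hWdef]
        simp only []
        refine mul_le_mul_right ?_ _
        rw [ENNReal.rpow_neg]
        refine ENNReal.inv_le_inv' (ENNReal.rpow_le_rpow ?_ hDsp.le)
        exact (edist_le_ofReal (hρpos k hk0).le).2 hd
      · rw [if_neg hcond]; exact zero_le
    by_cases hN : 0 < N
    · have hofR : ENNReal.ofReal (N^p) = (‖f ξ - f η‖₊ : ℝ≥0∞)^p := by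
        rw [← ENNReal.ofReal_coe_nnreal, coe_nnnorm, ENNReal.ofReal_rpow_of_nonneg (norm_nonneg _) hp0.le]
      calc (∑' k : ℤ, H k ξ η)
          ≤ ∑' k : ℤ, (if (2:ℝ)^k < N then ENNReal.ofReal ((2:ℝ)^((k:ℝ)*p)) else 0) *
              ((edist ξ η) ^ (D+s*p))⁻¹ := ENNReal.tsum_le_tsum hstep
        _ = (∑' k : ℤ, if (2:ℝ)^k < N then ENNReal.ofReal ((2:ℝ)^((k:ℝ)*p)) else 0) *
              ((edist ξ η) ^ (D+s*p))⁻¹ := ENNReal.tsum_mul_right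
        _ ≤ ENNReal.ofReal (2 * N^p) * ((edist ξ η) ^ (D+s*p))⁻¹ :=
            mul_le_mul_left (aux_geom_tail p hp hN) _
        _ = 2 * ((‖f ξ - f η‖₊ : ℝ≥0∞) ^ p / (edist ξ η) ^ (D + s * p)) := by
            rw [ENNReal.ofReal_mul (by norm_num : (0:ℝ) ≤ 2), ENNReal.ofReal_ofNat, hofR,
              div_eq_mul_inv, mul_assoc]
    · have hzero : ∀ k : ℤ, H k ξ η = 0 := by
        intro k
        have h := hstep k
        rw [if_neg (fun hlt => hN (lt_trans (zpow_pos two_pos k) hlt))] at h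
        simpa using h
      simp only [hzero, tsum_zero]
      exact zero_le

  -- key measure lower bound
  have hKey : ∀ k : ℤ, a k ≠ 0 → 2 * a k ≤ ν Set.univ → ∀ ξ : Z,
      a k ≤ ν {η | ‖f η‖ ≤ (2:ℝ)^k ∧ dist ξ η ≤ ρ k} := by
    intro k hk hνk ξ
    have hρk : 0 < ρ k := hρpos k hk
    by_cases hdi : ENNReal.ofReal (ρ k) < EMetric.diam (Set.univ : Set Z)
    · -- ball case
      have hball := (hA ξ (ρ k) hρk hdi).1
      have hρD : (ρ k) ^ D = 2 * c * (a k).toReal := by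
        rw [hρdef]
        rw [← Real.rpow_mul (by positivity), one_div, inv_mul_cancel₀ hD.ne', Real.rpow_one]
      have hball2 : 2 * a k ≤ ν (ball ξ (ρ k)) := by
        refine le_trans (le_of_eq ?_) hball
        rw [hρD]
        have : c⁻¹ * (2 * c * (a k).toReal) = 2 * (a k).toReal := by
          field_simp
        rw [this, ENNReal.ofReal_mul (by norm_num), ENNReal.ofReal_ofNat,
          ENNReal.ofReal_toReal (hafin k)]
      have hsub : ball ξ (ρ k) ⊆ {η | ‖f η‖ ≤ (2:ℝ)^k ∧ dist ξ η ≤ ρ k} ∪ A k := by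
        intro η hη
        by_cases hn : ‖f η‖ ≤ (2:ℝ)^k
        · exact Or.inl ⟨hn, le_of_lt (by rw [dist_comm]; exact mem_ball.1 hη)⟩
        · exact Or.inr (not_le.1 hn)
      have hle : a k + a k ≤ ν {η | ‖f η‖ ≤ (2:ℝ)^k ∧ dist ξ η ≤ ρ k} + a k := by
        calc a k + a k = 2 * a k := (two_mul _).symm
          _ ≤ ν (ball ξ (ρ k)) := hball2
          _ ≤ ν ({η | ‖f η‖ ≤ (2:ℝ)^k ∧ dist ξ η ≤ ρ k} ∪ A k) := measure_mono hsub
          _ ≤ _ := measure_union_le _ _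
      exact ENNReal.le_of_add_le_add_right (hafin k) hle
    · -- whole space case
      push_neg at hdi
      have hsub : (A k)ᶜ ⊆ {η | ‖f η‖ ≤ (2:ℝ)^k ∧ dist ξ η ≤ ρ k} := by
        intro η hη
        refine ⟨not_lt.1 hη, ?_⟩
        have h1 : edist ξ η ≤ ENNReal.ofReal (ρ k) :=
          le_trans (EMetric.edist_le_diam_of_mem (Set.mem_univ ξ) (Set.mem_univ η)) hdi
        exact (edist_le_ofReal hρk.le).1 h1
      have hle : a k + a k ≤ ν {η | ‖f η‖ ≤ (2:ℝ)^k ∧ dist ξ η ≤ ρ k} + a k := by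
        calc a k + a k = 2 * a k := (two_mul _).symm
          _ ≤ ν Set.univ := hνk
          _ = ν ((A k)ᶜ ∪ A k) := by rw [Set.compl_union_self]
          _ ≤ ν ((A k)ᶜ) + a k := measure_union_le _ _
          _ ≤ _ := add_le_add_left (measure_mono hsub) _
      exact ENNReal.le_of_add_le_add_right (hafin k) hle
  -- Claim B : per-k lower bound on the double integral
  have claimB : ∀ k : ℤ, a k ≠ 0 → 2 * a k ≤ ν Set.univ →
      ENNReal.ofReal ((2:ℝ)^((k:ℝ)*p)) * a (k+1) * (a k) ^ (-(s*p)/D) ≤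
        ENNReal.ofReal κ * ∫⁻ ξ, ∫⁻ η, H k ξ η ∂ν ∂ν := by
    intro k hk hνk
    have hρk : 0 < ρ k := hρpos k hk
    have hatr : 0 < (a k).toReal := ENNReal.toReal_pos hk (hafin k)
    set q : ℝ := (D+s*p)/D with hqdef
    have hq0 : 0 ≤ q := by positivity
    set Acst : ℝ≥0∞ := (ENNReal.ofReal (2*c))^q with hAcst
    have hA0 : Acst ≠ 0 := by
      rw [hAcst]
      simp [ENNReal.rpow_eq_zero_iff, ENNReal.ofReal_eq_zero]
      exact ⟨fun h => by linarith, fun _ => hq0⟩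
    have hAtop : Acst ≠ ∞ := by
      rw [hAcst]
      exact ENNReal.rpow_ne_top_of_nonneg hq0 ENNReal.ofReal_ne_top
    have hρD2 : (ρ k)^(D+s*p) = (2*c*(a k).toReal)^q := by
      rw [hρdef, ← Real.rpow_mul (by positivity), hqdef]
      congr 1
      field_simp
    have h1 : (ENNReal.ofReal (ρ k)) ^ (D+s*p) = ENNReal.ofReal ((2*c*(a k).toReal)^q) := by
      rw [ENNReal.ofReal_rpow_of_pos hρk, hρD2]
    have h2 : ENNReal.ofReal ((2*c*(a k).toReal)^q) = Acst * (a k)^q := by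
      rw [← ENNReal.ofReal_rpow_of_pos (by positivity),
        ENNReal.ofReal_mul (by positivity), ENNReal.ofReal_toReal (hafin k),
        ENNReal.mul_rpow_of_ne_top ENNReal.ofReal_ne_top (hafin k), hAcst]
    have hWa : W k * a k =
        ENNReal.ofReal ((2:ℝ)^((k:ℝ)*p)) * Acst⁻¹ * (a k)^(-(s*p)/D) := by
      have hcancel : ((a k)^q)⁻¹ * a k = (a k)^(-(s*p)/D) := by
        calc ((a k)^q)⁻¹ * a k = (a k)^(-q) * (a k)^(1:ℝ) := by
              rw [← ENNReal.rpow_neg, ENNReal.rpow_one]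
          _ = (a k)^(-q+1) := (ENNReal.rpow_add _ _ hk (hafin k)).symm
          _ = (a k)^(-(s*p)/D) := by
              congr 1
              rw [hqdef]
              field_simp
              ring
      calc W k * a k
          = ENNReal.ofReal ((2:ℝ)^((k:ℝ)*p)) * (Acst * (a k)^q)⁻¹ * a k := by
            rw [hWdef]
            simp only []
            rw [ENNReal.rpow_neg, h1, h2]
        _ = ENNReal.ofReal ((2:ℝ)^((k:ℝ)*p)) * Acst⁻¹ * (((a k)^q)⁻¹ * a k) := by
            rw [ENNReal.mul_inv (Or.inl hA0) (Or.inl hAtop)]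
            ring
        _ = _ := by rw [hcancel]
    have hκA : ENNReal.ofReal κ = Acst := by
      rw [hκdef, hAcst, ← ENNReal.ofReal_rpow_of_pos (by positivity : (0:ℝ) < 2*c)]
    have hinner : ∀ ξ : Z, (2:ℝ)^(k+1) < ‖f ξ‖ → W k * a k ≤ ∫⁻ η, H k ξ η ∂ν := by
      intro ξ hξ
      have hSmeas : MeasurableSet {η | ‖f η‖ ≤ (2:ℝ)^k ∧ dist ξ η ≤ ρ k} := by
        have heq : {η | ‖f η‖ ≤ (2:ℝ)^k ∧ dist ξ η ≤ ρ k} =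
            {η | ‖f η‖ ≤ (2:ℝ)^k} ∩ {η | dist ξ η ≤ ρ k} := rfl
        rw [heq]
        exact (measurableSet_le hfm.norm measurable_const).inter
          (measurableSet_le ((continuous_const.dist continuous_id).measurable) measurable_const)
      calc W k * a k
          ≤ W k * ν {η | ‖f η‖ ≤ (2:ℝ)^k ∧ dist ξ η ≤ ρ k} :=
            mul_le_mul_right (hKey k hk hνk ξ) _
        _ = ∫⁻ η, Set.indicator {η | ‖f η‖ ≤ (2:ℝ)^k ∧ dist ξ η ≤ ρ k}
              (fun _ => W k) η ∂ν := by
            rw [lintegral_indicator_const hSmeas]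
        _ ≤ ∫⁻ η, H k ξ η ∂ν := by
            refine lintegral_mono fun η => ?_
            by_cases hη : η ∈ {η | ‖f η‖ ≤ (2:ℝ)^k ∧ dist ξ η ≤ ρ k}
            · rw [Set.indicator_of_mem hη]
              simp only [hHdef]
              rw [if_pos ⟨hk, hνk, hξ, hη.1, hη.2⟩]
            · rw [Set.indicator_of_notMem hη]
              exact zero_le
    have houter : W k * a k * a (k+1) ≤ ∫⁻ ξ, ∫⁻ η, H k ξ η ∂ν ∂ν := by
      calc W k * a k * a (k+1)
          = ∫⁻ ξ, Set.indicator (A (k+1)) (fun _ => W k * a k) ξ ∂ν := by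
            rw [lintegral_indicator_const (hAmeas (k+1))]
        _ ≤ ∫⁻ ξ, ∫⁻ η, H k ξ η ∂ν ∂ν := by
            refine lintegral_mono fun ξ => ?_
            by_cases hξ : ξ ∈ A (k+1)
            · rw [Set.indicator_of_mem hξ]
              exact hinner ξ hξ
            · rw [Set.indicator_of_notMem hξ]
              exact zero_le
    calc ENNReal.ofReal ((2:ℝ)^((k:ℝ)*p)) * a (k+1) * (a k) ^ (-(s*p)/D)
        = ENNReal.ofReal κ * (W k * a k) * a (k+1) := by
          rw [hWa, hκA]
          calc ENNReal.ofReal ((2:ℝ)^((k:ℝ)*p)) * a (k+1) * (a k) ^ (-(s*p)/D)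
              = (Acst * Acst⁻¹) * (ENNReal.ofReal ((2:ℝ)^((k:ℝ)*p)) *
                  (a k) ^ (-(s*p)/D) * a (k+1)) := by
                rw [ENNReal.mul_inv_cancel hA0 hAtop]; ring
            _ = Acst * (ENNReal.ofReal ((2:ℝ)^((k:ℝ)*p)) * Acst⁻¹ *
                  (a k) ^ (-(s*p)/D)) * a (k+1) := by ring
      _ = ENNReal.ofReal κ * (W k * a k * a (k+1)) := by ring
      _ ≤ ENNReal.ofReal κ * ∫⁻ ξ, ∫⁻ η, H k ξ η ∂ν ∂ν := mul_le_mul_right houter _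
  -- case ii bound
  have caseII : ∀ k : ℤ, a k ≠ 0 → ν Set.univ < 2 * a k →
      ENNReal.ofReal ((2:ℝ)^((k:ℝ)*p)) * a (k+1) * (a k) ^ (-(s*p)/D) ≤
        ENNReal.ofReal ((2:ℝ)^((s*p)/D)) * (ENNReal.ofReal ((2:ℝ)^((k:ℝ)*p)) * a (k+1)) *
          (ν Set.univ) ^ (-(s*p)/D) := by
    intro k hk hii
    set e : ℝ := (s*p)/D with hedef
    have he0 : 0 ≤ e := by positivity
    have hν0 : ν Set.univ ≠ 0 := by
      intro h0
      exact hk (le_antisymm (h0 ▸ measure_mono (Set.subset_univ (A k))) zero_le)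
    have hdiv : ν Set.univ / 2 ≤ a k :=
      ENNReal.div_le_of_le_mul (by rw [mul_comm]; exact hii.le)
    have key : (a k) ^ (-(s*p)/D) ≤
        ENNReal.ofReal ((2:ℝ)^((s*p)/D)) * (ν Set.univ) ^ (-(s*p)/D) := by
      rw [neg_div, ← hedef, ENNReal.rpow_neg, ENNReal.rpow_neg]
      have h1 : (ν Set.univ / 2) ^ e ≤ (a k) ^ e := ENNReal.rpow_le_rpow hdiv he0
      have h2 : ((a k)^e)⁻¹ ≤ ((ν Set.univ / 2)^e)⁻¹ := ENNReal.inv_le_inv' h1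
      have h3 : (ν Set.univ / 2)^e = (ν Set.univ)^e / (2:ℝ≥0∞)^e :=
        ENNReal.div_rpow_of_nonneg _ _ he0
      have h2top : ((2:ℝ≥0∞)^e) ≠ ∞ := ENNReal.rpow_ne_top_of_nonneg he0 (by norm_num)
      have h20 : ((2:ℝ≥0∞)^e) ≠ 0 := by
        simp [ENNReal.rpow_eq_zero_iff]
      have h4 : ((ν Set.univ)^e / (2:ℝ≥0∞)^e)⁻¹ = (2:ℝ≥0∞)^e * ((ν Set.univ)^e)⁻¹ := by
        rw [ENNReal.inv_div (Or.inl h2top) (Or.inl h20), div_eq_mul_inv]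
      have h5 : (2:ℝ≥0∞)^e = ENNReal.ofReal ((2:ℝ)^e) := by
        rw [← ENNReal.ofReal_rpow_of_pos two_pos, ENNReal.ofReal_ofNat]
      calc ((a k)^e)⁻¹ ≤ ((ν Set.univ / 2)^e)⁻¹ := h2
        _ = ENNReal.ofReal ((2:ℝ)^e) * ((ν Set.univ)^e)⁻¹ := by rw [h3, h4, h5]
    calc ENNReal.ofReal ((2:ℝ)^((k:ℝ)*p)) * a (k+1) * (a k) ^ (-(s*p)/D)
        ≤ ENNReal.ofReal ((2:ℝ)^((k:ℝ)*p)) * a (k+1) *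
            (ENNReal.ofReal ((2:ℝ)^((s*p)/D)) * (ν Set.univ) ^ (-(s*p)/D)) :=
          mul_le_mul_right key _
      _ = ENNReal.ofReal ((2:ℝ)^((s*p)/D)) * (ENNReal.ofReal ((2:ℝ)^((k:ℝ)*p)) * a (k+1)) *
            (ν Set.univ) ^ (-(s*p)/D) := by ring
  -- layer cake bound
  have layercake : (∑' k : ℤ, ENNReal.ofReal ((2:ℝ)^((k:ℝ)*p)) * a (k+1)) ≤
      ∫⁻ ξ, (‖f ξ‖₊ : ℝ≥0∞) ^ p ∂ν := by
    set E2 : ℤ → Set Z := fun l => {ξ | (2:ℝ)^l < ‖f ξ‖ ∧ ‖f ξ‖ ≤ (2:ℝ)^(l+1)} with hE2def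
    set d : ℤ → ℝ≥0∞ := fun l => ν (E2 l) with hddef
    have hE2meas : ∀ l, MeasurableSet (E2 l) := by
      intro l
      have heq : E2 l = {ξ | (2:ℝ)^l < ‖f ξ‖} ∩ {ξ | ‖f ξ‖ ≤ (2:ℝ)^(l+1)} := rfl
      rw [heq]
      exact (measurableSet_lt measurable_const hfm.norm).inter
        (measurableSet_le hfm.norm measurable_const)
    have hE2disj : ∀ l m : ℤ, l < m → Disjoint (E2 l) (E2 m) := by
      intro l m hlm
      rw [Set.disjoint_left]
      intro ξ hl hm
      have h3 : (2:ℝ)^(l+1) ≤ (2:ℝ)^m := zpow_le_zpow_right₀ one_le_two (by omega)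
      have := hl.2
      have := hm.1
      linarith
    have hadecomp : ∀ j : ℤ, a j = ∑' l : ℕ, d (j + l) := by
      intro j
      have hcover : A j = ⋃ l : ℕ, E2 (j + l) := by
        ext ξ
        constructor
        · intro hξ
          have hξ' : (2:ℝ)^j < ‖f ξ‖ := hξ
          have hNpos : (0:ℝ) < ‖f ξ‖ := lt_trans (zpow_pos two_pos j) hξ'
          set m : ℤ := ⌈Real.logb 2 ‖f ξ‖⌉ - 1 with hm
          have hup : ‖f ξ‖ ≤ (2:ℝ)^(m+1) := by
            have h1 : Real.logb 2 ‖f ξ‖ ≤ ((m+1 : ℤ) : ℝ) := by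
              rw [hm]; push_cast
              have := Int.le_ceil (Real.logb 2 ‖f ξ‖)
              linarith
            calc ‖f ξ‖ = (2:ℝ)^(Real.logb 2 ‖f ξ‖) :=
                  (Real.rpow_logb two_pos (by norm_num) hNpos).symm
              _ ≤ (2:ℝ)^(((m+1 : ℤ)) : ℝ) :=
                  Real.rpow_le_rpow_of_exponent_le one_le_two h1
              _ = (2:ℝ)^(m+1) := Real.rpow_intCast 2 (m+1)
          have hlo : (2:ℝ)^m < ‖f ξ‖ := by
            have h1 : ((m : ℤ) : ℝ) < Real.logb 2 ‖f ξ‖ := by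
              rw [hm]; push_cast
              have := Int.ceil_lt_add_one (Real.logb 2 ‖f ξ‖)
              linarith
            calc (2:ℝ)^m = (2:ℝ)^((m : ℤ) : ℝ) := (Real.rpow_intCast 2 m).symm
              _ < (2:ℝ)^(Real.logb 2 ‖f ξ‖) :=
                  Real.rpow_lt_rpow_of_exponent_lt one_lt_two h1
              _ = ‖f ξ‖ := Real.rpow_logb two_pos (by norm_num) hNpos
          have hjm : j ≤ m := by
            by_contra hcon
            push_neg at hcon
            have : (2:ℝ)^(m+1) ≤ (2:ℝ)^j := zpow_le_zpow_right₀ one_le_two (by omega)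
            linarith
          refine Set.mem_iUnion.2 ⟨(m - j).toNat, ?_⟩
          have hidx : j + ((m-j).toNat : ℤ) = m := by omega
          rw [hidx]
          exact ⟨hlo, hup⟩
        · intro hξ
          obtain ⟨l, hl⟩ := Set.mem_iUnion.1 hξ
          have h1 : (2:ℝ)^j ≤ (2:ℝ)^(j + (l:ℤ)) := zpow_le_zpow_right₀ one_le_two (by omega)
          exact lt_of_le_of_lt h1 hl.1
      have hdisj : Pairwise (Function.onFun Disjoint (fun l : ℕ => E2 (j + l))) := by
        intro l1 l2 hne
        rcases lt_or_gt_of_ne hne with h | h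
        · exact hE2disj _ _ (by omega)
        · exact (hE2disj _ _ (by omega)).symm
      calc a j = ν (⋃ l : ℕ, E2 (j + l)) := by rw [ha_def]; simp only []; rw [hcover]
        _ = ∑' l : ℕ, d (j + l) := measure_iUnion hdisj (fun l => hE2meas _)
    have hL2 : (∑' l : ℤ, ENNReal.ofReal ((2:ℝ)^((l:ℝ)*p)) * d l) ≤
        ∫⁻ ξ, (‖f ξ‖₊ : ℝ≥0∞) ^ p ∂ν := by
      have heach : ∀ l : ℤ, ENNReal.ofReal ((2:ℝ)^((l:ℝ)*p)) * d l =
          ∫⁻ ξ, (E2 l).indicator (fun _ => ENNReal.ofReal ((2:ℝ)^((l:ℝ)*p))) ξ ∂ν := by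
        intro l
        rw [lintegral_indicator_const (hE2meas l)]
      calc (∑' l : ℤ, ENNReal.ofReal ((2:ℝ)^((l:ℝ)*p)) * d l)
          = ∑' l : ℤ, ∫⁻ ξ, (E2 l).indicator
              (fun _ => ENNReal.ofReal ((2:ℝ)^((l:ℝ)*p))) ξ ∂ν := tsum_congr heach
        _ ≤ ∫⁻ ξ, ∑' l : ℤ, (E2 l).indicator
              (fun _ => ENNReal.ofReal ((2:ℝ)^((l:ℝ)*p))) ξ ∂ν := aux_tsum_lintegral_le ν _
        _ ≤ ∫⁻ ξ, (‖f ξ‖₊ : ℝ≥0∞) ^ p ∂ν := by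
            refine lintegral_mono fun ξ => ?_
            by_cases hex : ∃ m : ℤ, ξ ∈ E2 m
            · obtain ⟨m, hm⟩ := hex
              have huniq : ∀ l : ℤ, l ≠ m → (E2 l).indicator
                  (fun _ => ENNReal.ofReal ((2:ℝ)^((l:ℝ)*p))) ξ = 0 := by
                intro l hl
                refine Set.indicator_of_notMem ?_ _
                intro hmem
                rcases lt_or_gt_of_ne hl with h | h
                · exact Set.disjoint_left.1 (hE2disj l m h) hmem hm
                · exact Set.disjoint_left.1 (hE2disj m l h) hm hmem
              rw [tsum_eq_single m huniq, Set.indicator_of_mem hm]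
              have h1 : ((2:ℝ)^m)^p ≤ ‖f ξ‖^p :=
                Real.rpow_le_rpow (by positivity) hm.1.le hp0.le
              calc ENNReal.ofReal ((2:ℝ)^((m:ℝ)*p))
                  = ENNReal.ofReal (((2:ℝ)^m)^p) := by
                    rw [← Real.rpow_intCast 2 m, ← Real.rpow_mul (by norm_num)]
                _ ≤ ENNReal.ofReal (‖f ξ‖^p) := ENNReal.ofReal_le_ofReal h1
                _ = (‖f ξ‖₊ : ℝ≥0∞)^p := by
                    rw [← ENNReal.ofReal_coe_nnreal, coe_nnnorm,
                      ENNReal.ofReal_rpow_of_nonneg (norm_nonneg _) hp0.le]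
            · push_neg at hex
              have hzero : ∀ l : ℤ, (E2 l).indicator
                  (fun _ => ENNReal.ofReal ((2:ℝ)^((l:ℝ)*p))) ξ = 0 :=
                fun l => Set.indicator_of_notMem (hex l) _
              simp only [hzero, tsum_zero]
              exact zero_le
    have hgeom : (∑' l : ℕ, ENNReal.ofReal ((2:ℝ)^((-1 - (l:ℝ))*p))) ≤ 1 := by
      have heach : ∀ l : ℕ, ENNReal.ofReal ((2:ℝ)^((-1 - (l:ℝ))*p)) =
          ENNReal.ofReal ((2:ℝ)^(-p)) * (ENNReal.ofReal ((2:ℝ)^(-p)))^l := by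
        intro l
        rw [← ENNReal.ofReal_pow (by positivity), ← ENNReal.ofReal_mul (by positivity)]
        congr 1
        rw [← Real.rpow_natCast ((2:ℝ)^(-p)) l, ← Real.rpow_mul (by norm_num),
          ← Real.rpow_add (by norm_num)]
        congr 1
        ring
      have hq12 : ENNReal.ofReal ((2:ℝ)^(-p)) ≤ 1/2 := by
        rw [show (1/2 : ℝ≥0∞) = ENNReal.ofReal (1/2) by
          rw [ENNReal.ofReal_div_of_pos] <;> norm_num]
        apply ENNReal.ofReal_le_ofReal
        calc (2:ℝ)^(-p) ≤ (2:ℝ)^(-1:ℝ) :=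
              Real.rpow_le_rpow_of_exponent_le (by norm_num) (by linarith)
          _ = 1/2 := by rw [Real.rpow_neg_one]; norm_num
      have hinv2 : (1 - ENNReal.ofReal ((2:ℝ)^(-p)))⁻¹ ≤ 2 := by
        have h12 : (1/2 : ℝ≥0∞) ≤ 1 - ENNReal.ofReal ((2:ℝ)^(-p)) := by
          have := tsub_le_tsub_left hq12 (1:ℝ≥0∞)
          calc (1/2 : ℝ≥0∞) = 1 - 1/2 := by rw [one_div, ENNReal.one_sub_inv_two]
            _ ≤ _ := this
        calc (1 - ENNReal.ofReal ((2:ℝ)^(-p)))⁻¹ ≤ (1/2 : ℝ≥0∞)⁻¹ :=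
              ENNReal.inv_le_inv' h12
          _ = 2 := by simp
      calc (∑' l : ℕ, ENNReal.ofReal ((2:ℝ)^((-1 - (l:ℝ))*p)))
          = ENNReal.ofReal ((2:ℝ)^(-p)) * (1 - ENNReal.ofReal ((2:ℝ)^(-p)))⁻¹ := by
            rw [tsum_congr heach, ENNReal.tsum_mul_left, ENNReal.tsum_geometric]
        _ ≤ (1/2 : ℝ≥0∞) * 2 := mul_le_mul' hq12 hinv2
        _ = 1 := by rw [one_div, ENNReal.inv_mul_cancel] <;> norm_num
    calc (∑' k : ℤ, ENNReal.ofReal ((2:ℝ)^((k:ℝ)*p)) * a (k+1))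
        = ∑' k : ℤ, ∑' l : ℕ, ENNReal.ofReal ((2:ℝ)^((k:ℝ)*p)) * d (k+1+l) := by
          refine tsum_congr fun k => ?_
          rw [hadecomp (k+1), ENNReal.tsum_mul_left]
      _ = ∑' l : ℕ, ∑' k : ℤ, ENNReal.ofReal ((2:ℝ)^((k:ℝ)*p)) * d (k+1+l) :=
          ENNReal.tsum_comm
      _ = ∑' l : ℕ, ∑' m : ℤ, ENNReal.ofReal ((2:ℝ)^((-1 - (l:ℝ))*p)) *
            (ENNReal.ofReal ((2:ℝ)^((m:ℝ)*p)) * d m) := by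
          refine tsum_congr fun l => ?_
          calc (∑' k : ℤ, ENNReal.ofReal ((2:ℝ)^((k:ℝ)*p)) * d (k+1+l))
              = ∑' k : ℤ, (fun m : ℤ => ENNReal.ofReal ((2:ℝ)^((-1 - (l:ℝ))*p)) *
                  (ENNReal.ofReal ((2:ℝ)^((m:ℝ)*p)) * d m)) ((Equiv.addRight (1 + (l:ℤ))) k) := by
                refine tsum_congr fun k => ?_
                simp only [Equiv.coe_addRight]
                rw [← mul_assoc, ← ENNReal.ofReal_mul (by positivity),
                  ← Real.rpow_add (by norm_num)]
                have hidx : k + (1 + (l:ℤ)) = k + 1 + l := by ring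
                rw [hidx]
                congr 2
                push_cast
                ring
            _ = _ := (Equiv.addRight (1 + (l:ℤ))).tsum_eq
                (fun m : ℤ => ENNReal.ofReal ((2:ℝ)^((-1 - (l:ℝ))*p)) *
                  (ENNReal.ofReal ((2:ℝ)^((m:ℝ)*p)) * d m))
      _ = (∑' l : ℕ, ENNReal.ofReal ((2:ℝ)^((-1 - (l:ℝ))*p))) *
            (∑' m : ℤ, ENNReal.ofReal ((2:ℝ)^((m:ℝ)*p)) * d m) := by
          rw [← ENNReal.tsum_mul_right]
          exact tsum_congr fun l => ENNReal.tsum_mul_left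
      _ ≤ 1 * ∫⁻ ξ, (‖f ξ‖₊ : ℝ≥0∞) ^ p ∂ν := mul_le_mul' hgeom hL2
      _ = ∫⁻ ξ, (‖f ξ‖₊ : ℝ≥0∞) ^ p ∂ν := one_mul _
  -- assembly
  have hgoal_eq : ∀ k : ℤ, ν {ξ : Z | (2:ℝ)^k < ‖f ξ‖} = a k := fun k => by
    rw [ha_def]
  simp only [hgoal_eq]
  set I : ℝ≥0∞ := ∫⁻ ξ, ∫⁻ η, (‖f ξ - f η‖₊ : ℝ≥0∞) ^ p / (edist ξ η) ^ (D + s * p) ∂ν ∂ν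
    with hIdef
  set F : ℝ≥0∞ := ∫⁻ ξ, (‖f ξ‖₊ : ℝ≥0∞) ^ p ∂ν with hFdef
  have hSumH : (∑' k : ℤ, ∫⁻ ξ, ∫⁻ η, H k ξ η ∂ν ∂ν) ≤ 2 * I := by
    calc (∑' k : ℤ, ∫⁻ ξ, ∫⁻ η, H k ξ η ∂ν ∂ν)
        ≤ ∫⁻ ξ, ∑' k : ℤ, ∫⁻ η, H k ξ η ∂ν ∂ν := aux_tsum_lintegral_le ν _
      _ ≤ ∫⁻ ξ, ∫⁻ η, ∑' k : ℤ, H k ξ η ∂ν ∂ν :=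
          lintegral_mono fun ξ => aux_tsum_lintegral_le ν _
      _ ≤ ∫⁻ ξ, ∫⁻ η, 2 * ((‖f ξ - f η‖₊ : ℝ≥0∞) ^ p / (edist ξ η) ^ (D + s * p)) ∂ν ∂ν :=
          lintegral_mono fun ξ => lintegral_mono fun η => claimA ξ η
      _ = 2 * I := by
          rw [hIdef]
          simp_rw [lintegral_const_mul' 2 _ (by norm_num : (2:ℝ≥0∞) ≠ ⊤)]
  have hterm : ∀ k : ℤ,
      (if a k = 0 then 0 else
        ENNReal.ofReal ((2:ℝ)^((k:ℝ)*p)) * a (k+1) * (a k) ^ (-(s*p)/D)) ≤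
      (ENNReal.ofReal ((2:ℝ)^((s*p)/D)) * (ENNReal.ofReal ((2:ℝ)^((k:ℝ)*p)) * a (k+1)) *
          (ν Set.univ) ^ (-(s*p)/D)) +
        ENNReal.ofReal κ * ∫⁻ ξ, ∫⁻ η, H k ξ η ∂ν ∂ν := by
    intro k
    by_cases hk : a k = 0
    · simp [hk]
    · rw [if_neg hk]
      by_cases hii : ν Set.univ < 2 * a k
      · exact le_add_right (caseII k hk hii)
      · exact le_add_left (claimB k hk (not_lt.1 hii))
  calc (∑' k : ℤ, if a k = 0 then 0 else
          ENNReal.ofReal ((2:ℝ)^((k:ℝ)*p)) * a (k+1) * (a k) ^ (-(s*p)/D))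
      ≤ ∑' k : ℤ, ((ENNReal.ofReal ((2:ℝ)^((s*p)/D)) *
            (ENNReal.ofReal ((2:ℝ)^((k:ℝ)*p)) * a (k+1)) * (ν Set.univ) ^ (-(s*p)/D)) +
          ENNReal.ofReal κ * ∫⁻ ξ, ∫⁻ η, H k ξ η ∂ν ∂ν) := ENNReal.tsum_le_tsum hterm
    _ = (∑' k : ℤ, ENNReal.ofReal ((2:ℝ)^((s*p)/D)) *
            (ENNReal.ofReal ((2:ℝ)^((k:ℝ)*p)) * a (k+1)) * (ν Set.univ) ^ (-(s*p)/D)) +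
          (∑' k : ℤ, ENNReal.ofReal κ * ∫⁻ ξ, ∫⁻ η, H k ξ η ∂ν ∂ν) := ENNReal.tsum_add
    _ ≤ ENNReal.ofReal ((2:ℝ)^((s*p)/D)) * F * (ν Set.univ) ^ (-(s*p)/D) +
          ENNReal.ofReal κ * (2 * I) := by
        gcongr
        · calc (∑' k : ℤ, ENNReal.ofReal ((2:ℝ)^((s*p)/D)) *
                (ENNReal.ofReal ((2:ℝ)^((k:ℝ)*p)) * a (k+1)) * (ν Set.univ) ^ (-(s*p)/D))
              = ENNReal.ofReal ((2:ℝ)^((s*p)/D)) *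
                (∑' k : ℤ, ENNReal.ofReal ((2:ℝ)^((k:ℝ)*p)) * a (k+1)) *
                  (ν Set.univ) ^ (-(s*p)/D) := by
                rw [ENNReal.tsum_mul_right, ENNReal.tsum_mul_left]
            _ ≤ _ := by gcongr
        · rw [ENNReal.tsum_mul_left]; gcongr
    _ ≤ ENNReal.ofReal (2*κ + 2^((s*p)/D)) * (I + (ν Set.univ) ^ (-(s*p)/D) * F) := by
        have h1 : ENNReal.ofReal κ * (2 * I) = ENNReal.ofReal (2*κ) * I := by
          rw [ENNReal.ofReal_mul (by norm_num : (0:ℝ) ≤ 2), ENNReal.ofReal_ofNat]; ring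
        have h2 : ENNReal.ofReal ((2:ℝ)^((s*p)/D)) * F * (ν Set.univ) ^ (-(s*p)/D)
            = ENNReal.ofReal ((2:ℝ)^((s*p)/D)) * ((ν Set.univ) ^ (-(s*p)/D) * F) := by ring
        rw [h1, h2]
        have hκle : ENNReal.ofReal (2*κ) ≤ ENNReal.ofReal (2*κ + 2^((s*p)/D)) :=
          ENNReal.ofReal_le_ofReal
            (by nlinarith [Real.rpow_pos_of_pos (by norm_num : (0:ℝ)<2) ((s*p)/D)])
        have hele : ENNReal.ofReal ((2:ℝ)^((s*p)/D)) ≤ ENNReal.ofReal (2*κ + 2^((s*p)/D)) :=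
          ENNReal.ofReal_le_ofReal (by nlinarith [hκpos])
        calc ENNReal.ofReal ((2:ℝ)^((s*p)/D)) * ((ν Set.univ) ^ (-(s*p)/D) * F) +
              ENNReal.ofReal (2*κ) * I
            ≤ ENNReal.ofReal (2*κ + 2^((s*p)/D)) * ((ν Set.univ) ^ (-(s*p)/D) * F) +
              ENNReal.ofReal (2*κ + 2^((s*p)/D)) * I :=
              add_le_add (mul_le_mul_left hele _) (mul_le_mul_left hκle _)
          _ = ENNReal.ofReal (2*κ + 2^((s*p)/D)) * (I + (ν Set.univ) ^ (-(s*p)/D) * F) := by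
              ring
end

section
/- Let (Z,d,ν) be an Ahlfors D-regular metric measure space with constant c ≥ 1, and let s ∈ (0,1) and p ≥ 1. Then there is a constant C > 0, depending only on c, D and the product s·p, such that for every measurable set E ⊆ Z with ν(E) < ∞ and every ξ ∈ Z one has ∫_{Z∖E} d(ξ,η)^{−(D+s·p)} dν(η) ≥ C · ν(E)^{−s·p/D} − ν(Z)^{−s·p/D}, with the convention that both sides are interpreted in the extended reals (and ν(Z)^{−s·p/D} = 0 when ν(Z) = ∞). -/
open MeasureTheory Metric Filter
open scoped ENNReal NNReal Topology

private lemma ennrpow_anti {x y : ℝ≥0∞} (h : x ≤ y) {z : ℝ} (hz : z ≤ 0) : y ^ z ≤ x ^ z := by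
  have h1 := ENNReal.inv_le_inv.mpr (ENNReal.rpow_le_rpow h (neg_nonneg.mpr hz))
  rwa [← ENNReal.rpow_neg, ← ENNReal.rpow_neg, neg_neg] at h1

private lemma tail_lb {Z : Type*} [MetricSpace Z] [MeasurableSpace Z] [BorelSpace Z]
    (ν : Measure Z) (x : ℝ) (hx : x ≤ 0) (E S : Set Z) (ξ : Z) (ρ : ℝ) (hρ : 0 < ρ)
    (hSE : S ⊆ Eᶜ) (hSd : ∀ η ∈ S, edist ξ η ≤ ENNReal.ofReal ρ) :
    ENNReal.ofReal (ρ ^ x) * ν S ≤ ∫⁻ η in Eᶜ, edist ξ η ^ x ∂ν := by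
  refine le_trans ?_ (lintegral_mono_set hSE)
  calc ENNReal.ofReal (ρ ^ x) * ν S = ∫⁻ _ in S, ENNReal.ofReal (ρ ^ x) ∂ν := by
        rw [setLIntegral_const]
    _ ≤ _ := by
        refine setLIntegral_mono (measurable_edist_right.pow measurable_const) ?_
        intro η hη
        rw [← ENNReal.ofReal_rpow_of_pos hρ]
        exact ennrpow_anti (hSd η hη) hx

/-- **Lower bound for the tail integral (analogue of Lemma 6.1 of the Hitchhiker's guide).**
Let `(Z,d,ν)` be an Ahlfors `D`-regular metric measure space with constant `c ≥ 1`,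
`s ∈ (0,1)`, `p ≥ 1`. Then there is `C > 0` depending only on `c, D, s·p` such that for
every measurable `E ⊆ Z` with `ν E < ∞` and every `ξ ∈ Z`,
`∫_{Z∖E} d(ξ,η)^{−(D+sp)} dν(η) ≥ C·ν(E)^{−sp/D} − ν(Z)^{−sp/D}`
(in `ℝ≥0∞`, with truncated subtraction; `ν(Z)^{−sp/D} = 0` when `ν Z = ∞`). -/
theorem tail_integral_lower_bound
    {Z : Type*} [MetricSpace Z] [CompleteSpace Z] [MeasurableSpace Z] [BorelSpace Z]
    (hperf : ∀ z : Z, (nhdsWithin z {z}ᶜ).NeBot)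
    (ν : Measure Z) (D c : ℝ) (hD : 0 < D) (hc : 1 ≤ c)
    (hA : ∀ (z : Z) (r : ℝ), 0 < r → ENNReal.ofReal r < EMetric.diam (Set.univ : Set Z) →
      ENNReal.ofReal (c⁻¹ * r ^ D) ≤ ν (Metric.ball z r) ∧
        ν (Metric.ball z r) ≤ ENNReal.ofReal (c * r ^ D))
    (s p : ℝ) (hs : 0 < s) (hs1 : s < 1) (hp : 1 ≤ p) :
    ∃ C : ℝ, 0 < C ∧
      ∀ E : Set Z, MeasurableSet E → ν E < ⊤ → ∀ ξ : Z,
        ENNReal.ofReal C * (ν E) ^ (-(s * p) / D) - (ν Set.univ) ^ (-(s * p) / D) ≤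
          ∫⁻ η in Eᶜ, (edist ξ η) ^ (-(D + s * p)) ∂ν := by
  have hc0 : (0:ℝ) < c := lt_of_lt_of_le one_pos hc
  have hsp : 0 < s * p := mul_pos hs (lt_of_lt_of_le one_pos hp)
  set x : ℝ := -(D + s * p) with hxdef
  set κ : ℝ := -(s * p) / D with hκdef
  have hx0 : x < 0 := by simp only [hxdef]; linarith
  have hκ0 : κ < 0 := div_neg_of_neg_of_pos (by linarith) hD
  have hxDκ : x / D + 1 = κ := by
    rw [hxdef, hκdef]; field_simp; ring
  have hxD0 : x / D ≤ 0 := le_of_lt (div_neg_of_neg_of_pos hx0 hD)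
  refine ⟨(2 * c) ^ (x / D), Real.rpow_pos_of_pos (by linarith) _, ?_⟩
  intro E hE hEfin ξ
  have hdiam : 0 < EMetric.diam (Set.univ : Set Z) := by
    obtain ⟨η, hη⟩ := Filter.NeBot.nonempty_of_mem (hperf ξ) self_mem_nhdsWithin
    exact EMetric.diam_pos_iff'.mpr ⟨ξ, trivial, η, trivial, fun h => hη h.symm⟩
  by_cases hE0 : ν E = 0
  · -- integral is infinite
    have hItop : ∫⁻ η in Eᶜ, (edist ξ η) ^ x ∂ν = ⊤ := by
      by_contra hI
      set T : ℝ := (∫⁻ η in Eᶜ, (edist ξ η) ^ x ∂ν).toReal with hTdef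
      have hT0 : 0 ≤ T := ENNReal.toReal_nonneg
      obtain ⟨ρ₁, hρ₁0, h0ρ₁, hρ₁d⟩ := ENNReal.lt_iff_exists_real_btwn.mp hdiam
      have hρ₁pos : 0 < ρ₁ := ENNReal.ofReal_pos.mp h0ρ₁
      have hcT : (0:ℝ) < c * (T + 1) := by positivity
      set K : ℝ := (c * (T + 1)) ^ (-(s * p))⁻¹ with hKdef
      have hKpos : 0 < K := Real.rpow_pos_of_pos hcT _
      set ρ : ℝ := min ρ₁ K with hρdef
      have hρpos : 0 < ρ := lt_min hρ₁pos hKpos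
      have hρd : ENNReal.ofReal ρ < EMetric.diam (Set.univ : Set Z) :=
        lt_of_le_of_lt (ENNReal.ofReal_le_ofReal (min_le_left _ _)) hρ₁d
      have hball := (hA ξ ρ hρpos hρd).1
      have hkey := tail_lb ν x hx0.le E (Metric.ball ξ ρ \ E) ξ ρ hρpos
        (fun z hz => hz.2) (fun η hη => by
          rw [edist_dist]
          exact ENNReal.ofReal_le_ofReal (le_of_lt (by rw [dist_comm]; exact hη.1)))
      rw [measure_diff_null hE0] at hkey
      have hlow : ENNReal.ofReal (T + 1) ≤ ∫⁻ η in Eᶜ, (edist ξ η) ^ x ∂ν := by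
        refine le_trans ?_ hkey
        have h1 : ENNReal.ofReal (ρ ^ x) * ENNReal.ofReal (c⁻¹ * ρ ^ D) ≤
            ENNReal.ofReal (ρ ^ x) * ν (Metric.ball ξ ρ) := by gcongr
        refine le_trans ?_ h1
        rw [← ENNReal.ofReal_mul (Real.rpow_nonneg hρpos.le _)]
        apply ENNReal.ofReal_le_ofReal
        have hρx : ρ ^ x * (c⁻¹ * ρ ^ D) = c⁻¹ * ρ ^ (-(s * p)) := by
          rw [show ρ ^ x * (c⁻¹ * ρ ^ D) = c⁻¹ * (ρ ^ x * ρ ^ D) by ring,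
            ← Real.rpow_add hρpos, show x + D = -(s * p) by rw [hxdef]; ring]
        rw [hρx]
        have hρK : K ^ (-(s * p)) ≤ ρ ^ (-(s * p)) :=
          Real.rpow_le_rpow_of_nonpos hρpos (min_le_right _ _) (by linarith)
        have hKval : K ^ (-(s * p)) = c * (T + 1) := by
          rw [hKdef, ← Real.rpow_mul hcT.le, inv_mul_cancel₀ (by linarith : -(s*p) ≠ 0),
            Real.rpow_one]
        calc T + 1 = c⁻¹ * (c * (T + 1)) := by field_simp
          _ ≤ c⁻¹ * ρ ^ (-(s * p)) := by
              rw [← hKval]; exact mul_le_mul_of_nonneg_left hρK (by positivity)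
      have hup : (∫⁻ η in Eᶜ, (edist ξ η) ^ x ∂ν) < ENNReal.ofReal (T + 1) :=
        (ENNReal.lt_ofReal_iff_toReal_lt hI).mpr (by linarith)
      exact absurd hlow (not_le.mpr hup)
    rw [hItop]
    exact le_top
  · -- main case : ν E > 0
    set m : ℝ := (ν E).toReal with hmdef
    have hm : 0 < m := ENNReal.toReal_pos hE0 hEfin.ne
    have hνE : ν E = ENNReal.ofReal m := (ENNReal.ofReal_toReal hEfin.ne).symm
    have h2cm : (0:ℝ) < 2 * c * m := by positivity
    set r : ℝ := (2 * c * m) ^ D⁻¹ with hrdef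
    have hr : 0 < r := Real.rpow_pos_of_pos h2cm _
    have hrD : r ^ D = 2 * c * m := by
      rw [hrdef, ← Real.rpow_mul h2cm.le, inv_mul_cancel₀ hD.ne', Real.rpow_one]
    have hrx : ENNReal.ofReal (r ^ x) * ν E
        = ENNReal.ofReal ((2 * c) ^ (x / D)) * (ν E) ^ κ := by
      have h1 : r ^ x = (2 * c) ^ (x / D) * m ^ (x / D) := by
        rw [hrdef, ← Real.rpow_mul h2cm.le, ← Real.mul_rpow (by positivity) hm.le]
        congr 1
        field_simp
      rw [h1, hνE, ENNReal.ofReal_mul (le_of_lt (Real.rpow_pos_of_pos (by linarith) _)), mul_assoc]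
      congr 1
      rw [← hxDκ, ENNReal.rpow_add _ _ (ne_of_gt (ENNReal.ofReal_pos.mpr hm)) ENNReal.ofReal_ne_top, ENNReal.rpow_one,
        ENNReal.ofReal_rpow_of_pos hm]
    by_cases hcase : ENNReal.ofReal r < EMetric.diam (Set.univ : Set Z)
    · -- small ball case
      have hball := (hA ξ r hr hcase).1
      have h2m : c⁻¹ * r ^ D = m + m := by rw [hrD]; field_simp; ring
      have hEball : ν E ≤ ν (Metric.ball ξ r \ E) := by
        have h1 : ν (Metric.ball ξ r) ≤ ν (Metric.ball ξ r \ E) + ν E := by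
          refine le_trans (measure_mono ?_) (measure_union_le _ _)
          intro z hz
          by_cases hzE : z ∈ E
          · exact Or.inr hzE
          · exact Or.inl ⟨hz, hzE⟩
        have h2 : ν E + ν E ≤ ν (Metric.ball ξ r \ E) + ν E := by
          refine le_trans ?_ h1
          rw [hνE, ← ENNReal.ofReal_add hm.le hm.le, ← h2m]
          exact hball
        exact (ENNReal.add_le_add_iff_right hEfin.ne).mp h2
      have hkey := tail_lb ν x hx0.le E (Metric.ball ξ r \ E) ξ r hr (fun z hz => hz.2)
        (fun η hη => by
          rw [edist_dist]
          exact ENNReal.ofReal_le_ofReal (le_of_lt (by rw [dist_comm]; exact hη.1)))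
      refine le_trans tsub_le_self (le_trans ?_ hkey)
      rw [← hrx]
      exact mul_le_mul_right hEball _
    · -- whole space is within radius r
      replace hcase : EMetric.diam (Set.univ : Set Z) ≤ ENNReal.ofReal r := not_lt.mp hcase
      by_cases hbig : ν E + ν E ≤ ν Set.univ
      · have hEc : ν E ≤ ν Eᶜ := by
          have h1 : ν Set.univ ≤ ν E + ν Eᶜ := by
            refine le_trans (measure_mono ?_) (measure_union_le _ _)
            intro z _
            by_cases hz : z ∈ E
            · exact Or.inl hz
            · exact Or.inr hz
          exact (ENNReal.add_le_add_iff_left hEfin.ne).mp (le_trans hbig h1)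
        have hkey := tail_lb ν x hx0.le E Eᶜ ξ r hr subset_rfl
          (fun η _ => le_trans (EMetric.edist_le_diam_of_mem (Set.mem_univ ξ) (Set.mem_univ η)) hcase)
        refine le_trans tsub_le_self (le_trans ?_ hkey)
        rw [← hrx]
        exact mul_le_mul_right hEc _
      · push_neg at hbig
        have huniv_le : ν Set.univ ≤ 2 * ν E := by rw [two_mul]; exact hbig.le
        have hle : ENNReal.ofReal ((2 * c) ^ (x / D)) * (ν E) ^ κ ≤ (ν Set.univ) ^ κ := by
          have h2E : ((2 : ℝ≥0∞) * ν E) ^ κ ≤ (ν Set.univ) ^ κ := ennrpow_anti huniv_le hκ0.le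
          rw [ENNReal.mul_rpow_of_ne_top (by norm_num) hEfin.ne] at h2E
          refine le_trans (mul_le_mul_left ?_ _) h2E
          have h2κ : ((2 : ℝ≥0∞)) ^ κ = ENNReal.ofReal (2 ^ κ) := by
            rw [← ENNReal.ofReal_rpow_of_pos (by norm_num : (0:ℝ) < 2)]
            norm_num
          rw [h2κ]
          apply ENNReal.ofReal_le_ofReal
          calc (2 * c) ^ (x / D) ≤ 2 ^ (x / D) :=
                Real.rpow_le_rpow_of_nonpos (by norm_num) (by linarith) hxD0
            _ ≤ 2 ^ κ := Real.rpow_le_rpow_of_exponent_le (by norm_num) (by linarith [hxDκ])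
        rw [tsub_eq_zero_of_le hle]
        exact zero_le
end

section
/- Let (Z,d) be a metric space, ν a Borel measure on Z, D > 0, and let g : Z → Z be a bijection with metric derivative Dg : Z → (0,∞), i.e. d(gξ,gη)² = Dg(ξ)·Dg(η)·d(ξ,η)² for all ξ,η ∈ Z. Then: (i) for every a ∈ Z and all ξ,η ∈ Z ∖ {a} one has d_{ga}(gξ,gη) = d_a(ξ,η)/Dg(a); and (ii) if moreover ν(g(A)) = ∫_A Dg(ξ)^D dν(ξ) for every Borel set A ⊆ Z, then for every a ∈ Z and every Borel set A ⊆ Z ∖ {a} one has ν_{ga}(g(A)) = Dg(a)^{−D} · ν_a(A). -/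
open MeasureTheory Metric Filter
open scoped ENNReal NNReal Topology

private lemma conf_cont_aux {Z W : Type*} [MetricSpace Z] [MetricSpace W]
    (g : Z → W) (c : Z → ℝ) (hc : ∀ ξ, 0 < c ξ)
    (key : ∀ ξ η, dist (g ξ) (g η) = c ξ * c η * dist ξ η) :
    Continuous g ∧ Continuous c := by
  have hcont : Continuous c := by
    rw [continuous_iff_continuousAt]
    intro p
    by_cases hq : ∃ q : Z, q ≠ p
    · obtain ⟨q, hqp⟩ := hq
      set G : Z → ℝ := fun ξ => (c ξ)⁻¹ with hGdef
      have hGpos : ∀ ξ, 0 < G ξ := fun ξ => inv_pos.2 (hc ξ)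
      have triple : ∀ x y z : Z, G z * dist x y ≤ G y * dist x z + G x * dist z y := by
        intro x y z
        have h := dist_triangle (g x) (g z) (g y)
        rw [key, key, key] at h
        have hx := hc x; have hy := hc y; have hz := hc z
        have hpos : 0 < c x * c y * c z := by positivity
        have h2 : (c x * c y * dist x y) / (c x * c y * c z)
            ≤ (c x * c z * dist x z + c z * c y * dist z y) / (c x * c y * c z) :=
          by gcongr
        calc G z * dist x y
            = (c x * c y * dist x y) / (c x * c y * c z) := by
              simp only [hGdef]; field_simp
          _ ≤ (c x * c z * dist x z + c z * c y * dist z y) / (c x * c y * c z) := h2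
          _ = G y * dist x z + G x * dist z y := by
              simp only [hGdef]; field_simp
      have hdqp : 0 < dist q p := dist_pos.2 hqp
      set K : ℝ := (G p + G q) / dist q p with hK
      have bound : ∀ ζ, |G ζ - G p| ≤ K * dist ζ p := by
        intro ζ
        rw [abs_sub_le_iff]
        constructor
        · have t := triple q p ζ
          have tri : dist q ζ ≤ dist q p + dist p ζ := dist_triangle q p ζ
          rw [hK, div_mul_eq_mul_div, le_div_iff₀ hdqp]
          have hGp := (hGpos p).le
          have h3 : G p * dist q ζ ≤ G p * (dist q p + dist p ζ) :=
            mul_le_mul_of_nonneg_left tri hGp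
          rw [dist_comm p ζ] at h3
          nlinarith [t, h3]
        · have t := triple q ζ p
          have tri : dist q p ≤ dist q ζ + dist ζ p := dist_triangle q ζ p
          rw [hK, div_mul_eq_mul_div, le_div_iff₀ hdqp]
          have hGp := (hGpos p).le
          have h3 : G p * dist q p ≤ G p * (dist q ζ + dist ζ p) :=
            mul_le_mul_of_nonneg_left tri hGp
          rw [dist_comm p ζ] at t
          nlinarith [t, h3]
      have hGcont : ContinuousAt G p := by
        rw [ContinuousAt, tendsto_iff_dist_tendsto_zero]
        apply squeeze_zero (fun ζ => dist_nonneg)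
          (g := fun ζ => K * dist ζ p)
          (fun ζ => by rw [Real.dist_eq]; exact bound ζ)
        have h2 : Tendsto (fun ζ : Z => dist ζ p) (nhds p) (nhds (dist p p)) :=
          (continuous_id.dist continuous_const).tendsto p
        rw [dist_self] at h2
        simpa using h2.const_mul K
      have : ContinuousAt (fun ξ => (G ξ)⁻¹) p := hGcont.inv₀ (hGpos p).ne'
      simpa only [hGdef, inv_inv] using this
    · push_neg at hq
      have : c = fun _ => c p := funext fun ξ => by rw [hq ξ]
      rw [this]; exact continuousAt_const
  refine ⟨?_, hcont⟩
  rw [continuous_iff_continuousAt]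
  intro p
  rw [ContinuousAt, tendsto_iff_dist_tendsto_zero]
  have heq : ∀ ζ, dist (g ζ) (g p) = c ζ * c p * dist ζ p := fun ζ => key ζ p
  have h1 : Tendsto (fun ζ => c ζ * c p * dist ζ p) (nhds p) (nhds 0) := by
    have h2 : Tendsto (fun ζ : Z => dist ζ p) (nhds p) (nhds (dist p p)) :=
      (continuous_id.dist continuous_const).tendsto p
    rw [dist_self] at h2
    simpa using (((hcont.tendsto p).mul tendsto_const_nhds).mul h2)
  exact Tendsto.congr (fun ζ => (heq ζ).symm) h1

private lemma conf_rcalc {x y t : ℝ} (hx : 0 < x) (hy : 0 < y) (ht : 0 < t) (D : ℝ) :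
    (y ^ 2) ^ D * (x * y * t) ^ (-(2 * D)) = (x ^ 2) ^ (-D) * t ^ (-(2 * D)) := by
  have hxyt : 0 < x * y * t := by positivity
  rw [Real.rpow_def_of_pos (pow_pos hy 2), Real.rpow_def_of_pos hxyt,
    Real.rpow_def_of_pos (pow_pos hx 2), Real.rpow_def_of_pos ht, ← Real.exp_add,
    ← Real.exp_add]
  congr 1
  rw [Real.log_pow, Real.log_pow, Real.log_mul (mul_pos hx hy).ne' ht.ne',
    Real.log_mul hx.ne' hy.ne']
  push_cast
  ring

/-- **Transformation rules for the metric conformal bundle.**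
Let `(Z,d)` be a metric space, `ν` a Borel measure, `D > 0`, and `g : Z → Z` a bijection
with metric derivative `Dg : Z → (0,∞)`, i.e. `d(gξ,gη)² = Dg(ξ)·Dg(η)·d(ξ,η)²`. Then:
(i) `d_{ga}(gξ,gη) = d_a(ξ,η)/Dg(a)` for `ξ,η ≠ a`; and
(ii) if `ν(g(A)) = ∫_A Dg^D dν` for every Borel `A`, then
`ν_{ga}(g(A)) = Dg(a)^{−D}·ν_a(A)` for Borel `A ⊆ Z∖{a}`,
where `d_a(ξ,η) = d(ξ,η)/(d(ξ,a)d(η,a))` and `dν_a = d(a,·)^{−2D} dν`. -/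
theorem conformal_bundle_transformation_rules
    {Z : Type*} [MetricSpace Z] [MeasurableSpace Z] [BorelSpace Z]
    (ν : Measure Z) (D : ℝ) (hD : 0 < D)
    (g : Z → Z) (hg : Function.Bijective g)
    (Dg : Z → ℝ) (hDg : ∀ ξ, 0 < Dg ξ)
    (hmd : ∀ ξ η : Z, dist (g ξ) (g η) ^ 2 = Dg ξ * Dg η * dist ξ η ^ 2) :
    (∀ (a ξ η : Z), ξ ≠ a → η ≠ a →
      dist (g ξ) (g η) / (dist (g ξ) (g a) * dist (g η) (g a)) =
        (dist ξ η / (dist ξ a * dist η a)) / Dg a) ∧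
    ((∀ A : Set Z, MeasurableSet A →
        ν (g '' A) = ∫⁻ ξ in A, ENNReal.ofReal (Dg ξ ^ D) ∂ν) →
      ∀ (a : Z) (A : Set Z), MeasurableSet A → A ⊆ ({a}ᶜ : Set Z) →
        (∫⁻ ξ in g '' A, (ENNReal.ofReal (dist (g a) ξ)) ^ (-(2 * D)) ∂ν) =
          ENNReal.ofReal (Dg a ^ (-D)) *
            ∫⁻ ξ in A, (ENNReal.ofReal (dist a ξ)) ^ (-(2 * D)) ∂ν) := by
  -- the "conformal factor" c = √Dg
  set c : Z → ℝ := fun ξ => Real.sqrt (Dg ξ) with hcdef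
  have hc : ∀ ξ, 0 < c ξ := fun ξ => Real.sqrt_pos.2 (hDg ξ)
  have key : ∀ ξ η : Z, dist (g ξ) (g η) = c ξ * c η * dist ξ η := by
    intro ξ η
    have h := hmd ξ η
    rw [← Real.sqrt_sq (dist_nonneg (x := g ξ) (y := g η)), h,
      Real.sqrt_mul (mul_nonneg (hDg ξ).le (hDg η).le), Real.sqrt_mul (hDg ξ).le,
      Real.sqrt_sq (dist_nonneg (x := ξ) (y := η))]
  have hDgc : ∀ ξ, Dg ξ = c ξ ^ 2 := fun ξ => (Real.sq_sqrt (hDg ξ).le).symm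
  constructor
  · -- part (i)
    intro a ξ η hξ hη
    have hdξa : dist ξ a ≠ 0 := dist_ne_zero.2 hξ
    have hdηa : dist η a ≠ 0 := dist_ne_zero.2 hη
    have hca := hc a; have hcξ := hc ξ; have hcη := hc η
    rw [key, key, key, hDgc a]
    field_simp
  · -- part (ii)
    intro hν a A hA hAa
    obtain ⟨hgcont, hccont⟩ := conf_cont_aux g c hc key
    set e : Z ≃ Z := Equiv.ofBijective g hg with hedef
    have hge : ∀ x, g (e.symm x) = x := fun x => e.apply_symm_apply x
    -- inverse is continuous as well
    have hsymm_cont : Continuous (⇑e.symm) := by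
      have hc' : ∀ x, 0 < (c (e.symm x))⁻¹ := fun x => inv_pos.2 (hc (e.symm x))
      have key' : ∀ x y, dist (e.symm x) (e.symm y)
          = (c (e.symm x))⁻¹ * (c (e.symm y))⁻¹ * dist x y := by
        intro x y
        have h := key (e.symm x) (e.symm y)
        rw [hge, hge] at h
        have hX := (hc (e.symm x)).ne'
        have hY := (hc (e.symm y)).ne'
        rw [h]
        field_simp
      exact (conf_cont_aux (⇑e.symm) (fun x => (c (e.symm x))⁻¹) hc' key').1
    set E : Z ≃ₜ Z := ⟨e, hgcont, hsymm_cont⟩ with hEdef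
    set M : Z ≃ᵐ Z := E.toMeasurableEquiv with hMdef
    have hgM : ∀ x, g (M.symm x) = x := fun x => e.apply_symm_apply x
    have himg : ∀ S : Set Z, ⇑M.symm ⁻¹' S = g '' S := fun S =>
      (e.image_eq_preimage_symm S).symm
    -- measurability facts
    have hDgcont : Continuous Dg := (hccont.mul hccont).congr
      (fun ξ => by rw [hDgc ξ, Pi.mul_apply]; ring)
    set w : Z → ℝ≥0∞ := fun ξ => ENNReal.ofReal (Dg ξ ^ D) with hwdef
    have hwmeas : Measurable w :=
      (hDgcont.measurable.pow measurable_const).ennreal_ofReal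
    set f : Z → ℝ≥0∞ := fun x => (ENNReal.ofReal (dist (g a) x)) ^ (-(2 * D)) with hfdef
    have hfmeas : Measurable f :=
      (ENNReal.continuous_rpow_const.comp
        (ENNReal.continuous_ofReal.comp (continuous_const.dist continuous_id))).measurable
    have hfg : Measurable fun y => f (g y) := hfmeas.comp hgcont.measurable
    -- the pushforward identity
    have hmap : Measure.map (⇑M.symm) ν = ν.withDensity w := by
      refine Measure.ext fun s hs => ?_
      rw [Measure.map_apply M.symm.measurable hs, withDensity_apply _ hs, himg s,
        hν s hs]
    -- change of variables
    have h1 : ∫⁻ x in g '' A, f x ∂ν = ∫⁻ y in A, w y * f (g y) ∂ν := by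
      have h2 := setLIntegral_map (μ := ν) (f := fun y => f (g y)) (g := ⇑M.symm) hA hfg
        M.symm.measurable
      simp only [hgM] at h2
      rw [himg A] at h2
      rw [← h2, hmap,
        setLIntegral_withDensity_eq_setLIntegral_mul ν hwmeas hfg hA]
      rfl
    rw [h1, ← lintegral_const_mul' _ _ ENNReal.ofReal_ne_top]
    refine setLIntegral_congr_fun hA (fun ξ hξ => ?_)
    have hξa : ξ ≠ a := hAa hξ
    have ht : 0 < dist a ξ := dist_pos.2 (Ne.symm hξa)
    have hkey := key a ξ
    have hca := hc a; have hcξ := hc ξ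
    simp only [hfdef, hwdef, hkey]
    rw [ENNReal.ofReal_rpow_of_pos (mul_pos (mul_pos hca hcξ) ht),
      ENNReal.ofReal_rpow_of_pos ht,
      ← ENNReal.ofReal_mul (Real.rpow_nonneg (hDg ξ).le D),
      ← ENNReal.ofReal_mul (Real.rpow_nonneg (hDg a).le (-D))]
    congr 1
    rw [hDgc ξ, hDgc a]
    exact conf_rcalc hca hcξ ht D
end

section
/- Let (Z,d) be a metric space, ν a Borel measure on Z, D > 0, and let g : Z → Z be a bijection with metric derivative Dg : Z → (0,∞) (i.e. d(gξ,gη)² = Dg(ξ)·Dg(η)·d(ξ,η)² for all ξ,η ∈ Z) satisfying the change-of-variables formula ν(g(A)) = ∫_A Dg(ξ)^D dν(ξ) for every Borel set A ⊆ Z. Let p ∈ [1,∞), s ∈ (0,1), t ∈ ℝ, z = s + i·t, and a ∈ Z. Then for every measurable φ : Z_a → ℂ, the function Π φ : Z_{ga} → ℂ defined by (Π φ)(ξ) = Dg(a)^{D/p−z}·φ(g⁻¹ξ) satisfies ∬_{Z_{ga}×Z_{ga}} |Π φ(ξ) − Π φ(η)|^p / d_{ga}(ξ,η)^{D+s·p}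 dν_{ga}(ξ)dν_{ga}(η) = ∬_{Z_a×Z_a} |φ(ξ)−φ(η)|^p / d_a(ξ,η)^{D+s·p} dν_a(ξ)dν_a(η), as an identity in the extended nonnegative reals. (This says Π_z^{(p)}(g;a) is an isometry between the homogeneous fractional Sobolev spaces of (Z_a,d_a,ν_a) and (Z_{ga},d_{ga},ν_{ga}).) -/
open MeasureTheory Metric Filter Complex
open scoped ENNReal NNReal Topology

private lemma rkey (D s p c u v A B C m : ℝ) (hc : 0 < c) (hu : 0 < u)
    (hv : 0 < v) (hA : 0 < A) (hB : 0 < B) (hC : 0 < C) (hm : 0 ≤ m) (hp : 0 < p) :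
    ((u * c * A ^ 2) ^ (-D) * u ^ D) *
      (((v * c * B ^ 2) ^ (-D) * v ^ D) *
        ((c ^ (D / p - s) * m) ^ p / (C / (c * (A * B))) ^ (D + s * p))) =
    A ^ (-(2 * D)) * (B ^ (-(2 * D)) * (m ^ p / (C / (A * B)) ^ (D + s * p))) := by
  rcases hm.eq_or_lt with hm0 | hm
  · rw [← hm0, mul_zero, Real.zero_rpow hp.ne', zero_div, zero_div, mul_zero, mul_zero,
      mul_zero, mul_zero]
  have e2 : ∀ x : ℝ, 0 < x → x ^ (D + s * p) = x ^ D * x ^ (s * p) := fun x hx =>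
    Real.rpow_add hx _ _
  have e3 : ∀ x : ℝ, 0 < x → x ^ (-(2 * D)) = (x ^ D * x ^ D)⁻¹ := by
    intro x hx
    rw [← Real.rpow_add hx, ← Real.rpow_neg hx.le]
    congr 1
    ring
  have e4 : ∀ x y z : ℝ, 0 < x → 0 < y → 0 < z →
      (x * y * z ^ 2) ^ (-D) = (x ^ D * y ^ D * (z ^ D * z ^ D))⁻¹ := by
    intro x y z hx hy hz
    rw [Real.rpow_neg (by positivity), Real.mul_rpow (by positivity) (by positivity),
      Real.mul_rpow hx.le hy.le, ← Real.rpow_two, ← Real.rpow_mul hz.le,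
      show (2 : ℝ) * D = D + D by ring, Real.rpow_add hz]
  rw [e4 u c A hu hc hA, e4 v c B hv hc hB,
    Real.mul_rpow (by positivity) hm.le,
    ← Real.rpow_mul hc.le,
    show (D / p - s) * p = D - s * p by field_simp,
    Real.rpow_sub hc,
    Real.div_rpow hC.le (by positivity : (0:ℝ) ≤ c * (A * B)),
    Real.mul_rpow hc.le (by positivity : (0:ℝ) ≤ A * B),
    Real.div_rpow hC.le (by positivity : (0:ℝ) ≤ A * B),
    Real.mul_rpow hA.le hB.le,
    e2 c hc, e2 A hA, e2 B hB, e3 A hA, e3 B hB]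
  have h1 := (Real.rpow_pos_of_pos hu D).ne'
  have h2 := (Real.rpow_pos_of_pos hc D).ne'
  have h3 := (Real.rpow_pos_of_pos hv D).ne'
  have h4 := (Real.rpow_pos_of_pos hA D).ne'
  have h5 := (Real.rpow_pos_of_pos hB D).ne'
  have h6 := (Real.rpow_pos_of_pos hA (s * p)).ne'
  have h7 := (Real.rpow_pos_of_pos hB (s * p)).ne'
  have h8 := (Real.rpow_pos_of_pos hc (s * p)).ne'
  have h9 := (Real.rpow_pos_of_pos hC (D + s * p)).ne'
  field_simp

/-- **`Π_z^{(p)}(g;a)` is an isometry between homogeneous fractional Sobolev energies.**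
Let `(Z,d)` be a metric space, `ν` a Borel measure, `D > 0`, `g : Z → Z` a bijection with
inverse `ginv` and metric derivative `Dg` satisfying the change-of-variables formula.
Let `p ∈ [1,∞)`, `s ∈ (0,1)`, `t ∈ ℝ`, `z = s + it`, `a ∈ Z`. Then for every measurable
`φ`, the Gagliardo energy of `Πφ : ξ ↦ Dg(a)^{D/p−z}·φ(g⁻¹ξ)` on `(Z_{ga}, d_{ga}, ν_{ga})`
equals that of `φ` on `(Z_a, d_a, ν_a)`, where `d_a(ξ,η) = d(ξ,η)/(d(ξ,a)d(η,a))` and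
`dν_a = d(a,·)^{−2D} dν`. -/
theorem bundle_representation_isometric
    {Z : Type*} [MetricSpace Z] [MeasurableSpace Z] [BorelSpace Z]
    (ν : Measure Z) (D : ℝ) (hD : 0 < D)
    (g ginv : Z → Z) (hg : Function.Bijective g)
    (hlinv : Function.LeftInverse ginv g) (hrinv : Function.RightInverse ginv g)
    (hgm : Measurable g) (hginvm : Measurable ginv)
    (Dg : Z → ℝ) (hDg : ∀ ξ, 0 < Dg ξ) (hDgm : Measurable Dg)
    (hmd : ∀ ξ η : Z, dist (g ξ) (g η) ^ 2 = Dg ξ * Dg η * dist ξ η ^ 2)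
    (hcv : ∀ A : Set Z, MeasurableSet A →
      ν (g '' A) = ∫⁻ ξ in A, ENNReal.ofReal (Dg ξ ^ D) ∂ν)
    (p s t : ℝ) (hp : 1 ≤ p) (hs : 0 < s) (hs1 : s < 1)
    (a : Z) (φ : Z → ℂ) (hφ : Measurable φ) :
    (∫⁻ ξ in ({g a}ᶜ : Set Z), ∫⁻ η in ({g a}ᶜ : Set Z),
        (‖((Dg a : ℝ) : ℂ) ^ (((D / p - s : ℝ) : ℂ) - (t : ℂ) * Complex.I) * φ (ginv ξ) -
            ((Dg a : ℝ) : ℂ) ^ (((D / p - s : ℝ) : ℂ) - (t : ℂ) * Complex.I) * φ (ginv η)‖₊ : ℝ≥0∞) ^ p /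
          (ENNReal.ofReal (dist ξ η / (dist ξ (g a) * dist η (g a)))) ^ (D + s * p)
      ∂(ν.withDensity fun ζ => (ENNReal.ofReal (dist (g a) ζ)) ^ (-(2 * D)))
      ∂(ν.withDensity fun ζ => (ENNReal.ofReal (dist (g a) ζ)) ^ (-(2 * D)))) =
    (∫⁻ ξ in ({a}ᶜ : Set Z), ∫⁻ η in ({a}ᶜ : Set Z),
        (‖φ ξ - φ η‖₊ : ℝ≥0∞) ^ p /
          (ENNReal.ofReal (dist ξ η / (dist ξ a * dist η a))) ^ (D + s * p)
      ∂(ν.withDensity fun ζ => (ENNReal.ofReal (dist a ζ)) ^ (-(2 * D)))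
      ∂(ν.withDensity fun ζ => (ENNReal.ofReal (dist a ζ)) ^ (-(2 * D)))) := by
  have hp0 : (0:ℝ) < p := lt_of_lt_of_le one_pos hp
  -- the measurable equivalence induced by `g`
  let e : Z ≃ᵐ Z :=
    { toFun := g, invFun := ginv, left_inv := hlinv, right_inv := hrinv,
      measurable_toFun := hgm, measurable_invFun := hginvm }
  have hcoe : ⇑e = g := rfl
  have hsgac : MeasurableSet ({g a}ᶜ : Set Z) := (measurableSet_singleton _).compl
  have hsac : MeasurableSet ({a}ᶜ : Set Z) := (measurableSet_singleton _).compl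
  -- measurability of the densities
  have hwm : Measurable fun ζ => (ENNReal.ofReal (dist (g a) ζ)) ^ (-(2 * D)) :=
    ENNReal.continuous_rpow_const.measurable.comp
      (continuous_const.dist continuous_id).measurable.ennreal_ofReal
  have hwam : Measurable fun ζ => (ENNReal.ofReal (dist a ζ)) ^ (-(2 * D)) :=
    ENNReal.continuous_rpow_const.measurable.comp
      (continuous_const.dist continuous_id).measurable.ennreal_ofReal
  have hfDm : Measurable fun ξ => ENNReal.ofReal (Dg ξ ^ D) :=
    ((Real.continuous_rpow_const hD.le).measurable.comp hDgm).ennreal_ofReal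
  -- change of variables as a pushforward identity
  have hmeq : ν = Measure.map (⇑e) (ν.withDensity fun ξ => ENNReal.ofReal (Dg ξ ^ D)) := by
    ext B hB
    rw [Measure.map_apply e.measurable hB, withDensity_apply _ (e.measurable hB)]
    conv_lhs => rw [← Set.image_preimage_eq B hg.surjective]
    exact hcv _ (hgm hB)
  have hpre : ⇑e ⁻¹' ({g a}ᶜ : Set Z) = ({a}ᶜ : Set Z) := by
    ext x
    simp [hcoe, hg.injective.eq_iff]
  -- transport lemma for the `g a`-side measure
  have transport : ∀ G : Z → ℝ≥0∞,
      ∫⁻ ξ in ({g a}ᶜ : Set Z), G ξ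
          ∂(ν.withDensity fun ζ => (ENNReal.ofReal (dist (g a) ζ)) ^ (-(2 * D))) =
        ∫⁻ ξ in ({a}ᶜ : Set Z),
          ((ENNReal.ofReal (dist (g a) (g ξ))) ^ (-(2 * D)) * ENNReal.ofReal (Dg ξ ^ D)) *
            G (g ξ) ∂ν := by
    intro G
    rw [setLIntegral_withDensity_eq_setLIntegral_mul_non_measurable ν hwm G hsgac ?_]
    · conv_lhs => rw [hmeq]
      rw [Measure.restrict_map e.measurable hsgac, lintegral_map_equiv _ e, hpre,
        setLIntegral_withDensity_eq_setLIntegral_mul_non_measurable ν hfDm _ hsac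
          (ae_of_all _ fun ξ => ENNReal.ofReal_lt_top)]
      refine lintegral_congr fun ξ => ?_
      simp only [Pi.mul_apply, hcoe]
      ring
    · filter_upwards [ae_restrict_mem hsgac] with ζ hζ
      have hne : ζ ≠ g a := hζ
      rw [ENNReal.ofReal_rpow_of_pos (dist_pos.mpr (Ne.symm hne))]
      exact ENNReal.ofReal_lt_top
  -- unfolding lemma for the `a`-side measure
  have base_side : ∀ G : Z → ℝ≥0∞,
      ∫⁻ ξ in ({a}ᶜ : Set Z), G ξ
          ∂(ν.withDensity fun ζ => (ENNReal.ofReal (dist a ζ)) ^ (-(2 * D))) =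
        ∫⁻ ξ in ({a}ᶜ : Set Z), (ENNReal.ofReal (dist a ξ)) ^ (-(2 * D)) * G ξ ∂ν := by
    intro G
    rw [setLIntegral_withDensity_eq_setLIntegral_mul_non_measurable ν hwam G hsac ?_]
    · exact lintegral_congr fun ξ => rfl
    · filter_upwards [ae_restrict_mem hsac] with ζ hζ
      have hne : ζ ≠ a := hζ
      rw [ENNReal.ofReal_rpow_of_pos (dist_pos.mpr (Ne.symm hne))]
      exact ENNReal.ofReal_lt_top
  -- auxiliary: even-exponent conversion
  have hsq : ∀ x : ℝ, 0 ≤ x → x ^ (-(2 * D)) = (x ^ 2) ^ (-D) := by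
    intro x hx
    rcases hx.eq_or_lt with h | h
    · rw [← h, Real.zero_rpow (by simp [hD.ne'] : -(2 * D) ≠ 0),
        (by norm_num : (0:ℝ) ^ 2 = 0), Real.zero_rpow (by simp [hD.ne'] : -D ≠ 0)]
    · rw [← Real.rpow_two, ← Real.rpow_mul h.le]
      norm_num
  rw [transport, base_side]
  refine lintegral_congr_ae ?_
  filter_upwards [ae_restrict_mem hsac] with ξ hξ
  have hξa : ξ ≠ a := hξ
  have hKne : (ENNReal.ofReal (dist (g a) (g ξ))) ^ (-(2 * D)) *
      ENNReal.ofReal (Dg ξ ^ D) ≠ ∞ := by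
    rw [ENNReal.ofReal_rpow_of_pos (dist_pos.mpr (fun h => hξa (hg.injective h).symm))]
    exact ENNReal.mul_ne_top ENNReal.ofReal_ne_top ENNReal.ofReal_ne_top
  have hwne : (ENNReal.ofReal (dist a ξ)) ^ (-(2 * D)) ≠ ∞ := by
    rw [ENNReal.ofReal_rpow_of_pos (dist_pos.mpr (Ne.symm hξa))]
    exact ENNReal.ofReal_ne_top
  rw [transport, base_side, ← lintegral_const_mul' _ _ hKne, ← lintegral_const_mul' _ _ hwne]
  refine lintegral_congr_ae ?_
  filter_upwards [ae_restrict_mem hsac] with η hη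
  have hηa : η ≠ a := hη
  simp only [hlinv ξ, hlinv η]
  rcases eq_or_ne ξ η with rfl | hxy
  · simp [ENNReal.zero_rpow_of_pos hp0]
  -- positivity facts
  have hga : g ξ ≠ g a := fun h => hξa (hg.injective h)
  have hgb : g η ≠ g a := fun h => hηa (hg.injective h)
  have hgxy : g ξ ≠ g η := fun h => hxy (hg.injective h)
  have p1 : 0 < dist (g a) (g ξ) := dist_pos.mpr (Ne.symm hga)
  have p2 : 0 < dist (g a) (g η) := dist_pos.mpr (Ne.symm hgb)
  have p3 : 0 < dist (g ξ) (g a) := dist_pos.mpr hga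
  have p4 : 0 < dist (g η) (g a) := dist_pos.mpr hgb
  have p5 : 0 < dist (g ξ) (g η) := dist_pos.mpr hgxy
  have q1 : 0 < dist a ξ := dist_pos.mpr (Ne.symm hξa)
  have q2 : 0 < dist a η := dist_pos.mpr (Ne.symm hηa)
  have q3 : 0 < dist ξ a := dist_pos.mpr hξa
  have q4 : 0 < dist η a := dist_pos.mpr hηa
  have q5 : 0 < dist ξ η := dist_pos.mpr hxy
  have hc := hDg a
  have hu := hDg ξ
  have hv := hDg η
  -- the norm of the complex factor
  have hnm : ‖((Dg a : ℝ) : ℂ) ^ (((D / p - s : ℝ) : ℂ) - (t : ℂ) * Complex.I) * φ ξ -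
      ((Dg a : ℝ) : ℂ) ^ (((D / p - s : ℝ) : ℂ) - (t : ℂ) * Complex.I) * φ η‖ =
      Dg a ^ (D / p - s) * ‖φ ξ - φ η‖ := by
    rw [← mul_sub, norm_mul]
    congr 1
    rw [Complex.norm_cpow_eq_rpow_re_of_pos hc]
    congr 1
    simp
  -- the distance ratio identity
  have hrat : dist (g ξ) (g η) / (dist (g ξ) (g a) * dist (g η) (g a)) =
      dist ξ η / (Dg a * (dist ξ a * dist η a)) := by
    rw [← Real.sqrt_sq (by positivity :
        (0:ℝ) ≤ dist (g ξ) (g η) / (dist (g ξ) (g a) * dist (g η) (g a))),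
      ← Real.sqrt_sq (by positivity :
        (0:ℝ) ≤ dist ξ η / (Dg a * (dist ξ a * dist η a)))]
    congr 1
    rw [div_pow, mul_pow, hmd ξ η, hmd ξ a, hmd η a, div_pow, mul_pow]
    field_simp
  simp only [← enorm_eq_nnnorm, ← ofReal_norm, hnm]
  rw [ENNReal.ofReal_rpow_of_pos p1, ENNReal.ofReal_rpow_of_pos p2,
    ENNReal.ofReal_rpow_of_pos q1, ENNReal.ofReal_rpow_of_pos q2,
    ENNReal.ofReal_rpow_of_nonneg (by positivity) hp0.le,
    ENNReal.ofReal_rpow_of_nonneg (norm_nonneg _) hp0.le,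
    ENNReal.ofReal_rpow_of_pos (by positivity :
      (0:ℝ) < dist (g ξ) (g η) / (dist (g ξ) (g a) * dist (g η) (g a))),
    ENNReal.ofReal_rpow_of_pos (by positivity :
      (0:ℝ) < dist ξ η / (dist ξ a * dist η a)),
    ← ENNReal.ofReal_div_of_pos (by positivity),
    ← ENNReal.ofReal_div_of_pos (by positivity),
    ← ENNReal.ofReal_mul (by positivity), ← ENNReal.ofReal_mul (by positivity),
    ← ENNReal.ofReal_mul (by positivity), ← ENNReal.ofReal_mul (by positivity),
    ← ENNReal.ofReal_mul (by positivity), ← ENNReal.ofReal_mul (by positivity)]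
  refine congrArg ENNReal.ofReal ?_
  rw [dist_comm (g a) (g ξ), dist_comm (g a) (g η), dist_comm a ξ, dist_comm a η]
  rw [hsq (dist (g ξ) (g a)) dist_nonneg, hsq (dist (g η) (g a)) dist_nonneg,
    hmd ξ a, hmd η a, hrat]
  exact rkey D s p (Dg a) (Dg ξ) (Dg η) (dist ξ a) (dist η a) (dist ξ η) ‖φ ξ - φ η‖
    hc hu hv q3 q4 q5 (norm_nonneg _) hp0
end

section
/- Let (Z,d) be a metric space with at least two points, let g : Z → Z be a bijection with metric derivative Dg : Z → (0,∞), i.e. d(gξ,gη)² = Dg(ξ)·Dg(η)·d(ξ,η)² for all ξ,η ∈ Z, and let Dh : Z → (0,∞) be defined by Dh(ξ) = Dg(g⁻¹ξ)⁻¹ (the metric derivative of g⁻¹). Let D > 0, p ∈ [1,∞), z ∈ ℂ, a ∈ Z, and φ : Z → ℂ. Then for every ξ ∈ Z with ξ ≠ ga one has d(ξ,ga)^{−2D/p+2z} · Dg(a)^{D/p−z} · d(g⁻¹ξ,a)^{2D/p−2z} · φ(g⁻¹ξ) = Dh(ξ)^{D/p−z} · φ(g⁻¹ξ). (This is the identity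 Ω_{z,p}(ga)^{−1} ∘ Π_z^{(p)}(g;a) ∘ Ω_{z,p}(a) = π_z^{(p)}(g), exhibiting the boundary representation as a conjugate of the isometric bundle representation by the Cayley-transform operators.) -/
open Metric Complex

/-- **The conjugation identity `Ω_{z,p}(ga)⁻¹ ∘ Π_z^{(p)}(g;a) ∘ Ω_{z,p}(a) = π_z^{(p)}(g)`.**
Let `(Z,d)` be a metric space with at least two points, `g : Z → Z` a bijection with
inverse `ginv` and metric derivative `Dg` (so `d(gξ,gη)² = Dg(ξ)Dg(η)d(ξ,η)²`), and let
`Dh(ξ) = Dg(g⁻¹ξ)⁻¹` be the metric derivative of `g⁻¹`. Let `D > 0`, `p ∈ [1,∞)`,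
`z ∈ ℂ`, `a ∈ Z`, `φ : Z → ℂ`. Then for every `ξ ≠ ga`,
`d(ξ,ga)^{−2D/p+2z}·Dg(a)^{D/p−z}·d(g⁻¹ξ,a)^{2D/p−2z}·φ(g⁻¹ξ) = Dh(ξ)^{D/p−z}·φ(g⁻¹ξ)`,
with principal complex powers. -/
theorem boundary_representation_via_cayley
    {Z : Type*} [MetricSpace Z] [Nontrivial Z]
    (g ginv : Z → Z) (hg : Function.Bijective g)
    (hlinv : Function.LeftInverse ginv g) (hrinv : Function.RightInverse ginv g)
    (Dg : Z → ℝ) (hDg : ∀ ξ, 0 < Dg ξ)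
    (hmd : ∀ ξ η : Z, dist (g ξ) (g η) ^ 2 = Dg ξ * Dg η * dist ξ η ^ 2)
    (D p : ℝ) (hD : 0 < D) (hp : 1 ≤ p)
    (z : ℂ) (a : Z) (φ : Z → ℂ) :
    ∀ ξ : Z, ξ ≠ g a →
      ((dist ξ (g a) : ℝ) : ℂ) ^ (((-(2 * D / p) : ℝ) : ℂ) + 2 * z) *
          ((Dg a : ℝ) : ℂ) ^ (((D / p : ℝ) : ℂ) - z) *
          ((dist (ginv ξ) a : ℝ) : ℂ) ^ (((2 * D / p : ℝ) : ℂ) - 2 * z) *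
          φ (ginv ξ) =
        (((Dg (ginv ξ))⁻¹ : ℝ) : ℂ) ^ (((D / p : ℝ) : ℂ) - z) * φ (ginv ξ) := by
  intro ξ hξ
  set w : ℂ := ((D / p : ℝ) : ℂ) - z with hw
  have hB : 0 < Dg (ginv ξ) := hDg _
  have hA : 0 < Dg a := hDg _
  have hd1 : 0 < dist ξ (g a) := dist_pos.mpr hξ
  have hginv : ginv ξ ≠ a := by
    intro h
    apply hξ
    rw [← hrinv ξ, h]
  have hd2 : 0 < dist (ginv ξ) a := dist_pos.mpr hginv
  have key : dist ξ (g a) ^ 2 = Dg (ginv ξ) * Dg a * dist (ginv ξ) a ^ 2 := by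
    have := hmd (ginv ξ) a
    rwa [hrinv ξ] at this
  have e1 : (((-(2 * D / p) : ℝ) : ℂ) + 2 * z) = -(2 * w) := by
    rw [hw]; push_cast; ring
  have e3 : (((2 * D / p : ℝ) : ℂ) - 2 * z) = 2 * w := by
    rw [hw]; push_cast; ring
  rw [e1, e3]
  have sq_cpow : ∀ x : ℝ, 0 < x → ((x ^ 2 : ℝ) : ℂ) ^ w = (x : ℂ) ^ (2 * w) := by
    intro x hx
    have hx0 : (x : ℂ) ≠ 0 := by exact_mod_cast hx.ne'
    rw [two_mul, Complex.cpow_add _ _ hx0]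
    push_cast
    rw [sq, Complex.mul_cpow_ofReal_nonneg hx.le hx.le]
  have hd1c : ((dist ξ (g a) : ℝ) : ℂ) ^ (2 * w) =
      ((Dg (ginv ξ) : ℝ) : ℂ) ^ w * ((Dg a : ℝ) : ℂ) ^ w *
        ((dist (ginv ξ) a : ℝ) : ℂ) ^ (2 * w) := by
    rw [← sq_cpow _ hd1, key, Complex.ofReal_mul,
      Complex.mul_cpow_ofReal_nonneg (by positivity) (by positivity),
      sq_cpow _ hd2, Complex.ofReal_mul,
      Complex.mul_cpow_ofReal_nonneg hB.le hA.le]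
  have hinv : (((Dg (ginv ξ))⁻¹ : ℝ) : ℂ) ^ w = (((Dg (ginv ξ) : ℝ) : ℂ) ^ w)⁻¹ := by
    push_cast
    rw [Complex.inv_cpow]
    rw [Complex.arg_ofReal_of_nonneg hB.le]
    simp [Real.pi_ne_zero, Real.pi_ne_zero.symm]
  have hBne : ((Dg (ginv ξ) : ℝ) : ℂ) ^ w ≠ 0 := by
    simp [Complex.cpow_eq_zero_iff, hB.ne']
  have hAne : ((Dg a : ℝ) : ℂ) ^ w ≠ 0 := by
    simp [Complex.cpow_eq_zero_iff, hA.ne']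
  have hd2ne : ((dist (ginv ξ) a : ℝ) : ℂ) ^ (2 * w) ≠ 0 := by
    simp [Complex.cpow_eq_zero_iff, hd2.ne']
  rw [Complex.cpow_neg, hd1c, hinv]
  field_simp
end

section
/- Let (Z,d) be a metric space, ν a Borel measure on Z, D > 0, and let g : Z → Z be a bijection with metric derivative Dg : Z → (0,∞) (i.e. d(gξ,gη)² = Dg(ξ)·Dg(η)·d(ξ,η)² for all ξ,η ∈ Z) satisfying the change-of-variables formula ν(g(A)) = ∫_A Dg(ξ)^D dν(ξ) for every Borel set A ⊆ Z. Let s ≥ 0, a ∈ Z, ξ ∈ Z ∖ {a}, and let φ : Z ∖ {a} → ℂ be measurable such that the function η ↦ (φ(η) − φ(ξ)) / d_a(η,ξ)^{D+2s} is ν_a-integrable on Z_a. Then the function η' ↦ (φ(g⁻¹η') − φ(ξ)) / d_{ga}(η',gξ)^{D+2s} is ν_{ga}-integrable on Z_{ga}, and ∫_{Z_{ga}} (φ(g⁻¹η') − φ(ξ)) / d_{ga}(η',gξ)^{D+2s} dν_{ga}(η') = Dg(a)^{2s} · ∫_{Z_a} (φ(η) − φ(ξ)) / d_a(η,ξ)^{D+2s}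 dν_a(η). (This is the (Möb(Z),s)-conformality of the bundle of fractional Laplacians: Δ_{ga}^s(g^*φ) = Dg(a)^{2s}·g^*(Δ_a^s φ).) -/
open MeasureTheory Metric Filter
open scoped ENNReal NNReal Topology

/-- **`(Möb(Z),s)`-conformality of the bundle of fractional Laplacians:
`Δ_{ga}^s(g^*φ) = Dg(a)^{2s}·g^*(Δ_a^s φ)`.**
Let `(Z,d)` be a metric space, `ν` a Borel measure, `D > 0`, and `g` a bijection with
inverse `ginv`, metric derivative `Dg`, and change-of-variables formula. Let `s ≥ 0`,
`a ∈ Z`, `ξ ≠ a`, and `φ` measurable such that `η ↦ (φ(η)−φ(ξ))/d_a(η,ξ)^{D+2s}` is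
`ν_a`-integrable on `Z∖{a}`. Then `η' ↦ (φ(g⁻¹η')−φ(ξ))/d_{ga}(η',gξ)^{D+2s}` is
`ν_{ga}`-integrable on `Z∖{ga}` and its integral equals `Dg(a)^{2s}` times the former,
where `d_a(ξ,η) = d(ξ,η)/(d(ξ,a)d(η,a))` and `dν_a = d(a,·)^{−2D} dν`. -/
theorem fractional_laplacian_conformal
    {Z : Type*} [MetricSpace Z] [MeasurableSpace Z] [BorelSpace Z]
    (ν : Measure Z) (D : ℝ) (hD : 0 < D)
    (g ginv : Z → Z) (hg : Function.Bijective g)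
    (hlinv : Function.LeftInverse ginv g) (hrinv : Function.RightInverse ginv g)
    (hgm : Measurable g) (hginvm : Measurable ginv)
    (Dg : Z → ℝ) (hDg : ∀ ξ, 0 < Dg ξ) (hDgm : Measurable Dg)
    (hmd : ∀ ξ η : Z, dist (g ξ) (g η) ^ 2 = Dg ξ * Dg η * dist ξ η ^ 2)
    (hcv : ∀ A : Set Z, MeasurableSet A →
      ν (g '' A) = ∫⁻ ζ in A, ENNReal.ofReal (Dg ζ ^ D) ∂ν)
    (s : ℝ) (hs : 0 ≤ s) (a ξ : Z) (hξa : ξ ≠ a)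
    (φ : Z → ℂ) (hφ : Measurable φ)
    (hint : IntegrableOn
      (fun η => (φ η - φ ξ) /
        (((dist η ξ / (dist η a * dist ξ a)) ^ (D + 2 * s) : ℝ) : ℂ))
      ({a}ᶜ : Set Z)
      (ν.withDensity fun ζ => (ENNReal.ofReal (dist a ζ)) ^ (-(2 * D)))) :
    IntegrableOn
      (fun η' => (φ (ginv η') - φ ξ) /
        (((dist η' (g ξ) / (dist η' (g a) * dist (g ξ) (g a))) ^ (D + 2 * s) : ℝ) : ℂ))
      ({g a}ᶜ : Set Z)
      (ν.withDensity fun ζ => (ENNReal.ofReal (dist (g a) ζ)) ^ (-(2 * D))) ∧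
    (∫ η' in ({g a}ᶜ : Set Z),
        (φ (ginv η') - φ ξ) /
          (((dist η' (g ξ) / (dist η' (g a) * dist (g ξ) (g a))) ^ (D + 2 * s) : ℝ) : ℂ)
        ∂(ν.withDensity fun ζ => (ENNReal.ofReal (dist (g a) ζ)) ^ (-(2 * D)))) =
      ((Dg a ^ (2 * s) : ℝ) : ℂ) *
        ∫ η in ({a}ᶜ : Set Z),
          (φ η - φ ξ) /
            (((dist η ξ / (dist η a * dist ξ a)) ^ (D + 2 * s) : ℝ) : ℂ)
          ∂(ν.withDensity fun ζ => (ENNReal.ofReal (dist a ζ)) ^ (-(2 * D))) := by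
  classical
  set p : ℝ := D + 2 * s with hp
  set wA : Z → ℝ≥0∞ := fun ζ => (ENNReal.ofReal (dist a ζ)) ^ (-(2 * D)) with hwA
  set wGA : Z → ℝ≥0∞ := fun ζ => (ENNReal.ofReal (dist (g a) ζ)) ^ (-(2 * D)) with hwGA
  set DgD : Z → ℝ≥0∞ := fun ζ => ENNReal.ofReal (Dg ζ ^ D) with hDgD
  -- measurability of the densities
  have hwAm : Measurable wA :=
    ENNReal.continuous_rpow_const.measurable.comp
      ((continuous_const.dist continuous_id).measurable.ennreal_ofReal)
  have hwGAm : Measurable wGA :=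
    ENNReal.continuous_rpow_const.measurable.comp
      ((continuous_const.dist continuous_id).measurable.ennreal_ofReal)
  have hDgDm : Measurable DgD :=
    ((Real.continuous_rpow_const hD.le).measurable.comp hDgm).ennreal_ofReal
  -- the measurable equivalence given by g
  let e : Z ≃ᵐ Z := ⟨⟨g, ginv, hlinv, hrinv⟩, hgm, hginvm⟩
  have hge : (e : Z → Z) = g := rfl
  -- distance transformation formula
  have hdist : ∀ u v : Z, dist (g u) (g v) = Real.sqrt (Dg u) * Real.sqrt (Dg v) * dist u v := by
    intro u v
    have h1 : dist (g u) (g v) = Real.sqrt (dist (g u) (g v) ^ 2) :=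
      (Real.sqrt_sq dist_nonneg).symm
    rw [h1, hmd, Real.sqrt_mul (mul_pos (hDg u) (hDg v)).le, Real.sqrt_mul (hDg u).le,
      Real.sqrt_sq dist_nonneg]
  -- change of variables: map ginv ν = ν.withDensity DgD
  have hmapginv : Measure.map ginv ν = ν.withDensity DgD := by
    ext S hS
    rw [Measure.map_apply hginvm hS, withDensity_apply _ hS]
    have himg : ginv ⁻¹' S = g '' S := by
      ext z
      simp only [Set.mem_preimage, Set.mem_image]
      constructor
      · intro h; exact ⟨ginv z, h, hrinv z⟩
      · rintro ⟨w, hw, rfl⟩; rwa [hlinv]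
    rw [himg, hcv S hS]
  have hν : Measure.map g (ν.withDensity DgD) = ν := by
    rw [← hmapginv, Measure.map_map hgm hginvm, hrinv.id, Measure.map_id]
  -- pushing densities through g
  have hmapwd : ∀ (μ : Measure Z) (f : Z → ℝ≥0∞), Measurable f →
      Measure.map g (μ.withDensity (fun ζ => f (g ζ))) = (Measure.map g μ).withDensity f := by
    intro μ f hf
    ext S hS
    rw [Measure.map_apply hgm hS, withDensity_apply _ hS, withDensity_apply _ (hgm hS),
      setLIntegral_map hS hf hgm]
  -- pointwise density identity
  have hden : ∀ ζ : Z, DgD ζ * wGA (g ζ) = (ENNReal.ofReal (Dg a)) ^ (-D) * wA ζ := by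
    intro ζ
    have hsq : ∀ x : ℝ, 0 < x →
        (ENNReal.ofReal (Real.sqrt x)) ^ (-(2 * D)) = (ENNReal.ofReal x) ^ (-D) := by
      intro x hx
      rw [Real.sqrt_eq_rpow, ← ENNReal.ofReal_rpow_of_pos hx, ← ENNReal.rpow_mul]
      congr 1
      ring
    have h1 : (ENNReal.ofReal (Dg ζ)) ^ D * (ENNReal.ofReal (Dg ζ)) ^ (-D) = 1 := by
      rw [← ENNReal.rpow_add D (-D) (ne_of_gt (ENNReal.ofReal_pos.mpr (hDg ζ)))
        ENNReal.ofReal_ne_top]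
      simp
    have step1 : wGA (g ζ) = (ENNReal.ofReal (Dg a)) ^ (-D) * (ENNReal.ofReal (Dg ζ)) ^ (-D) *
        (ENNReal.ofReal (dist a ζ)) ^ (-(2 * D)) := by
      simp only [hwGA]
      rw [hdist a ζ, ENNReal.ofReal_mul (mul_nonneg (Real.sqrt_nonneg _) (Real.sqrt_nonneg _)),
        ENNReal.ofReal_mul (Real.sqrt_nonneg _),
        ENNReal.mul_rpow_of_ne_top
          (ENNReal.mul_ne_top ENNReal.ofReal_ne_top ENNReal.ofReal_ne_top)
          ENNReal.ofReal_ne_top,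
        ENNReal.mul_rpow_of_ne_top ENNReal.ofReal_ne_top ENNReal.ofReal_ne_top,
        hsq _ (hDg a), hsq _ (hDg ζ)]
    have step2 : DgD ζ = (ENNReal.ofReal (Dg ζ)) ^ D := by
      simp only [hDgD]
      rw [ENNReal.ofReal_rpow_of_pos (hDg ζ)]
    simp only [hwA]
    rw [step1, step2,
      show (ENNReal.ofReal (Dg ζ)) ^ D *
          ((ENNReal.ofReal (Dg a)) ^ (-D) * (ENNReal.ofReal (Dg ζ)) ^ (-D) *
            (ENNReal.ofReal (dist a ζ)) ^ (-(2 * D)))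
        = ((ENNReal.ofReal (Dg a)) ^ (-D) * (ENNReal.ofReal (dist a ζ)) ^ (-(2 * D))) *
            ((ENNReal.ofReal (Dg ζ)) ^ D * (ENNReal.ofReal (Dg ζ)) ^ (-D)) from by ring,
      h1, mul_one]
  -- the key measure identity
  have hkey : ν.withDensity wGA
      = (ENNReal.ofReal (Dg a)) ^ (-D) • Measure.map g (ν.withDensity wA) := by
    conv_lhs => rw [← hν]
    rw [← hmapwd _ wGA hwGAm,
      ← withDensity_mul ν (f := DgD) (g := fun ζ => wGA (g ζ)) hDgDm (hwGAm.comp hgm),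
      ← Measure.map_smul, ← withDensity_smul _ hwAm]
    refine congrArg (Measure.map g) (congrArg ν.withDensity (funext fun ζ => ?_))
    simpa using hden ζ
  -- restricted version
  have hpre : g ⁻¹' ({g a}ᶜ : Set Z) = ({a}ᶜ : Set Z) := by
    ext z
    simp [hg.injective.eq_iff]
  have hres : (ν.withDensity wGA).restrict ({g a}ᶜ : Set Z)
      = (ENNReal.ofReal (Dg a)) ^ (-D) •
        Measure.map g ((ν.withDensity wA).restrict ({a}ᶜ : Set Z)) := by
    rw [hkey, Measure.restrict_smul,
      Measure.restrict_map hgm (measurableSet_singleton (g a)).compl, hpre]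
  -- scalar facts
  have hc0 : (ENNReal.ofReal (Dg a)) ^ (-D) ≠ 0 :=
    (ENNReal.rpow_pos (ENNReal.ofReal_pos.mpr (hDg a)) ENNReal.ofReal_ne_top).ne'
  have hcT : (ENNReal.ofReal (Dg a)) ^ (-D) ≠ ⊤ := by
    rw [ENNReal.rpow_neg]
    exact ENNReal.inv_ne_top.mpr
      (ENNReal.rpow_pos (ENNReal.ofReal_pos.mpr (hDg a)) ENNReal.ofReal_ne_top).ne'
  -- ratio transformation
  have hratio : ∀ η : Z, η ≠ a →
      dist (g η) (g ξ) / (dist (g η) (g a) * dist (g ξ) (g a))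
        = (dist η ξ / (dist η a * dist ξ a)) / Dg a := by
    intro η hη
    have hna : dist η a ≠ 0 := dist_ne_zero.mpr hη
    have hxa : dist ξ a ≠ 0 := dist_ne_zero.mpr hξa
    have e1 : Real.sqrt (Dg η) ≠ 0 := (Real.sqrt_pos.mpr (hDg η)).ne'
    have e2 : Real.sqrt (Dg ξ) ≠ 0 := (Real.sqrt_pos.mpr (hDg ξ)).ne'
    have e3 : Real.sqrt (Dg a) ≠ 0 := (Real.sqrt_pos.mpr (hDg a)).ne'
    have e4 : Real.sqrt (Dg a) * Real.sqrt (Dg a) = Dg a := Real.mul_self_sqrt (hDg a).le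
    rw [hdist η ξ, hdist η a, hdist ξ a, ← e4]
    field_simp
    rw [Real.sqrt_sq (Real.sqrt_nonneg _)]
  -- integrand transformation
  have hfun : ∀ η : Z, η ≠ a →
      (φ (ginv (g η)) - φ ξ) /
        (((dist (g η) (g ξ) / (dist (g η) (g a) * dist (g ξ) (g a))) ^ p : ℝ) : ℂ)
      = ((Dg a ^ p : ℝ) : ℂ) *
        ((φ η - φ ξ) / (((dist η ξ / (dist η a * dist ξ a)) ^ p : ℝ) : ℂ)) := by
    intro η hη
    rw [hlinv η, hratio η hη,
      Real.div_rpow (by positivity) (hDg a).le, Complex.ofReal_div, div_div_eq_mul_div]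
    ring
  have haec : (fun η : Z => ((Dg a ^ p : ℝ) : ℂ) *
        ((φ η - φ ξ) / (((dist η ξ / (dist η a * dist ξ a)) ^ p : ℝ) : ℂ)))
      =ᵐ[(ν.withDensity wA).restrict ({a}ᶜ : Set Z)]
      (fun η : Z => (φ (ginv (g η)) - φ ξ) /
        (((dist (g η) (g ξ) / (dist (g η) (g a) * dist (g ξ) (g a))) ^ p : ℝ) : ℂ)) := by
    refine Filter.eventuallyEq_of_mem
      (self_mem_ae_restrict (measurableSet_singleton a).compl) ?_
    intro η hη
    exact (hfun η hη).symm
  have hint2 : Integrable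
      (fun η : Z => (φ (ginv (g η)) - φ ξ) /
        (((dist (g η) (g ξ) / (dist (g η) (g a) * dist (g ξ) (g a))) ^ p : ℝ) : ℂ))
      ((ν.withDensity wA).restrict ({a}ᶜ : Set Z)) :=
    (hint.const_mul _).congr haec
  constructor
  · rw [IntegrableOn, hres, integrable_smul_measure hc0 hcT, ← hge,
      integrable_map_equiv e]
    exact hint2
  · rw [show (∫ η' in ({g a}ᶜ : Set Z),
        (φ (ginv η') - φ ξ) /
          (((dist η' (g ξ) / (dist η' (g a) * dist (g ξ) (g a))) ^ p : ℝ) : ℂ)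
        ∂(ν.withDensity wGA)) = ∫ η', (φ (ginv η') - φ ξ) /
          (((dist η' (g ξ) / (dist η' (g a) * dist (g ξ) (g a))) ^ p : ℝ) : ℂ)
        ∂((ν.withDensity wGA).restrict ({g a}ᶜ : Set Z)) from rfl,
      hres, integral_smul_measure, ← hge, integral_map_equiv e]
    rw [hge]
    rw [integral_congr_ae haec.symm, integral_const_mul]
    have htr : ((ENNReal.ofReal (Dg a)) ^ (-D)).toReal = Dg a ^ (-D) := by
      rw [← ENNReal.toReal_rpow, ENNReal.toReal_ofReal (hDg a).le]
    rw [htr]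
    rw [Complex.real_smul, ← mul_assoc, ← Complex.ofReal_mul, ← Real.rpow_add (hDg a)]
    norm_num [hp]
end

section
/- Let (Z,d,ν) be an Ahlfors D-regular metric measure space, let g : Z → Z be a bijection with metric derivative Dg : Z → (0,∞) (i.e. d(gξ,gη)² = Dg(ξ)·Dg(η)·d(ξ,η)² for all ξ,η ∈ Z) satisfying the change-of-variables formula ν(g(A)) = ∫_A Dg(ξ)^D dν(ξ) for every Borel set A ⊆ Z, and let Dh(ξ) = Dg(g⁻¹ξ)⁻¹. Let s ∈ (0,1) and p ∈ [1,∞) with s·p < D, and set p* = p·D/(D − s·p). Suppose ψ : Z → ℂ is a measurable function which is invariant under the boundary representation, i.e. Dh(ξ)^{D/p−s}·ψ(g⁻¹ξ) = ψ(ξ) for ν-almost every ξ ∈ Z. Then the measure |ψ|^{p*}·ν is g-invariant: for every Borel set A ⊆ Z, ∫_{g⁻¹(A)} |ψ|^{p*} dν = ∫_A |ψ|^{p*} dν. -/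
open MeasureTheory Metric Filter
open scoped ENNReal NNReal Topology

/-- **An invariant vector of the boundary representation yields an invariant measure.**
Let `(Z,d,ν)` be an Ahlfors `D`-regular metric measure space, `g` a bijection with
inverse `ginv`, metric derivative `Dg`, and change-of-variables formula; let
`Dh(ξ) = Dg(g⁻¹ξ)⁻¹`. Let `s ∈ (0,1)`, `p ∈ [1,∞)` with `s·p < D`, and
`p* = p·D/(D−s·p)`. If `ψ : Z → ℂ` is measurable and satisfies
`Dh(ξ)^{D/p−s}·ψ(g⁻¹ξ) = ψ(ξ)` for `ν`-a.e. `ξ`, then the measure `|ψ|^{p*}·ν` is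
`g`-invariant: `∫_{g⁻¹(A)} |ψ|^{p*} dν = ∫_A |ψ|^{p*} dν` for every Borel `A ⊆ Z`. -/
theorem invariant_vector_gives_invariant_measure
    {Z : Type*} [MetricSpace Z] [CompleteSpace Z] [MeasurableSpace Z] [BorelSpace Z]
    (hperf : ∀ z : Z, (nhdsWithin z {z}ᶜ).NeBot)
    (ν : Measure Z) (D c : ℝ) (hD : 0 < D) (hc : 1 ≤ c)
    (hA : ∀ (z : Z) (r : ℝ), 0 < r → ENNReal.ofReal r < EMetric.diam (Set.univ : Set Z) →
      ENNReal.ofReal (c⁻¹ * r ^ D) ≤ ν (Metric.ball z r) ∧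
        ν (Metric.ball z r) ≤ ENNReal.ofReal (c * r ^ D))
    (g ginv : Z → Z) (hg : Function.Bijective g)
    (hlinv : Function.LeftInverse ginv g) (hrinv : Function.RightInverse ginv g)
    (hgm : Measurable g) (hginvm : Measurable ginv)
    (Dg : Z → ℝ) (hDg : ∀ ξ, 0 < Dg ξ) (hDgm : Measurable Dg)
    (hmd : ∀ ξ η : Z, dist (g ξ) (g η) ^ 2 = Dg ξ * Dg η * dist ξ η ^ 2)
    (hcv : ∀ A : Set Z, MeasurableSet A →
      ν (g '' A) = ∫⁻ ξ in A, ENNReal.ofReal (Dg ξ ^ D) ∂ν)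
    (s p : ℝ) (hs : 0 < s) (hs1 : s < 1) (hp : 1 ≤ p) (hsp : s * p < D)
    (ψ : Z → ℂ) (hψ : Measurable ψ)
    (hinvvec : ∀ᵐ ξ ∂ν,
      (((Dg (ginv ξ))⁻¹ ^ (D / p - s) : ℝ) : ℂ) * ψ (ginv ξ) = ψ ξ) :
    ∀ A : Set Z, MeasurableSet A →
      (∫⁻ ξ in g ⁻¹' A, (‖ψ ξ‖₊ : ℝ≥0∞) ^ (p * D / (D - s * p)) ∂ν) =
        ∫⁻ ξ in A, (‖ψ ξ‖₊ : ℝ≥0∞) ^ (p * D / (D - s * p)) ∂ν := by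
  classical
  -- notation
  set q : ℝ := p * D / (D - s * p) with hqdef
  have hp0 : (0:ℝ) < p := lt_of_lt_of_le one_pos hp
  have hDsp : (0:ℝ) < D - s * p := by linarith
  have hq0 : (0:ℝ) < q := div_pos (mul_pos hp0 hD) hDsp
  have hkey : (D / p - s) * q = D := by
    rw [hqdef]; field_simp; exact div_self (by rw [mul_comm p s]; exact hDsp.ne')
  set f : Z → ℝ≥0∞ := fun ξ => ENNReal.ofReal (Dg ξ ^ D) with hfdef
  have hfm : Measurable f := (hDgm.pow_const D).ennreal_ofReal
  have hfpos : ∀ ξ, 0 < f ξ := fun ξ =>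
    ENNReal.ofReal_pos.2 (Real.rpow_pos_of_pos (hDg ξ) D)
  -- the pushforward identity: map g (ν.withDensity f) = ν
  have hmap : Measure.map g (ν.withDensity f) = ν := by
    ext B hB
    rw [Measure.map_apply hgm hB, withDensity_apply _ (hgm hB)]
    have := hcv (g ⁻¹' B) (hgm hB)
    rw [Set.image_preimage_eq B hg.surjective] at this
    exact this.symm
  -- transport the a.e. invariance
  have hPm : MeasurableSet {ξ : Z |
      (((Dg (ginv ξ))⁻¹ ^ (D / p - s) : ℝ) : ℂ) * ψ (ginv ξ) = ψ ξ} := by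
    apply measurableSet_eq_fun
    · exact (Complex.measurable_ofReal.comp
        (((hDgm.comp hginvm).inv).pow_const (D / p - s))).mul (hψ.comp hginvm)
    · exact hψ
  have hnull : ν {ξ : Z |
      ¬ ((((Dg (ginv ξ))⁻¹ ^ (D / p - s) : ℝ) : ℂ) * ψ (ginv ξ) = ψ ξ)} = 0 :=
    ae_iff.mp hinvvec
  have hpre : ν (g ⁻¹' {ξ : Z |
      ¬ ((((Dg (ginv ξ))⁻¹ ^ (D / p - s) : ℝ) : ℂ) * ψ (ginv ξ) = ψ ξ)}) = 0 := by
    set N := {ξ : Z |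
      ¬ ((((Dg (ginv ξ))⁻¹ ^ (D / p - s) : ℝ) : ℂ) * ψ (ginv ξ) = ψ ξ)} with hN
    have hNm : MeasurableSet N := hPm.compl
    have h0 : (∫⁻ ξ in g ⁻¹' N, f ξ ∂ν) = 0 := by
      have : (Measure.map g (ν.withDensity f)) N = 0 := by rw [hmap]; exact hnull
      rwa [Measure.map_apply hgm hNm, withDensity_apply _ (hgm hNm)] at this
    have := (setLIntegral_eq_zero_iff (hgm hNm) hfm).mp h0
    rw [ae_iff] at this
    have hsub : g ⁻¹' N ⊆ {x | ¬ (x ∈ g ⁻¹' N → f x = 0)} := by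
      intro x hx
      simp only [Set.mem_setOf_eq, Classical.not_imp]
      exact ⟨hx, (hfpos x).ne'⟩
    exact measure_mono_null hsub this
  -- pointwise identity where invariance holds at g ξ
  have hptwise : ∀ ξ : Z,
      ((((Dg (ginv (g ξ)))⁻¹ ^ (D / p - s) : ℝ) : ℂ) * ψ (ginv (g ξ)) = ψ (g ξ)) →
      (‖ψ (g ξ)‖₊ : ℝ≥0∞) ^ q * f ξ = (‖ψ ξ‖₊ : ℝ≥0∞) ^ q := by
    intro ξ h
    rw [hlinv ξ] at h
    have ht : (0:ℝ) < Dg ξ := hDg ξ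
    have hnorm : ‖ψ (g ξ)‖ = (Dg ξ)⁻¹ ^ (D / p - s) * ‖ψ ξ‖ := by
      rw [← h, norm_mul, Complex.norm_real,
        Real.norm_of_nonneg (Real.rpow_nonneg (inv_nonneg.2 ht.le) _)]
    have hreal : ‖ψ (g ξ)‖ ^ q * Dg ξ ^ D = ‖ψ ξ‖ ^ q := by
      rw [hnorm, Real.mul_rpow (Real.rpow_nonneg (inv_nonneg.2 ht.le) _) (norm_nonneg _),
        ← Real.rpow_mul (inv_nonneg.2 ht.le), hkey, Real.inv_rpow ht.le]
      have hne : Dg ξ ^ D ≠ 0 := (Real.rpow_pos_of_pos ht D).ne'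
      field_simp
    rw [hfdef]
    simp only []
    rw [← (by exact ofReal_norm _ : ENNReal.ofReal ‖ψ (g ξ)‖ = (‖ψ (g ξ)‖₊ : ℝ≥0∞)),
      ← (by exact ofReal_norm _ : ENNReal.ofReal ‖ψ ξ‖ = (‖ψ ξ‖₊ : ℝ≥0∞)),
      ENNReal.ofReal_rpow_of_nonneg (norm_nonneg _) hq0.le,
      ENNReal.ofReal_rpow_of_nonneg (norm_nonneg _) hq0.le,
      ← ENNReal.ofReal_mul (Real.rpow_nonneg (norm_nonneg _) _), hreal]
  have hae : ∀ᵐ ξ ∂ν, (‖ψ (g ξ)‖₊ : ℝ≥0∞) ^ q * f ξ = (‖ψ ξ‖₊ : ℝ≥0∞) ^ q := by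
    have : ∀ᵐ ξ ∂ν, ((((Dg (ginv (g ξ)))⁻¹ ^ (D / p - s) : ℝ) : ℂ) * ψ (ginv (g ξ))
        = ψ (g ξ)) := by
      rw [ae_iff]
      exact hpre
    filter_upwards [this] with ξ hξ using hptwise ξ hξ
  -- main computation
  intro A hAm
  have hFm : Measurable fun ξ : Z => (‖ψ ξ‖₊ : ℝ≥0∞) ^ q :=
    (hψ.nnnorm.coe_nnreal_ennreal).pow_const q
  have h1 : (∫⁻ ξ in A, (‖ψ ξ‖₊ : ℝ≥0∞) ^ q ∂ν)
      = ∫⁻ ξ in g ⁻¹' A, (‖ψ (g ξ)‖₊ : ℝ≥0∞) ^ q ∂(ν.withDensity f) := by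
    conv_lhs => rw [← hmap]
    exact setLIntegral_map hAm hFm hgm
  have hFgm : Measurable fun ξ : Z => (‖ψ (g ξ)‖₊ : ℝ≥0∞) ^ q := hFm.comp hgm
  rw [h1, setLIntegral_withDensity_eq_setLIntegral_mul ν hfm hFgm (hgm hAm)]
  refine lintegral_congr_ae ?_
  filter_upwards [ae_restrict_of_ae hae] with ξ hξ
  rw [← hξ, mul_comm]
  rfl
end
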